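/- arXiv:2511.04364 — 5 statements merged into one kernel-verified Lean document; each statement's English description precedes it below -/
import Mathlib

section
/- CR(6,3) = 26. That is: every edge-coloring of the complete graph K_26 (with arbitrarily many colors) contains an orderable copy of K_6 or a rainbow copy of K_3, and there exists an edge-coloring of K_25 containing neither an orderable K_6 nor a rainbow K_3. -/
set_option linter.unusedSectionVars false
set_option linter.unusedVariables false
set_option maxHeartbeats 1600000

/-- A coloring `c` of the edges of the graph on `Fin m` with adjacency relation `Adj` is
*orderable* if there is a linear ordering of the vertices (given by the ranking
permutation `π`) such that the color of every edge is determined by its `π`-smaller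
endpoint: if `i` precedes both `j` and `k`, then the edges `ij` and `ik` get the same color. -/
def OrderableColoring {m : ℕ} (Adj : Fin m → Fin m → Prop) (c : Fin m → Fin m → ℕ) : Prop :=
  ∃ π : Equiv.Perm (Fin m),
    ∀ i j k : Fin m, Adj i j → Adj i k → π i < π j → π i < π k → c i j = c i k

/-- The edge-coloring `χ` of the complete graph on `Fin n` contains an orderable copy
of the complete graph `K p`. -/
def HasOrderableClique (p n : ℕ) (χ : Sym2 (Fin n) → ℕ) : Prop :=
  ∃ f : Fin p → Fin n, Function.Injective f ∧
    OrderableColoring (fun i j => i ≠ j) (fun i j => χ s(f i, f j))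

/-- The edge-coloring `χ` of the complete graph on `Fin n` contains a rainbow copy
of the complete graph `K t`: all edges of the copy get pairwise distinct colors. -/
def HasRainbowClique (t n : ℕ) (χ : Sym2 (Fin n) → ℕ) : Prop :=
  ∃ f : Fin t → Fin n, Function.Injective f ∧
    ∀ i j k l : Fin t, i < j → k < l →
      χ s(f i, f j) = χ s(f k, f l) → i = k ∧ j = l

namespace CR63

variable {V : Type*} [DecidableEq V]

def SymC (c : V → V → ℕ) : Prop := ∀ x y, c x y = c y x

def GallaiOn (c : V → V → ℕ) (S : Finset V) : Prop :=
  ∀ x ∈ S, ∀ y ∈ S, ∀ z ∈ S, x ≠ y → x ≠ z → y ≠ z →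
    (c x y = c x z ∨ c x y = c y z ∨ c x z = c y z)

lemma GallaiOn.mono {c : V → V → ℕ} {S T : Finset V} (h : GallaiOn c S) (hTS : T ⊆ S) :
    GallaiOn c T := fun x hx y hy z hz => h x (hTS hx) y (hTS hy) z (hTS hz)

def Chain (c : V → V → ℕ) (S : Finset V) (p : ℕ) : Prop :=
  ∃ f : Fin p → V, (∀ i, f i ∈ S) ∧ Function.Injective f ∧
    ∀ i j k : Fin p, i < j → i < k → c (f i) (f j) = c (f i) (f k)

lemma Chain.mono {c : V → V → ℕ} {S T : Finset V} {p : ℕ} (h : Chain c T p) (hTS : T ⊆ S) :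
    Chain c S p := by
  obtain ⟨f, hf, hinj, hmono⟩ := h
  exact ⟨f, fun i => hTS (hf i), hinj, hmono⟩

lemma chain_one {c : V → V → ℕ} {S : Finset V} (h : S.Nonempty) : Chain c S 1 := by
  obtain ⟨x, hx⟩ := h
  refine ⟨fun _ => x, fun _ => hx, fun i j _ => Subsingleton.elim i j, ?_⟩
  intro i j k hij
  exact absurd hij (by omega)

lemma chain_cons {c : V → V → ℕ} {S T : Finset V} {p : ℕ} {v : V}
    (hv : v ∈ S) (hTS : T ⊆ S) (hvT : v ∉ T)
    (hmono : ∀ x ∈ T, ∀ y ∈ T, c v x = c v y)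
    (h : Chain c T p) : Chain c S (p + 1) := by
  obtain ⟨f, hf, hinj, hm⟩ := h
  refine ⟨Fin.cases v f, ?_, ?_, ?_⟩
  · intro i
    rcases Fin.eq_zero_or_eq_succ i with rfl | ⟨i', rfl⟩
    · simpa using hv
    · simpa using hTS (hf i')
  · intro i j hij
    rcases Fin.eq_zero_or_eq_succ i with rfl | ⟨i', rfl⟩ <;>
      rcases Fin.eq_zero_or_eq_succ j with rfl | ⟨j', rfl⟩
    · rfl
    · simp only [Fin.cases_zero, Fin.cases_succ] at hij
      exact absurd (hij ▸ hf j') hvT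
    · simp only [Fin.cases_zero, Fin.cases_succ] at hij
      exact absurd (hij ▸ hf i') hvT
    · simp only [Fin.cases_succ] at hij
      exact congrArg Fin.succ (hinj hij)
  · intro i j k hij hik
    rcases Fin.eq_zero_or_eq_succ i with rfl | ⟨i', rfl⟩
    · rcases Fin.eq_zero_or_eq_succ j with rfl | ⟨j', rfl⟩
      · exact absurd hij (lt_irrefl _)
      · rcases Fin.eq_zero_or_eq_succ k with rfl | ⟨k', rfl⟩
        · exact absurd hik (lt_irrefl _)
        · simp only [Fin.cases_zero, Fin.cases_succ]
          exact hmono (f j') (hf j') (f k') (hf k')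
    · rcases Fin.eq_zero_or_eq_succ j with rfl | ⟨j', rfl⟩
      · exact absurd hij (by simp [Fin.lt_def])
      · rcases Fin.eq_zero_or_eq_succ k with rfl | ⟨k', rfl⟩
        · exact absurd hik (by simp [Fin.lt_def])
        · simp only [Fin.cases_succ]
          exact hm i' j' k' (Fin.succ_lt_succ_iff.mp hij) (Fin.succ_lt_succ_iff.mp hik)

lemma chain_two {c : V → V → ℕ} {S : Finset V} (h : 2 ≤ S.card) : Chain c S 2 := by
  obtain ⟨x, hx⟩ := Finset.card_pos.mp (show 0 < S.card by omega)
  obtain ⟨y, hy⟩ := Finset.card_pos.mp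
    (show 0 < (S.erase x).card by rw [Finset.card_erase_of_mem hx]; omega)
  refine chain_cons hx ?_ ?_ ?_ (chain_one ⟨y, Finset.mem_singleton_self y⟩)
  · intro z hz; rw [Finset.mem_singleton] at hz; exact hz ▸ (Finset.mem_of_mem_erase hy)
  · simp only [Finset.mem_singleton]; intro h'; exact (Finset.ne_of_mem_erase hy) h'.symm
  · intro a ha b hb
    rw [Finset.mem_singleton] at ha hb; rw [ha, hb]

lemma chain_three {c : V → V → ℕ} {S : Finset V} (hsym : SymC c) (hG : GallaiOn c S) (h : 3 ≤ S.card) :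
    Chain c S 3 := by
  obtain ⟨x, hx⟩ := Finset.card_pos.mp (show 0 < S.card by omega)
  obtain ⟨y, hy⟩ := Finset.card_pos.mp
    (show 0 < (S.erase x).card by rw [Finset.card_erase_of_mem hx]; omega)
  obtain ⟨z, hz⟩ := Finset.card_pos.mp
    (show 0 < ((S.erase x).erase y).card by
      rw [Finset.card_erase_of_mem hy, Finset.card_erase_of_mem hx]; omega)
  have hyS : y ∈ S := Finset.mem_of_mem_erase hy
  have hzS : z ∈ S := Finset.mem_of_mem_erase (Finset.mem_of_mem_erase hz)
  have hxy : x ≠ y := fun h => (Finset.ne_of_mem_erase hy) h.symm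
  have hyz : y ≠ z := fun h => (Finset.ne_of_mem_erase hz) h.symm
  have hxz : x ≠ z := fun h => (Finset.ne_of_mem_erase (Finset.mem_of_mem_erase hz)) h.symm
  have build : ∀ a ∈ S, ∀ b ∈ S, ∀ b' ∈ S, a ≠ b → a ≠ b' → b ≠ b' →
      c a b = c a b' → Chain c S 3 := by
    intro a ha b hb b' hb' hab hab' hbb' hcc
    have hch2 : Chain c ({b, b'} : Finset V) 2 := by
      apply chain_two
      rw [Finset.card_insert_of_notMem (by simpa using hbb'), Finset.card_singleton]
    refine chain_cons ha ?_ ?_ ?_ hch2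
    · intro w hw; rcases Finset.mem_insert.mp hw with h | h
      · exact h ▸ hb
      · rw [Finset.mem_singleton] at h; exact h ▸ hb'
    · intro hmem; rcases Finset.mem_insert.mp hmem with h | h
      · exact hab h
      · rw [Finset.mem_singleton] at h; exact hab' h
    · intro p hp q hq
      have hp' : p = b ∨ p = b' := by simpa using hp
      have hq' : q = b ∨ q = b' := by simpa using hq
      rcases hp' with rfl | rfl <;> rcases hq' with rfl | rfl
      · rfl
      · exact hcc
      · exact hcc.symm
      · rfl
  rcases hG x hx y hyS z hzS hxy hxz hyz with h' | h' | h'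
  · exact build x hx y hyS z hzS hxy hxz hyz h'
  · exact build y hyS x hx z hzS hxy.symm hyz hxz (by rw [hsym y x]; exact h')
  · exact build z hzS x hx y hyS hxz.symm hyz.symm hxy (by rw [hsym z x, hsym z y]; exact h')

def Rel (c : V → V → ℕ) (S : Finset V) (α β : ℕ) (a b : V) : Prop :=
  a ∈ S ∧ b ∈ S ∧ a ≠ b ∧ c a b ≠ α ∧ c a b ≠ β

def Reach (c : V → V → ℕ) (S : Finset V) (α β : ℕ) : V → V → Prop :=
  Relation.ReflTransGen (Rel c S α β)

lemma rel_symm {c : V → V → ℕ} {S : Finset V} {α β : ℕ} (hsym : SymC c) :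
    Symmetric (Rel c S α β) := by
  rintro a b ⟨ha, hb, hne, h1, h2⟩
  exact ⟨hb, ha, hne.symm, by rw [hsym b a]; exact h1, by rw [hsym b a]; exact h2⟩

lemma reach_symm {c : V → V → ℕ} {S : Finset V} {α β : ℕ} (hsym : SymC c) :
    Symmetric (Reach c S α β) :=
  haveI : Std.Symm (Rel c S α β) := ⟨fun a b h => rel_symm hsym h⟩
  fun a b h => Relation.ReflTransGen.symmetric.symm a b h

lemma reach_closed {c : V → V → ℕ} {S : Finset V} {α β : ℕ} {P : V → Prop} {x y : V}
    (hx : P x) (hstep : ∀ a b, Rel c S α β a b → P a → P b)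
    (h : Reach c S α β x y) : P y := by
  induction h with
  | refl => exact hx
  | tail _ h2 ih => exact hstep _ _ h2 ih

lemma reach_mem {c : V → V → ℕ} {S : Finset V} {α β : ℕ} {x y : V}
    (hx : x ∈ S) (h : Reach c S α β x y) : y ∈ S :=
  reach_closed hx (fun _ b hr _ => hr.2.1) h

lemma colors_of_not_reach {c : V → V → ℕ} {S : Finset V} {α β : ℕ} {x y : V}
    (hx : x ∈ S) (hy : y ∈ S) (hxy : x ≠ y) (h : ¬ Reach c S α β x y) :
    c x y = α ∨ c x y = β := by
  by_contra hc
  push_neg at hc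
  exact h (Relation.ReflTransGen.single ⟨hx, hy, hxy, hc.1, hc.2⟩)

lemma ne_of_not_reach {c : V → V → ℕ} {S : Finset V} {α β : ℕ} {x y : V}
    (h : ¬ Reach c S α β x y) : x ≠ y := by
  rintro rfl; exact h Relation.ReflTransGen.refl

/-- color constancy along connected components towards outside vertices -/
lemma mono_along {c : V → V → ℕ} {S : Finset V} {α β : ℕ} {a a' y : V}
    (hsym : SymC c) (hG : GallaiOn c S)
    (hy : y ∈ S) (hr : Reach c S α β a a') (hny : ¬ Reach c S α β a y) :
    c a y = c a' y := by
  induction hr with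
  | refl => rfl
  | @tail b b' hab hbb' ih =>
    rw [ih]
    -- now b reachable from a, step b ~ b'
    have hnb : ¬ Reach c S α β b y := fun h => hny (hab.trans h)
    have hnb' : ¬ Reach c S α β b' y := fun h => hny ((hab.tail hbb').trans h)
    obtain ⟨hbS, hb'S, hne, hc1, hc2⟩ := hbb'
    have hby : b ≠ y := ne_of_not_reach hnb
    have hb'y : b' ≠ y := ne_of_not_reach hnb'
    have cby := colors_of_not_reach hbS hy hby hnb
    have cb'y := colors_of_not_reach hb'S hy hb'y hnb'
    rcases hG b hbS b' hb'S y hy hne hby hb'y with h | h | h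
    · exfalso; rcases cby with h' | h' <;> rw [h'] at h
      · exact hc1 h
      · exact hc2 h
    · exfalso; rcases cb'y with h' | h' <;> rw [h'] at h
      · exact hc1 h
      · exact hc2 h
    · exact h

/-- Main disconnection lemma: in a Gallai coloring on at least 2 vertices,
some pair of colors (α, β) disconnects the graph of remaining colors. -/
theorem exists_disconn {c : V → V → ℕ} (hsym : SymC c) :
    ∀ (n : ℕ) (S : Finset V), S.card = n → GallaiOn c S → 2 ≤ n →
      ∃ α β x y, x ∈ S ∧ y ∈ S ∧ ¬ Reach c S α β x y := by
  intro n
  induction n using Nat.strong_induction_on with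
  | _ n ih =>
    intro S hcard hG hn
    rcases eq_or_lt_of_le hn with h2 | h3
    · -- base case |S| = 2
      obtain ⟨x, y, hxy, rfl⟩ := Finset.card_eq_two.mp (hcard ▸ h2.symm)
      refine ⟨c x y, c x y, x, y, by simp, by simp, ?_⟩
      intro h
      have := reach_closed (P := fun t => t = x) rfl ?_ h
      · exact hxy (this ▸ rfl)
      · rintro a b ⟨haS, hbS, hab, hc1, _⟩ rfl
        exfalso
        have hb : b = y := by
          rcases Finset.mem_insert.mp hbS with h | h
          · exact absurd h.symm hab
          · simpa using h
        exact hc1 (hb ▸ rfl)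
    · -- step: |S| = n ≥ 3
      obtain ⟨v, hv⟩ := Finset.card_pos.mp (show 0 < S.card by omega)
      set S' := S.erase v with hS'
      have hS'sub : S' ⊆ S := Finset.erase_subset v S
      have hvS' : v ∉ S' := Finset.notMem_erase v S
      have hcard' : S'.card = n - 1 := by rw [hS', Finset.card_erase_of_mem hv, hcard]
      have hG' : GallaiOn c S' := fun x hx y hy z hz => hG x (hS'sub hx) y (hS'sub hy) z (hS'sub hz)
      obtain ⟨α, β, x0, y0, hx0, hy0, hnr⟩ := ih (n-1) (by omega) S' hcard' hG' (by omega)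
      by_cases hcase : ∃ z ∈ S', ∀ w ∈ S', Reach c S' α β z w → (c v w = α ∨ c v w = β)
      · -- case (a): a component with no exotic edge to v
        obtain ⟨z, hzS', hz⟩ := hcase
        refine ⟨α, β, z, v, hS'sub hzS', hv, ?_⟩
        intro h
        have key := reach_closed (P := fun t => t ∈ S' ∧ Reach c S' α β z t)
          ⟨hzS', Relation.ReflTransGen.refl⟩ ?_ h
        · exact hvS' key.1
        · rintro a b ⟨haS, hbS, hab, hc1, hc2⟩ ⟨haS', hra⟩
          by_cases hbv : b = v
          · exfalso
            rcases hz a haS' hra with h' | h'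
            · exact hc1 (by rw [hbv, hsym a v]; exact h')
            · exact hc2 (by rw [hbv, hsym a v]; exact h')
          · have hbS' : b ∈ S' := Finset.mem_erase.mpr ⟨hbv, hbS⟩
            exact ⟨hbS', hra.tail ⟨haS', hbS', hab, hc1, hc2⟩⟩
      · -- case (b): every component has an exotic vertex
        push_neg at hcase
        -- exotic vertices of two components
        obtain ⟨w0, hw0S, hw0r, hw0e⟩ := hcase x0 hx0
        obtain ⟨w1, hw1S, hw1r, hw1e⟩ := hcase y0 hy0
        have hvne : ∀ w ∈ S', v ≠ w := by rintro w hw rfl; exact hvS' hw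
        -- exotic vertices in different components have the same v-color
        have excol : ∀ w ∈ S', ∀ w' ∈ S', (c v w ≠ α ∧ c v w ≠ β) → (c v w' ≠ α ∧ c v w' ≠ β) →
            ¬ Reach c S' α β w w' → c v w = c v w' := by
          intro w hw w' hw' hew hew' hnr'
          have hne : w ≠ w' := ne_of_not_reach hnr'
          have hcc := colors_of_not_reach hw hw' hne hnr'
          rcases hG v hv w (hS'sub hw) w' (hS'sub hw')
              (hvne w hw) (hvne w' hw') hne with h | h | h
          · exact h
          · exfalso; rcases hcc with h' | h' <;> rw [h'] at h
            · exact hew.1 h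
            · exact hew.2 h
          · exfalso; rcases hcc with h' | h' <;> rw [h'] at h
            · exact hew'.1 h
            · exact hew'.2 h
        have hnr01 : ¬ Reach c S' α β w0 w1 := by
          intro h
          exact hnr (((hw0r.trans h).trans (reach_symm hsym hw1r)))
        set g := c v w0 with hg
        have hw1g : c v w1 = g := excol w1 hw1S w0 hw0S hw1e hw0e
          (fun h => hnr01 (reach_symm hsym h))
        have hgclaim : ∀ w ∈ S', c v w ≠ α → c v w ≠ β → c v w = g := by
          intro w hw h1 h2
          by_cases hr0 : Reach c S' α β w w0
          · have hnr1 : ¬ Reach c S' α β w w1 := by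
              intro h
              exact hnr01 ((reach_symm hsym hr0).trans h)
            rw [excol w hw w1 hw1S ⟨h1, h2⟩ hw1e hnr1]
            exact hw1g
          · exact excol w hw w0 hw0S ⟨h1, h2⟩ hw0e hr0
        have hge : g ≠ α ∧ g ≠ β := hw0e
        by_cases hb1 : ∀ w ∈ S', c v w = α ∨ c v w = g
        · -- pair (α, g) isolates v
          refine ⟨α, g, v, x0, hv, hS'sub hx0, ?_⟩
          intro h
          have key := reach_closed (P := fun t => t = v) rfl ?_ h
          · exact (hvne x0 hx0) key.symm
          · rintro a b ⟨haS, hbS, hab, hc1, hc2⟩ rfl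
            exfalso
            have hbS' : b ∈ S' := Finset.mem_erase.mpr ⟨fun h => hab h.symm, hbS⟩
            rcases hb1 b hbS' with h' | h'
            · exact hc1 h'
            · exact hc2 h'
        by_cases hb2 : ∀ w ∈ S', c v w = β ∨ c v w = g
        · refine ⟨β, g, v, x0, hv, hS'sub hx0, ?_⟩
          intro h
          have key := reach_closed (P := fun t => t = v) rfl ?_ h
          · exact (hvne x0 hx0) key.symm
          · rintro a b ⟨haS, hbS, hab, hc1, hc2⟩ rfl
            exfalso
            have hbS' : b ∈ S' := Finset.mem_erase.mpr ⟨fun h => hab h.symm, hbS⟩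
            rcases hb2 b hbS' with h' | h'
            · exact hc1 h'
            · exact hc2 h'
        -- case (b3): contradiction
        exfalso
        push_neg at hb1 hb2
        obtain ⟨xB, hxB, hxB1, hxB2⟩ := hb1   -- c v xB ≠ α, ≠ g  ⇒ = β
        obtain ⟨xA, hxA, hxA1, hxA2⟩ := hb2   -- c v xA ≠ β, ≠ g  ⇒ = α
        have hcvxB : c v xB = β := by
          by_contra h
          exact hxB2 (hgclaim xB hxB hxB1 h)
        have hcvxA : c v xA = α := by
          by_contra h
          exact hxA2 (hgclaim xA hxA h hxA1)
        have hab : α ≠ β := by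
          intro h; rw [← h] at hcvxB; exact hxB1 hcvxB
        -- subclaim: exotic y not reaching xA gets color α to xA (and β to xB)
        have subcl : ∀ x' ∈ S', ∀ μ, μ = α ∨ μ = β → c v x' = μ → ∀ y ∈ S', (c v y ≠ α ∧ c v y ≠ β) →
            ¬ Reach c S' α β x' y → c x' y = μ := by
          intro x' hx' μ hμab hμ y hy hey hnr'
          have hne : x' ≠ y := ne_of_not_reach hnr'
          have hgy : c v y = g := hgclaim y hy hey.1 hey.2
          have hcc := colors_of_not_reach hx' hy hne hnr'
          rcases hG v hv x' (hS'sub hx') y (hS'sub hy)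
              (hvne x' hx') (hvne y hy) hne with h | h | h
          · exfalso
            rw [hμ, hgy] at h
            rcases hμab with rfl | rfl
            · exact hge.1 h.symm
            · exact hge.2 h.symm
          · rw [hμ] at h; exact h.symm
          · exfalso
            rw [hgy] at h
            rcases hcc with h' | h' <;> rw [h'] at h
            · exact hge.1 h
            · exact hge.2 h
        obtain ⟨wA, hwAS, hwAr, hwAe⟩ := hcase xA hxA
        obtain ⟨wB, hwBS, hwBr, hwBe⟩ := hcase xB hxB
        by_cases hAB : Reach c S' α β xA xB
        · -- find exotic outside comp(xA)
          have hzex : ∃ zs ∈ S', ¬ Reach c S' α β xA zs := by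
            by_cases h : Reach c S' α β xA x0
            · exact ⟨y0, hy0, fun h' => hnr ((reach_symm hsym h).trans h')⟩
            · exact ⟨x0, hx0, h⟩
          obtain ⟨zs, hzsS, hzsnr⟩ := hzex
          obtain ⟨ws, hwsS, hwsr, hwse⟩ := hcase zs hzsS
          have hnAws : ¬ Reach c S' α β xA ws := by
            intro h
            exact hzsnr (h.trans (reach_symm hsym hwsr))
          have hnBws : ¬ Reach c S' α β xB ws := by
            intro h
            exact hnAws (hAB.trans h)
          have h1 : c xA ws = α := subcl xA hxA α (Or.inl rfl) hcvxA ws hwsS hwse hnAws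
          have h2 : c xB ws = β := subcl xB hxB β (Or.inr rfl) hcvxB ws hwsS hwse hnBws
          have := mono_along hsym hG' hwsS hAB hnAws
          rw [h1, h2] at this
          exact hab this
        · have hnBwA : ¬ Reach c S' α β xB wA := by
            intro h
            exact hAB (hwAr.trans (reach_symm hsym h))
          have hnAwB : ¬ Reach c S' α β xA wB := by
            intro h
            exact hAB (h.trans (reach_symm hsym hwBr))
          have hnAwB' : ¬ Reach c S' α β xA wB := hnAwB
          have e1 : c xA wB = α := subcl xA hxA α (Or.inl rfl) hcvxA wB hwBS hwBe hnAwB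
          have e2 : c xB wA = β := subcl xB hxB β (Or.inr rfl) hcvxB wA hwAS hwAe hnBwA
          have m1 := mono_along hsym hG' hwBS hwAr hnAwB
          -- c xA wB = c wA wB
          have hnBwA' : ¬ Reach c S' α β xB wA := hnBwA
          have m2 := mono_along hsym hG' hwAS hwBr hnBwA
          -- c xB wA = c wB wA
          rw [e1] at m1
          rw [e2] at m2
          have : c wA wB = c wB wA := hsym wA wB
          rw [← m1, ← m2] at this
          exact hab this

/-- A Gallai partition package. -/
structure GP (c : V → V → ℕ) (S : Finset V) where
  pt : V → Finset V
  γ : ℕ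
  δ : ℕ
  mem_pt : ∀ u ∈ S, u ∈ pt u
  pt_sub : ∀ u ∈ S, pt u ⊆ S
  pt_eq : ∀ u ∈ S, ∀ v ∈ pt u, pt v = pt u
  colors : ∀ u ∈ S, ∀ w ∈ S, w ∉ pt u → c u w = γ ∨ c u w = δ
  mono : ∀ u ∈ S, ∀ w ∈ S, w ∉ pt u → ∀ u' ∈ pt u, ∀ w' ∈ pt w, c u' w' = c u w
  nontriv : ∃ u ∈ S, ∃ w ∈ S, w ∉ pt u

theorem exists_GP {c : V → V → ℕ} {S : Finset V} (hsym : SymC c) (hG : GallaiOn c S)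
    (h2 : 2 ≤ S.card) : Nonempty (GP c S) := by
  classical
  obtain ⟨α, β, x1, y1, hx1, hy1, hnr1⟩ := exists_disconn hsym S.card S rfl hG h2
  refine ⟨⟨fun u => S.filter (Reach c S α β u), α, β, ?_, ?_, ?_, ?_, ?_, ?_⟩⟩
  · intro u hu
    exact Finset.mem_filter.mpr ⟨hu, Relation.ReflTransGen.refl⟩
  · intro u hu
    exact Finset.filter_subset _ _
  · intro u hu v hv
    obtain ⟨hvS, hruv⟩ := Finset.mem_filter.mp hv
    ext w
    simp only [Finset.mem_filter]
    constructor
    · rintro ⟨hwS, hr⟩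
      exact ⟨hwS, hruv.trans hr⟩
    · rintro ⟨hwS, hr⟩
      exact ⟨hwS, (reach_symm hsym hruv).trans hr⟩
  · intro u hu w hw hwpt
    have hnr : ¬ Reach c S α β u w := fun hr => hwpt (Finset.mem_filter.mpr ⟨hw, hr⟩)
    exact colors_of_not_reach hu hw (ne_of_not_reach hnr) hnr
  · intro u hu w hw hwpt u' hu' w' hw'
    obtain ⟨hu'S, hru⟩ := Finset.mem_filter.mp hu'
    obtain ⟨hw'S, hrw⟩ := Finset.mem_filter.mp hw'
    have hnr : ¬ Reach c S α β u w := fun hr => hwpt (Finset.mem_filter.mpr ⟨hw, hr⟩)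
    have s1 : c u w = c u' w := mono_along hsym hG hw hru hnr
    have hnwu' : ¬ Reach c S α β w u' := by
      intro hr
      exact hnr (hru.trans (reach_symm hsym hr))
    have s2 : c w u' = c w' u' := mono_along hsym hG hu'S hrw hnwu'
    rw [hsym u' w', ← s2, hsym w u', ← s1]
  · exact ⟨x1, hx1, y1, hy1, fun h => hnr1 (Finset.mem_filter.mp h).2⟩

namespace GP

variable {c : V → V → ℕ} {S : Finset V} (gp : GP c S)

/-- the color class of u -/
def W (u : V) (m : ℕ) : Finset V := S.filter (fun w => w ∉ gp.pt u ∧ c u w = m)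

lemma W_sub {u : V} {m : ℕ} : gp.W u m ⊆ S := Finset.filter_subset _ _

lemma mem_W {u w : V} {m : ℕ} : w ∈ gp.W u m ↔ w ∈ S ∧ w ∉ gp.pt u ∧ c u w = m := by
  simp [W]

lemma not_mem_W_self {u : V} {m : ℕ} (hu : u ∈ S) : u ∉ gp.W u m := by
  rw [mem_W]
  rintro ⟨_, h, _⟩
  exact h (gp.mem_pt u hu)

lemma pt_flip {u w : V} (hu : u ∈ S) (hw : w ∈ S) (hwpt : w ∉ gp.pt u) :
    u ∉ gp.pt w := by
  intro h
  have := gp.pt_eq w hw u h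
  rw [this] at hwpt
  exact hwpt (gp.mem_pt w hw)

lemma pt_disj {u w x : V} (hu : u ∈ S) (hw : w ∈ S) (hwpt : w ∉ gp.pt u)
    (hx : x ∈ gp.pt u) : x ∉ gp.pt w := by
  intro h
  have hxS : x ∈ S := gp.pt_sub u hu hx
  have e1 := gp.pt_eq u hu x hx
  have e2 := gp.pt_eq w hw x h
  rw [← e1, e2] at hwpt
  exact hwpt (gp.mem_pt w hw)

/-- color classes are closed under parts -/
lemma W_closed {u w : V} {m : ℕ} (hu : u ∈ S) (hw : w ∈ gp.W u m) :
    gp.pt w ⊆ gp.W u m := by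
  intro w' hw'
  rw [mem_W] at hw ⊢
  obtain ⟨hwS, hwpt, hcw⟩ := hw
  have hw'S : w' ∈ S := gp.pt_sub w hwS hw'
  refine ⟨hw'S, ?_, ?_⟩
  · intro h
    exact (gp.pt_disj hu hwS hwpt h) hw'
  · have := gp.mono u hu w hwS hwpt u (gp.mem_pt u hu) w' hw'
    rw [this, hcw]

/-- generic split of a part-closed set by the colors of one of its members -/
lemma split_closed (hne : gp.γ ≠ gp.δ) {T : Finset V} {x : V}
    (hT : T ⊆ S) (hcl : ∀ w ∈ T, gp.pt w ⊆ T) (hx : x ∈ T) :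
    T.card = (gp.pt x).card + ((gp.W x gp.γ) ∩ T).card + ((gp.W x gp.δ) ∩ T).card := by
  have hxS : x ∈ S := hT hx
  have hdec : T = gp.pt x ∪ ((gp.W x gp.γ) ∩ T ∪ (gp.W x gp.δ) ∩ T) := by
    ext w
    constructor
    · intro hwT
      by_cases hpt : w ∈ gp.pt x
      · exact Finset.mem_union_left _ hpt
      · have hwS : w ∈ S := hT hwT
        rcases gp.colors x hxS w hwS hpt with h | h
        · exact Finset.mem_union_right _ (Finset.mem_union_left _
            (Finset.mem_inter.mpr ⟨gp.mem_W.mpr ⟨hwS, hpt, h⟩, hwT⟩))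
        · exact Finset.mem_union_right _ (Finset.mem_union_right _
            (Finset.mem_inter.mpr ⟨gp.mem_W.mpr ⟨hwS, hpt, h⟩, hwT⟩))
    · intro hw
      rcases Finset.mem_union.mp hw with h | h
      · exact hcl x hx h
      · rcases Finset.mem_union.mp h with h' | h'
        · exact (Finset.mem_inter.mp h').2
        · exact (Finset.mem_inter.mp h').2
  have d1 : Disjoint (gp.pt x) ((gp.W x gp.γ) ∩ T ∪ (gp.W x gp.δ) ∩ T) := by
    rw [Finset.disjoint_left]
    intro w hw hw'
    rcases Finset.mem_union.mp hw' with h | h <;>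
      exact ((gp.mem_W.mp (Finset.mem_inter.mp h).1).2.1) hw
  have d2 : Disjoint ((gp.W x gp.γ) ∩ T) ((gp.W x gp.δ) ∩ T) := by
    rw [Finset.disjoint_left]
    intro w hw hw'
    have h1 := (gp.mem_W.mp (Finset.mem_inter.mp hw).1).2.2
    have h2 := (gp.mem_W.mp (Finset.mem_inter.mp hw').1).2.2
    exact hne (h1 ▸ h2 ▸ rfl)
  calc T.card = (gp.pt x ∪ (gp.W x gp.γ ∩ T ∪ gp.W x gp.δ ∩ T)).card := by rw [← hdec]
    _ = (gp.pt x).card + (gp.W x gp.γ ∩ T ∪ gp.W x gp.δ ∩ T).card :=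
        Finset.card_union_of_disjoint d1
    _ = _ := by rw [Finset.card_union_of_disjoint d2]; ring

lemma cover_eq (hne : gp.γ ≠ gp.δ) {u : V} (hu : u ∈ S) :
    S.card = (gp.pt u).card + (gp.W u gp.γ).card + (gp.W u gp.δ).card := by
  have := gp.split_closed hne (T := S) (x := u) (fun _ h => h)
    (fun w hw => gp.pt_sub w hw) hu
  rwa [Finset.inter_eq_left.mpr gp.W_sub, Finset.inter_eq_left.mpr gp.W_sub] at this

lemma cover_le {u : V} (hu : u ∈ S) :
    S.card ≤ (gp.pt u).card + (gp.W u gp.γ).card + (gp.W u gp.δ).card := by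
  have hsub : S ⊆ gp.pt u ∪ (gp.W u gp.γ ∪ gp.W u gp.δ) := by
    intro w hw
    by_cases hpt : w ∈ gp.pt u
    · exact Finset.mem_union_left _ hpt
    · rcases gp.colors u hu w hw hpt with h | h
      · exact Finset.mem_union_right _ (Finset.mem_union_left _ (gp.mem_W.mpr ⟨hw, hpt, h⟩))
      · exact Finset.mem_union_right _ (Finset.mem_union_right _ (gp.mem_W.mpr ⟨hw, hpt, h⟩))
  calc S.card ≤ (gp.pt u ∪ (gp.W u gp.γ ∪ gp.W u gp.δ)).card := Finset.card_le_card hsub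
    _ ≤ (gp.pt u).card + (gp.W u gp.γ ∪ gp.W u gp.δ).card := Finset.card_union_le _ _
    _ ≤ (gp.pt u).card + ((gp.W u gp.γ).card + (gp.W u gp.δ).card) := by
        have := Finset.card_union_le (gp.W u gp.γ) (gp.W u gp.δ)
        omega
    _ = _ := by ring

/-- prepend u to a chain in one of its color classes -/
lemma win_class {p : ℕ} {u : V} {m : ℕ} (hu : u ∈ S) (hch : Chain c (gp.W u m) p) :
    Chain c S (p + 1) := by
  refine chain_cons hu gp.W_sub (gp.not_mem_W_self hu) ?_ hch
  intro x hx y hy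
  rw [(gp.mem_W.mp hx).2.2, (gp.mem_W.mp hy).2.2]

/-- prepend an outside vertex to a chain in a part -/
lemma win_part {p : ℕ} {u w : V} (hsym : SymC c) (hu : u ∈ S) (hw : w ∈ S)
    (hwpt : w ∉ gp.pt u) (hch : Chain c (gp.pt u) p) : Chain c S (p + 1) := by
  refine chain_cons hw (gp.pt_sub u hu) hwpt ?_ hch
  intro x hx y hy
  have h1 := gp.mono u hu w hw hwpt x hx w (gp.mem_pt w hw)
  have h2 := gp.mono u hu w hw hwpt y hy w (gp.mem_pt w hw)
  rw [hsym w x, hsym w y, h1, h2]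

lemma exists_outside {u : V} (hu : u ∈ S) : ∃ w ∈ S, w ∉ gp.pt u := by
  by_contra h
  push_neg at h
  obtain ⟨a, ha, b, hb, hab⟩ := gp.nontriv
  have hbpta : b ∈ gp.pt a := by
    rw [gp.pt_eq u hu a (h a ha)]
    exact h b hb
  exact hab hbpta

end GP

theorem chain_four {c : V → V → ℕ} {S : Finset V} (hsym : SymC c) (hG : GallaiOn c S)
    (h6 : 6 ≤ S.card) : Chain c S 4 := by
  obtain ⟨gp⟩ := exists_GP hsym hG (by omega)
  obtain ⟨u0, hu0⟩ := Finset.card_pos.mp (show 0 < S.card by omega)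
  -- win if a part has ≥ 3 elements
  by_cases hbig : ∃ u ∈ S, 3 ≤ (gp.pt u).card
  · obtain ⟨u, hu, hcard⟩ := hbig
    obtain ⟨w, hw, hwpt⟩ := gp.exists_outside hu
    exact gp.win_part hsym hu hw hwpt
      (chain_three hsym (hG.mono (gp.pt_sub u hu)) hcard)
  push_neg at hbig
  -- win if a class has ≥ 3 elements
  by_cases hWbig : ∃ u ∈ S, ∃ m, 3 ≤ (gp.W u m).card
  · obtain ⟨u, hu, m, hcard⟩ := hWbig
    exact gp.win_class hu (chain_three hsym (hG.mono gp.W_sub) hcard)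
  push_neg at hWbig
  exfalso
  have hne : gp.γ ≠ gp.δ := by
    intro h
    have hsub : S ⊆ gp.pt u0 ∪ gp.W u0 gp.γ := by
      intro w hw
      by_cases hpt : w ∈ gp.pt u0
      · exact Finset.mem_union_left _ hpt
      · rcases gp.colors u0 hu0 w hw hpt with h' | h'
        · exact Finset.mem_union_right _ (gp.mem_W.mpr ⟨hw, hpt, h'⟩)
        · exact Finset.mem_union_right _ (gp.mem_W.mpr ⟨hw, hpt, h ▸ h'⟩)
    have := Finset.card_le_card hsub
    have h2 := Finset.card_union_le (gp.pt u0) (gp.W u0 gp.γ)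
    have h3 := hbig u0 hu0
    have h4 := hWbig u0 hu0 gp.γ
    omega
  -- all parts and classes have ≤ 2 elements ⇒ all cards are exactly 2
  have hall : ∀ u ∈ S, (gp.pt u).card = 2 ∧ (gp.W u gp.γ).card = 2 ∧ (gp.W u gp.δ).card = 2 := by
    intro u hu
    have hc := gp.cover_eq hne hu
    have h1 := hbig u hu
    have h2 := hWbig u hu gp.γ
    have h3 := hWbig u hu gp.δ
    omega
  -- the three-part contradiction
  obtain ⟨hA, hB, hC⟩ := hall u0 hu0
  obtain ⟨u2, hu2B⟩ := Finset.card_pos.mp (show 0 < (gp.W u0 gp.γ).card by omega)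
  obtain ⟨u3, hu3C⟩ := Finset.card_pos.mp (show 0 < (gp.W u0 gp.δ).card by omega)
  have hu2S : u2 ∈ S := gp.W_sub hu2B
  have hu3S : u3 ∈ S := gp.W_sub hu3C
  obtain ⟨_, hu2pt, hcu2⟩ := gp.mem_W.mp hu2B
  obtain ⟨_, hu3pt, hcu3⟩ := gp.mem_W.mp hu3C
  -- pt u2 = W u0 γ
  have hptu2 : gp.pt u2 = gp.W u0 gp.γ := by
    apply Finset.eq_of_subset_of_card_le (gp.W_closed hu0 hu2B)
    rw [hB, (hall u2 hu2S).1]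
  have hptu3 : gp.pt u3 = gp.W u0 gp.δ := by
    apply Finset.eq_of_subset_of_card_le (gp.W_closed hu0 hu3C)
    rw [hC, (hall u3 hu3S).1]
  -- A ⊆ W u2 γ
  have hAW2 : gp.pt u0 ⊆ gp.W u2 gp.γ := by
    intro a ha
    have haS : a ∈ S := gp.pt_sub u0 hu0 ha
    refine gp.mem_W.mpr ⟨haS, ?_, ?_⟩
    · rw [hptu2]
      intro h
      exact (gp.mem_W.mp h).2.1 ha
    · rw [hsym u2 a]
      rw [gp.mono u0 hu0 u2 hu2S hu2pt a ha u2 (gp.mem_pt u2 hu2S)]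
      exact hcu2
  have hAW2' : gp.pt u0 = gp.W u2 gp.γ := by
    apply Finset.eq_of_subset_of_card_le hAW2
    rw [hA, (hall u2 hu2S).2.1]
  -- C ⊆ W u2 δ, in particular c u2 u3 = δ
  have hcu2u3 : c u2 u3 = gp.δ := by
    have hu3ptu2 : u3 ∉ gp.pt u2 := by
      rw [hptu2]
      intro h
      have := (gp.mem_W.mp h).2.2
      rw [hcu3] at this
      exact hne this.symm
    rcases gp.colors u2 hu2S u3 hu3S hu3ptu2 with h | h
    · exfalso
      have : u3 ∈ gp.W u2 gp.γ := gp.mem_W.mpr ⟨hu3S, hu3ptu2, h⟩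
      rw [← hAW2'] at this
      exact (gp.mem_W.mp hu3C).2.1 this
    · exact h
  -- now A ∪ B ⊆ W u3 δ
  have hsubW3 : gp.pt u0 ∪ gp.W u0 gp.γ ⊆ gp.W u3 gp.δ := by
    intro a ha
    have haS : a ∈ S := by
      rcases Finset.mem_union.mp ha with h | h
      · exact gp.pt_sub u0 hu0 h
      · exact gp.W_sub h
    have haptu3 : a ∉ gp.pt u3 := by
      rw [hptu3]
      rcases Finset.mem_union.mp ha with h | h
      · intro h'
        exact (gp.mem_W.mp h').2.1 h
      · intro h'
        have h1 := (gp.mem_W.mp h).2.2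
        have h2 := (gp.mem_W.mp h').2.2
        rw [h1] at h2
        exact hne h2
    refine gp.mem_W.mpr ⟨haS, haptu3, ?_⟩
    rcases Finset.mem_union.mp ha with h | h
    · rw [hsym u3 a, gp.mono u0 hu0 u3 hu3S hu3pt a h u3 (gp.mem_pt u3 hu3S)]
      exact hcu3
    · have hu3ptu2 : u3 ∉ gp.pt u2 := by
        rw [hptu2]
        intro h'
        have := (gp.mem_W.mp h').2.2
        rw [hcu3] at this
        exact hne this.symm
      rw [hsym u3 a, gp.mono u2 hu2S u3 hu3S hu3ptu2 a (hptu2 ▸ h) u3 (gp.mem_pt u3 hu3S)]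
      exact hcu2u3
  have hdisjAB : Disjoint (gp.pt u0) (gp.W u0 gp.γ) := by
    rw [Finset.disjoint_left]
    intro a ha ha'
    exact (gp.mem_W.mp ha').2.1 ha
  have hcard4 : 4 ≤ (gp.W u3 gp.δ).card := by
    have := Finset.card_le_card hsubW3
    rw [Finset.card_union_of_disjoint hdisjAB, hA, hB] at this
    omega
  have := hWbig u3 hu3S gp.δ
  omega


theorem chain_five {c : V → V → ℕ} {S : Finset V} [Fintype V] (hsym : SymC c) (hG : GallaiOn c S)
    (h11 : 11 ≤ S.card) : Chain c S 5 := by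
  obtain ⟨gp⟩ := exists_GP hsym hG (by omega)
  obtain ⟨u0, hu0⟩ := Finset.card_pos.mp (show 0 < S.card by omega)
  by_cases hbig : ∃ u ∈ S, 6 ≤ (gp.pt u).card
  · obtain ⟨u, hu, hcard⟩ := hbig
    obtain ⟨w, hw, hwpt⟩ := gp.exists_outside hu
    exact gp.win_part hsym hu hw hwpt
      (chain_four hsym (hG.mono (gp.pt_sub u hu)) hcard)
  push_neg at hbig
  by_cases hWbig : ∃ u ∈ S, ∃ m, 6 ≤ (gp.W u m).card
  · obtain ⟨u, hu, m, hcard⟩ := hWbig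
    exact gp.win_class hu (chain_four hsym (hG.mono gp.W_sub) hcard)
  push_neg at hWbig
  by_cases hw3x : ∃ u ∈ S, ∃ m, ∃ x ∈ gp.W u m, ∃ m', 3 ≤ (gp.W x m' ∩ gp.W u m).card
  · obtain ⟨u, hu, m, x, hx, m', hcard⟩ := hw3x
    have hxS : x ∈ S := gp.W_sub hx
    have hch3 : Chain c (gp.W x m' ∩ gp.W u m) 3 :=
      chain_three hsym (hG.mono (Finset.inter_subset_left.trans gp.W_sub)) hcard
    have hch4 : Chain c (gp.W u m) 4 := by
      refine chain_cons hx Finset.inter_subset_right ?_ ?_ hch3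
      · intro h
        exact gp.not_mem_W_self hxS (Finset.mem_inter.mp h).1
      · intro a ha b hb
        rw [(gp.mem_W.mp (Finset.mem_inter.mp ha).1).2.2,
          (gp.mem_W.mp (Finset.mem_inter.mp hb).1).2.2]
    exact gp.win_class hu hch4
  push_neg at hw3x
  exfalso
  have hne : gp.γ ≠ gp.δ := by
    intro h
    have hsub : S ⊆ gp.pt u0 ∪ gp.W u0 gp.γ := by
      intro w hw
      by_cases hpt : w ∈ gp.pt u0
      · exact Finset.mem_union_left _ hpt
      · rcases gp.colors u0 hu0 w hw hpt with h' | h'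
        · exact Finset.mem_union_right _ (gp.mem_W.mpr ⟨hw, hpt, h'⟩)
        · exact Finset.mem_union_right _ (gp.mem_W.mpr ⟨hw, hpt, h ▸ h'⟩)
    have := Finset.card_le_card hsub
    have h2 := Finset.card_union_le (gp.pt u0) (gp.W u0 gp.γ)
    have h3 := hbig u0 hu0
    have h4 := hWbig u0 hu0 gp.γ
    omega
  -- D2: a part meeting a class non-trivially is small
  have hD2 : ∀ u ∈ S, ∀ m, ∀ x ∈ gp.W u m, ∀ y ∈ gp.W u m, y ∉ gp.pt x →
      (gp.pt y).card ≤ 2 := by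
    intro u hu m x hx y hy hnpt
    have hxS : x ∈ S := gp.W_sub hx
    have hyS : y ∈ S := gp.W_sub hy
    rcases gp.colors x hxS y hyS hnpt with h | h
    · have hyW : y ∈ gp.W x gp.γ := gp.mem_W.mpr ⟨hyS, hnpt, h⟩
      have hsub : gp.pt y ⊆ gp.W x gp.γ ∩ gp.W u m := fun z hz =>
        Finset.mem_inter.mpr ⟨gp.W_closed hxS hyW hz, gp.W_closed hu hy hz⟩
      have := Finset.card_le_card hsub
      have h2 := hw3x u hu m x hx gp.γ
      omega
    · have hyW : y ∈ gp.W x gp.δ := gp.mem_W.mpr ⟨hyS, hnpt, h⟩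
      have hsub : gp.pt y ⊆ gp.W x gp.δ ∩ gp.W u m := fun z hz =>
        Finset.mem_inter.mpr ⟨gp.W_closed hxS hyW hz, gp.W_closed hu hy hz⟩
      have := Finset.card_le_card hsub
      have h2 := hw3x u hu m x hx gp.δ
      omega
  -- D2 also for the first element of the pair
  have hD2' : ∀ u ∈ S, ∀ m, ∀ x ∈ gp.W u m, ∀ y ∈ gp.W u m, y ∉ gp.pt x →
      (gp.pt x).card ≤ 2 := by
    intro u hu m x hx y hy hnpt
    exact hD2 u hu m y hy x hx (gp.pt_flip (gp.W_sub hx) (gp.W_sub hy) hnpt)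
  -- D1: every vertex has a class containing two different parts
  have hD1 : ∀ u ∈ S, ∃ m, ∃ x, x ∈ gp.W u m ∧ ∃ y, y ∈ gp.W u m ∧ y ∉ gp.pt x := by
    intro u hu
    by_contra hnot
    push_neg at hnot
    have hcov := gp.cover_eq hne hu
    have hBpos : 0 < (gp.W u gp.γ).card := by
      have := hWbig u hu gp.δ
      have := hbig u hu
      omega
    have hCpos : 0 < (gp.W u gp.δ).card := by
      have := hWbig u hu gp.γ
      have := hbig u hu
      omega
    obtain ⟨u2, hu2B⟩ := Finset.card_pos.mp hBpos
    obtain ⟨u3, hu3C⟩ := Finset.card_pos.mp hCpos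
    have hu2S : u2 ∈ S := gp.W_sub hu2B
    have hu3S : u3 ∈ S := gp.W_sub hu3C
    obtain ⟨_, hu2pt, hcu2⟩ := gp.mem_W.mp hu2B
    obtain ⟨_, hu3pt, hcu3⟩ := gp.mem_W.mp hu3C
    have hBC : ∀ w, w ∈ gp.W u gp.γ → w ∉ gp.W u gp.δ := by
      intro w h1 h2
      have e1 := (gp.mem_W.mp h1).2.2
      have e2 := (gp.mem_W.mp h2).2.2
      rw [e1] at e2
      exact hne e2
    have hu3ptu2 : u3 ∉ gp.pt u2 := by
      intro h
      exact hBC u3 (gp.W_closed hu hu2B h) hu3C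
    have hu2ptu3 : u2 ∉ gp.pt u3 := gp.pt_flip hu2S hu3S hu3ptu2
    -- A ⊆ W u2 γ always
    have hAW2 : gp.pt u ⊆ gp.W u2 gp.γ := by
      intro a ha
      have haS : a ∈ S := gp.pt_sub u hu ha
      refine gp.mem_W.mpr ⟨haS, ?_, ?_⟩
      · intro h
        exact (gp.mem_W.mp (gp.W_closed hu hu2B h)).2.1 ha
      · rw [hsym u2 a, gp.mono u hu u2 hu2S hu2pt a ha u2 (gp.mem_pt u2 hu2S)]
        exact hcu2
    have hAW3 : gp.pt u ⊆ gp.W u3 gp.δ := by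
      intro a ha
      have haS : a ∈ S := gp.pt_sub u hu ha
      refine gp.mem_W.mpr ⟨haS, ?_, ?_⟩
      · intro h
        exact (gp.mem_W.mp (gp.W_closed hu hu3C h)).2.1 ha
      · rw [hsym u3 a, gp.mono u hu u3 hu3S hu3pt a ha u3 (gp.mem_pt u3 hu3S)]
        exact hcu3
    rcases gp.colors u2 hu2S u3 hu3S hu3ptu2 with ht | ht
    · -- W u2 γ ⊇ A ∪ C
      have hCW2 : gp.W u gp.δ ⊆ gp.W u2 gp.γ := by
        intro x hxC
        have hxS : x ∈ S := gp.W_sub hxC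
        have hxpt3 : x ∈ gp.pt u3 := hnot gp.δ u3 hu3C x hxC
        refine gp.mem_W.mpr ⟨hxS, ?_, ?_⟩
        · intro h
          exact hBC x (gp.W_closed hu hu2B h) hxC
        · rw [hsym u2 x, gp.mono u3 hu3S u2 hu2S hu2ptu3 x hxpt3 u2 (gp.mem_pt u2 hu2S),
            hsym u3 u2]
          exact ht
      have hdisj : Disjoint (gp.pt u) (gp.W u gp.δ) := by
        rw [Finset.disjoint_left]
        intro a ha ha'
        exact (gp.mem_W.mp ha').2.1 ha
      have hsub : gp.pt u ∪ gp.W u gp.δ ⊆ gp.W u2 gp.γ := Finset.union_subset hAW2 hCW2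
      have := Finset.card_le_card hsub
      rw [Finset.card_union_of_disjoint hdisj] at this
      have := hWbig u2 hu2S gp.γ
      have := hWbig u hu gp.γ
      omega
    · -- W u3 δ ⊇ A ∪ B
      have hBW3 : gp.W u gp.γ ⊆ gp.W u3 gp.δ := by
        intro x hxB
        have hxS : x ∈ S := gp.W_sub hxB
        have hxpt2 : x ∈ gp.pt u2 := hnot gp.γ u2 hu2B x hxB
        refine gp.mem_W.mpr ⟨hxS, ?_, ?_⟩
        · intro h
          exact hBC x hxB (gp.W_closed hu hu3C h)
        · rw [hsym u3 x, gp.mono u2 hu2S u3 hu3S hu3ptu2 x hxpt2 u3 (gp.mem_pt u3 hu3S)]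
          exact ht
      have hdisj : Disjoint (gp.pt u) (gp.W u gp.γ) := by
        rw [Finset.disjoint_left]
        intro a ha ha'
        exact (gp.mem_W.mp ha').2.1 ha
      have hsub : gp.pt u ∪ gp.W u gp.γ ⊆ gp.W u3 gp.δ := Finset.union_subset hAW3 hBW3
      have := Finset.card_le_card hsub
      rw [Finset.card_union_of_disjoint hdisj] at this
      have := hWbig u3 hu3S gp.δ
      have := hWbig u hu gp.δ
      omega
  -- if all parts are ≥ 3 we get an immediate contradiction
  have hnotall3 : ¬ (∀ u ∈ S, 3 ≤ (gp.pt u).card) := by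
    intro hall3
    obtain ⟨m, x, hx, y, hy, hnpt⟩ := hD1 u0 hu0
    have := hD2 u0 hu0 m x hx y hy hnpt
    have := hall3 y (gp.W_sub hy)
    omega
  have hS15 : S.card ≤ 15 := by
    have := gp.cover_le hu0
    have := hbig u0 hu0
    have := hWbig u0 hu0 gp.γ
    have := hWbig u0 hu0 gp.δ
    omega
  have hptlow : ∀ u ∈ S, S.card ≤ (gp.pt u).card + 10 := by
    intro u hu
    have := gp.cover_le hu
    have := hWbig u hu gp.γ
    have := hWbig u hu gp.δ
    omega
  -- hence S.card ≤ 12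
  have hS12 : S.card ≤ 12 := by
    by_contra h
    apply hnotall3
    intro u hu
    have := hptlow u hu
    omega
  -- the one-element-piece trick
  have hpiece : ∀ u ∈ S, ∀ m, (gp.W u m).card = 5 → ∀ x, x ∈ gp.W u m →
      (gp.pt x).card = 2 → ∃ m' z, gp.W x m' ∩ gp.W u m = {z} := by
    intro u hu m hK x hx hpx
    have hxS : x ∈ S := gp.W_sub hx
    have hsplit := gp.split_closed hne (T := gp.W u m) gp.W_sub
      (fun w hw => gp.W_closed hu hw) hx
    have h1 := hw3x u hu m x hx gp.γ
    have h2 := hw3x u hu m x hx gp.δ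
    rcases (show (gp.W x gp.γ ∩ gp.W u m).card = 1 ∨ (gp.W x gp.δ ∩ gp.W u m).card = 1 by omega)
      with h | h
    · obtain ⟨z, hz⟩ := Finset.card_eq_one.mp h
      exact ⟨gp.γ, z, hz⟩
    · obtain ⟨z, hz⟩ := Finset.card_eq_one.mp h
      exact ⟨gp.δ, z, hz⟩
  -- case S.card = 12
  rcases (show S.card = 12 ∨ S.card = 11 by omega) with hs12 | hs11
  · have hpt2 : ∀ u ∈ S, 2 ≤ (gp.pt u).card := by
      intro u hu
      have := hptlow u hu
      omega
    by_cases hex2 : ∃ u ∈ S, (gp.pt u).card = 2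
    · obtain ⟨u, hu, hpu⟩ := hex2
      obtain ⟨m, x, hx, y, hy, hnpt⟩ := hD1 u hu
      have hxS : x ∈ S := gp.W_sub hx
      have hK5 : (gp.W u m).card = 5 := by
        have hcov := gp.cover_eq hne hu
        have h1 := hWbig u hu gp.γ
        have h2 := hWbig u hu gp.δ
        -- m must be γ or δ since W u m is nonempty
        rcases gp.colors u hu x hxS (gp.mem_W.mp hx).2.1 with h | h
        · have : m = gp.γ := by rw [← (gp.mem_W.mp hx).2.2, h]
          rw [this]
          -- card ≥ : contains pt x and pt y disjoint... need exact 5; use the cover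
          -- |W u γ| = 12 - 2 - |W u δ|; and pt x, pt y ⊆ W u γ so ≥ ... 
          have hsub : gp.pt x ∪ gp.pt y ⊆ gp.W u m := Finset.union_subset
            (gp.W_closed hu hx) (gp.W_closed hu hy)
          have hdisj : Disjoint (gp.pt x) (gp.pt y) := by
            rw [Finset.disjoint_left]
            intro a ha
            exact gp.pt_disj hxS (gp.W_sub hy) hnpt ha
          have hge := Finset.card_le_card hsub
          rw [Finset.card_union_of_disjoint hdisj] at hge
          have hx2 := hpt2 x hxS
          have hy2 := hpt2 y (gp.W_sub hy)
          rw [this] at hge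
          omega
        · have : m = gp.δ := by rw [← (gp.mem_W.mp hx).2.2, h]
          rw [this]
          have hsub : gp.pt x ∪ gp.pt y ⊆ gp.W u m := Finset.union_subset
            (gp.W_closed hu hx) (gp.W_closed hu hy)
          have hdisj : Disjoint (gp.pt x) (gp.pt y) := by
            rw [Finset.disjoint_left]
            intro a ha
            exact gp.pt_disj hxS (gp.W_sub hy) hnpt ha
          have hge := Finset.card_le_card hsub
          rw [Finset.card_union_of_disjoint hdisj] at hge
          have hx2 := hpt2 x hxS
          have hy2 := hpt2 y (gp.W_sub hy)
          rw [this] at hge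
          omega
      have hpx2 : (gp.pt x).card = 2 := by
        have := hD2' u hu m x hx y hy hnpt
        have := hpt2 x hxS
        omega
      obtain ⟨m', z, hz⟩ := hpiece u hu m hK5 x hx hpx2
      have hzmem : z ∈ gp.W x m' ∩ gp.W u m := by rw [hz]; exact Finset.mem_singleton_self z
      have hzK : z ∈ gp.W u m := (Finset.mem_inter.mp hzmem).2
      have hzW : z ∈ gp.W x m' := (Finset.mem_inter.mp hzmem).1
      have hsub : gp.pt z ⊆ {z} := by
        rw [← hz]
        intro w hw
        exact Finset.mem_inter.mpr ⟨gp.W_closed hxS hzW hw, gp.W_closed hu hzK hw⟩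
      have := Finset.card_le_card hsub
      rw [Finset.card_singleton] at this
      have := hpt2 z (gp.W_sub hzK)
      omega
    · push_neg at hex2
      have hall3 : ∀ u ∈ S, 3 ≤ (gp.pt u).card := by
        intro u hu
        have h1 := hpt2 u hu
        have h2 := hex2 u hu
        omega
      exact hnotall3 hall3
  · -- case S.card = 11
    -- single-part property of classes containing a big part
    have hSB : ∀ u ∈ S, ∀ m, ∀ z, z ∈ gp.W u m → 3 ≤ (gp.pt z).card → gp.W u m = gp.pt z := by
      intro u hu m z hz h3
      apply Finset.Subset.antisymm
      · intro y hy
        by_contra hny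
        have := hD2' u hu m z hz y hy hny
        omega
      · exact gp.W_closed hu hz
    -- at most one big part
    have hE1 : ∀ x1 ∈ S, 3 ≤ (gp.pt x1).card → ∀ x2 ∈ S, 3 ≤ (gp.pt x2).card →
        x2 ∉ gp.pt x1 → False := by
      intro x1 hx1S h31 x2 hx2S h32 hn12
      obtain ⟨m0, xx, hxx, yy, hyy, hnxy⟩ := hD1 x1 hx1S
      have hxxS : xx ∈ S := gp.W_sub hxx
      have hxxsmall : (gp.pt xx).card ≤ 2 := hD2' x1 hx1S m0 xx hxx yy hyy hnxy
      have h1 : x1 ∉ gp.pt xx := gp.pt_flip hx1S hxxS (gp.mem_W.mp hxx).2.1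
      have hx2nxx : x2 ∉ gp.pt xx := by
        intro h
        have heq := gp.pt_eq xx hxxS x2 h
        rw [heq] at h32
        omega
      have hx1W : x1 ∈ gp.W xx (c xx x1) := gp.mem_W.mpr ⟨hx1S, h1, rfl⟩
      have hx2W : x2 ∈ gp.W xx (c xx x2) := gp.mem_W.mpr ⟨hx2S, hx2nxx, rfl⟩
      have hef : c xx x1 ≠ c xx x2 := by
        intro h
        have hx2W' : x2 ∈ gp.W xx (c xx x1) := by rw [h]; exact hx2W
        have := hD2 xx hxxS (c xx x1) x1 hx1W x2 hx2W' hn12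
        omega
      have hW1 : gp.W xx (c xx x1) = gp.pt x1 := hSB xx hxxS _ x1 hx1W h31
      have hW2 : gp.W xx (c xx x2) = gp.pt x2 := hSB xx hxxS _ x2 hx2W h32
      obtain ⟨m1, p, hp, q, hq, hnpq⟩ := hD1 xx hxxS
      have hm1 : m1 = c xx x1 ∨ m1 = c xx x2 := by
        have hpm : c xx p = m1 := (gp.mem_W.mp hp).2.2
        have hcp := gp.colors xx hxxS p (gp.W_sub hp) (gp.mem_W.mp hp).2.1
        have hc1 := gp.colors xx hxxS x1 hx1S h1
        have hc2 := gp.colors xx hxxS x2 hx2S hx2nxx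
        rcases hcp with h | h <;> rcases hc1 with h1' | h1' <;> rcases hc2 with h2' | h2' <;>
          rw [hpm] at h <;> omega
      rcases hm1 with h | h
      · rw [h, hW1] at hp hq
        exact hnpq (by rw [gp.pt_eq x1 hx1S p hp]; exact hq)
      · rw [h, hW2] at hp hq
        exact hnpq (by rw [gp.pt_eq x2 hx2S p hp]; exact hq)
    -- the C* lemma: a 5-element class, all of whose parts are small, has no 2-part
    have hCstar : ∀ u ∈ S, ∀ m, (gp.W u m).card = 5 →
        (∀ w ∈ gp.W u m, (gp.pt w).card ≤ 2) →
        ∀ y, y ∈ gp.W u m → (gp.pt y).card = 2 → False := by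
      intro u hu m hK5 hsmallK y hyK hpy2
      have hyS : y ∈ S := gp.W_sub hyK
      obtain ⟨m2, z, hz⟩ := hpiece u hu m hK5 y hyK hpy2
      have hzmem : z ∈ gp.W y m2 ∩ gp.W u m := by rw [hz]; exact Finset.mem_singleton_self z
      have hzK : z ∈ gp.W u m := (Finset.mem_inter.mp hzmem).2
      have hzW : z ∈ gp.W y m2 := (Finset.mem_inter.mp hzmem).1
      have hzS : z ∈ S := gp.W_sub hzK
      have hznpty : z ∉ gp.pt y := (gp.mem_W.mp hzW).2.1
      have hcyz : c y z = m2 := (gp.mem_W.mp hzW).2.2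
      have hptz : gp.pt z ⊆ {z} := by
        rw [← hz]
        intro w hw
        exact Finset.mem_inter.mpr ⟨gp.W_closed hyS hzW hw, gp.W_closed hu hzK hw⟩
      have hm2 : m2 = gp.γ ∨ m2 = gp.δ := by
        rcases gp.colors y hyS z hzS hznpty with h | h
        · left; rw [← hcyz, h]
        · right; rw [← hcyz, h]
      -- m1 := the other color
      obtain ⟨m1, hm1or, hm1ne⟩ : ∃ m1, (m1 = gp.γ ∨ m1 = gp.δ) ∧ m1 ≠ m2 := by
        rcases hm2 with h | h
        · exact ⟨gp.δ, Or.inr rfl, by rw [h]; exact fun hh => hne hh.symm⟩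
        · exact ⟨gp.γ, Or.inl rfl, by rw [h]; exact hne⟩
      have hsplit := gp.split_closed hne (T := gp.W u m) gp.W_sub
        (fun w hw => gp.W_closed hu hw) hyK
      have hzcard : (gp.W y m2 ∩ gp.W u m).card = 1 := by rw [hz]; exact Finset.card_singleton z
      have hU1 : (gp.W y m1 ∩ gp.W u m).card = 2 := by
        have h1 := hw3x u hu m y hyK gp.γ
        have h2 := hw3x u hu m y hyK gp.δ
        rcases hm2 with h | h <;> rcases hm1or with h' | h' <;> rw [h] at hzcard <;>
          rw [h'] <;> first
          | (exfalso; rw [h] at hm1ne; rw [h'] at hm1ne; exact hm1ne rfl)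
          | omega
      -- pt y ⊆ W z m2 ∩ K, with equality by cardinality
      have hq_sub : gp.pt y ⊆ gp.W z m2 ∩ gp.W u m := by
        intro y' hy'
        have hy'S : y' ∈ S := gp.pt_sub y hyS hy'
        refine Finset.mem_inter.mpr ⟨gp.mem_W.mpr ⟨hy'S, ?_, ?_⟩, gp.W_closed hu hyK hy'⟩
        · intro h
          have := hptz h
          rw [Finset.mem_singleton] at this
          rw [this] at hy'
          exact hznpty hy'
        · rw [hsym z y', gp.mono y hyS z hzS hznpty y' hy' z (gp.mem_pt z hzS)]
          exact hcyz
      have hq_eq : gp.pt y = gp.W z m2 ∩ gp.W u m := by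
        apply Finset.eq_of_subset_of_card_le hq_sub
        have := hw3x u hu m z hzK m2
        omega
      -- pick x in the 2-piece
      obtain ⟨x, hxU⟩ := Finset.card_pos.mp (show 0 < (gp.W y m1 ∩ gp.W u m).card by omega)
      have hxW : x ∈ gp.W y m1 := (Finset.mem_inter.mp hxU).1
      have hxK : x ∈ gp.W u m := (Finset.mem_inter.mp hxU).2
      have hxS : x ∈ S := gp.W_sub hxK
      have hcyx : c y x = m1 := (gp.mem_W.mp hxW).2.2
      have hxnpty : x ∉ gp.pt y := (gp.mem_W.mp hxW).2.1
      have hxnz : x ≠ z := by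
        intro h
        rw [h, hcyz] at hcyx
        exact hm1ne hcyx.symm
      have hxnptz : x ∉ gp.pt z := by
        intro h
        have := hptz h
        rw [Finset.mem_singleton] at this
        exact hxnz this
      have hczx : c z x = m1 := by
        rcases gp.colors z hzS x hxS hxnptz with h | h <;> rcases hm1or with h' | h' <;>
            rcases hm2 with h'' | h''
        · rw [h, ← h']
        · rw [h, ← h']
        · exfalso
          -- c z x = γ = m2: x ∈ W z m2 ∩ K = pt y, contra
          have hxW2 : x ∈ gp.W z m2 ∩ gp.W u m := by
            refine Finset.mem_inter.mpr ⟨gp.mem_W.mpr ⟨hxS, hxnptz, by rw [h, h'']⟩, hxK⟩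
          rw [← hq_eq] at hxW2
          exact hxnpty hxW2
        · exfalso
          rw [h'', ← h'] at hm1ne
          exact hm1ne rfl
        · exfalso
          rw [h'', ← h'] at hm1ne
          exact hm1ne rfl
        · exfalso
          have hxW2 : x ∈ gp.W z m2 ∩ gp.W u m := by
            refine Finset.mem_inter.mpr ⟨gp.mem_W.mpr ⟨hxS, hxnptz, by rw [h, h'']⟩, hxK⟩
          rw [← hq_eq] at hxW2
          exact hxnpty hxW2
        · rw [h, ← h']
        · rw [h, ← h']
      -- pt y ∪ {z} ⊆ W x m1 ∩ K
      have hptx_sub : gp.pt x ⊆ gp.W y m1 := gp.W_closed hyS hxW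
      have hfinal : gp.pt y ∪ {z} ⊆ gp.W x m1 ∩ gp.W u m := by
        intro w hw
        rcases Finset.mem_union.mp hw with hwq | hwz
        · have hwS : w ∈ S := gp.pt_sub y hyS hwq
          refine Finset.mem_inter.mpr ⟨gp.mem_W.mpr ⟨hwS, ?_, ?_⟩, gp.W_closed hu hyK hwq⟩
          · intro h
            exact (gp.mem_W.mp (hptx_sub h)).2.1 hwq
          · rw [hsym x w, gp.mono y hyS x hxS hxnpty w hwq x (gp.mem_pt x hxS)]
            exact hcyx
        · rw [Finset.mem_singleton] at hwz
          subst hwz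
          refine Finset.mem_inter.mpr ⟨gp.mem_W.mpr ⟨hzS, ?_, ?_⟩, hzK⟩
          · intro h
            have := (gp.mem_W.mp (hptx_sub h)).2.2
            rw [hcyz] at this
            exact hm1ne this.symm
          · rw [hsym x w]
            exact hczx
      have hcard3 : 3 ≤ (gp.W x m1 ∩ gp.W u m).card := by
        have hd : Disjoint (gp.pt y) ({z} : Finset V) := by
          rw [Finset.disjoint_left]
          intro a ha ha'
          rw [Finset.mem_singleton] at ha'
          rw [ha'] at ha
          exact hznpty ha
        have := Finset.card_le_card hfinal
        rw [Finset.card_union_of_disjoint hd, hpy2, Finset.card_singleton] at this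
        omega
      have := hw3x u hu m x hxK m1
      omega
    by_cases hbigex : ∃ x1 ∈ S, 3 ≤ (gp.pt x1).card
    · -- exactly one big part
      obtain ⟨x1, hx1S, h31⟩ := hbigex
      have hsmall : ∀ w ∈ S, w ∉ gp.pt x1 → (gp.pt w).card ≤ 2 := by
        intro w hw hnw
        by_contra h
        exact hE1 x1 hx1S h31 w hw (by omega) hnw
      have hPsub : gp.pt x1 ⊆ S := gp.pt_sub x1 hx1S
      have hP5 : (gp.pt x1).card ≤ 5 := by have := hbig x1 hx1S; omega
      -- facts about small vertices
      have hufacts : ∀ u ∈ S, u ∉ gp.pt x1 → ∃ a b : ℕ,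
          ((a = gp.γ ∧ b = gp.δ) ∨ (a = gp.δ ∧ b = gp.γ)) ∧ c u x1 = a ∧
          gp.W u a = gp.pt x1 ∧ gp.W u b = (S \ gp.pt x1) \ gp.pt u := by
        intro u hu hnuP
        have hx1nu : x1 ∉ gp.pt u := gp.pt_flip hx1S hu hnuP
        have hx1W : x1 ∈ gp.W u (c u x1) := gp.mem_W.mpr ⟨hx1S, hx1nu, rfl⟩
        have hWa : gp.W u (c u x1) = gp.pt x1 := hSB u hu _ x1 hx1W h31
        obtain ⟨b, hbor, hbne⟩ : ∃ b, ((c u x1 = gp.γ ∧ b = gp.δ) ∨ (c u x1 = gp.δ ∧ b = gp.γ))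
            ∧ b ≠ c u x1 := by
          rcases gp.colors u hu x1 hx1S hx1nu with h | h
          · exact ⟨gp.δ, Or.inl ⟨h, rfl⟩, by rw [h]; exact fun hh => hne hh.symm⟩
          · exact ⟨gp.γ, Or.inr ⟨h, rfl⟩, by rw [h]; exact hne⟩
        refine ⟨c u x1, b, by tauto, rfl, hWa, ?_⟩
        apply Finset.Subset.antisymm
        · intro w hw
          obtain ⟨hwS, hwnpt, hcw⟩ := gp.mem_W.mp hw
          refine Finset.mem_sdiff.mpr ⟨Finset.mem_sdiff.mpr ⟨hwS, ?_⟩, hwnpt⟩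
          intro hwP
          have : w ∈ gp.W u (c u x1) := by rw [hWa]; exact hwP
          have := (gp.mem_W.mp this).2.2
          rw [hcw] at this
          exact hbne this
        · intro w hw
          obtain ⟨hw1, hwnpt⟩ := Finset.mem_sdiff.mp hw
          obtain ⟨hwS, hwnP⟩ := Finset.mem_sdiff.mp hw1
          refine gp.mem_W.mpr ⟨hwS, hwnpt, ?_⟩
          rcases gp.colors u hu w hwS hwnpt with h | h <;> rcases hbor with ⟨ha, hb⟩ | ⟨ha, hb⟩
          · exfalso
            have : w ∈ gp.W u (c u x1) := gp.mem_W.mpr ⟨hwS, hwnpt, by rw [ha, h]⟩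
            rw [hWa] at this
            exact hwnP this
          · rw [h, hb]
          · rw [h, hb]
          · exfalso
            have : w ∈ gp.W u (c u x1) := gp.mem_W.mpr ⟨hwS, hwnpt, by rw [ha, h]⟩
            rw [hWa] at this
            exact hwnP this
      -- part of a small vertex avoids P
      have hptsm : ∀ u ∈ S, u ∉ gp.pt x1 → gp.pt u ⊆ (S \ gp.pt x1) := by
        intro u hu hnuP w hw
        refine Finset.mem_sdiff.mpr ⟨gp.pt_sub u hu hw, ?_⟩
        intro hwP
        have e1 := gp.pt_eq u hu w hw
        have e2 := gp.pt_eq x1 hx1S w hwP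
        apply hnuP
        rw [← e2, e1]
        exact gp.mem_pt u hu
      have hcardsm : ∀ u ∈ S, u ∉ gp.pt x1 →
          ((S \ gp.pt x1) \ gp.pt u).card = 11 - (gp.pt x1).card - (gp.pt u).card := by
        intro u hu hnuP
        rw [Finset.card_sdiff_of_subset (hptsm u hu hnuP), Finset.card_sdiff_of_subset hPsub, hs11]
      -- the constraint: for small u, 6 ≤ |P| + |pt u|
      have hconstr : ∀ u ∈ S, u ∉ gp.pt x1 → 6 ≤ (gp.pt x1).card + (gp.pt u).card := by
        intro u hu hnuP
        obtain ⟨a, b, hor, hca, hWa, hWb⟩ := hufacts u hu hnuP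
        have := hWbig u hu b
        rw [hWb, hcardsm u hu hnuP] at this
        have hle := hsmall u hu hnuP
        have hge : 0 < (gp.pt u).card := Finset.card_pos.mpr ⟨u, gp.mem_pt u hu⟩
        omega
      -- smalls exist
      have hSPcard : (S \ gp.pt x1).card = 11 - (gp.pt x1).card := by
        rw [Finset.card_sdiff_of_subset hPsub, hs11]
      obtain ⟨usm, husm⟩ := Finset.card_pos.mp (show 0 < (S \ gp.pt x1).card by omega)
      obtain ⟨husmS, husmP⟩ := Finset.mem_sdiff.mp husm
      have husm2 : (gp.pt usm).card ≤ 2 := hsmall usm husmS husmP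
      have hP45 : (gp.pt x1).card = 4 ∨ (gp.pt x1).card = 5 := by
        have := hconstr usm husmS husmP
        omega
      rcases hP45 with hP4 | hP5'
      · -- |P| = 4 : all smalls are 2-parts, class of size 5 gives contradiction
        obtain ⟨a, b, hor, hca, hWa, hWb⟩ := hufacts usm husmS husmP
        have hpu2 : (gp.pt usm).card = 2 := by
          have := hconstr usm husmS husmP
          omega
        have hK5 : (gp.W usm b).card = 5 := by
          rw [hWb, hcardsm usm husmS husmP, hP4, hpu2]
        obtain ⟨x, hxK⟩ := Finset.card_pos.mp (show 0 < (gp.W usm b).card by omega)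
        have hxS : x ∈ S := gp.W_sub hxK
        have hxsm : x ∉ gp.pt x1 := by
          have := hxK
          rw [hWb] at this
          exact (Finset.mem_sdiff.mp (Finset.mem_sdiff.mp this).1).2
        have hpx2 : (gp.pt x).card = 2 := by
          have h1 := hsmall x hxS hxsm
          have h2 := hconstr x hxS hxsm
          omega
        obtain ⟨m', z, hz⟩ := hpiece usm husmS b hK5 x hxK hpx2
        have hzmem : z ∈ gp.W x m' ∩ gp.W usm b := by rw [hz]; exact Finset.mem_singleton_self z
        have hzK : z ∈ gp.W usm b := (Finset.mem_inter.mp hzmem).2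
        have hsubz : gp.pt z ⊆ {z} := by
          rw [← hz]
          intro w hw
          exact Finset.mem_inter.mpr ⟨gp.W_closed hxS (Finset.mem_inter.mp hzmem).1 hw,
            gp.W_closed husmS hzK hw⟩
        have hzS : z ∈ S := gp.W_sub hzK
        have hzsm : z ∉ gp.pt x1 := by
          have := hzK
          rw [hWb] at this
          exact (Finset.mem_sdiff.mp (Finset.mem_sdiff.mp this).1).2
        have := Finset.card_le_card hsubz
        rw [Finset.card_singleton] at this
        have := hconstr z hzS hzsm
        omega
      · -- |P| = 5
        -- every small vertex is in a 2-part
        have hsm2 : ∀ u ∈ S, u ∉ gp.pt x1 → (gp.pt u).card = 2 := by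
          intro u hu hnuP
          have hle := hsmall u hu hnuP
          have hge : 0 < (gp.pt u).card := Finset.card_pos.mpr ⟨u, gp.mem_pt u hu⟩
          rcases (show (gp.pt u).card = 1 ∨ (gp.pt u).card = 2 by omega) with h1 | h2
          · exfalso
            obtain ⟨a, b, hor, hca, hWa, hWb⟩ := hufacts u hu hnuP
            have hK5 : (gp.W u b).card = 5 := by
              rw [hWb, hcardsm u hu hnuP, hP5', h1]
            have hKsm : ∀ w ∈ gp.W u b, w ∉ gp.pt x1 := by
              intro w hw
              rw [hWb] at hw
              exact (Finset.mem_sdiff.mp (Finset.mem_sdiff.mp hw).1).2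
            have hKsmall : ∀ w ∈ gp.W u b, (gp.pt w).card ≤ 2 := by
              intro w hw
              exact hsmall w (gp.W_sub hw) (hKsm w hw)
            -- subcase: a 2-part in K → Cstar; else all 1-parts → hw3 contradiction
            by_cases hy2 : ∃ y, y ∈ gp.W u b ∧ (gp.pt y).card = 2
            · obtain ⟨y, hyK, hy2'⟩ := hy2
              exact hCstar u hu b hK5 hKsmall y hyK hy2'
            · push_neg at hy2
              have hall1 : ∀ w, w ∈ gp.W u b → gp.pt w = {w} := by
                intro w hw
                have hwS : w ∈ S := gp.W_sub hw
                have h1' : 0 < (gp.pt w).card := Finset.card_pos.mpr ⟨w, gp.mem_pt w hwS⟩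
                have h2' := hKsmall w hw
                have h3' := hy2 w hw
                have hc1 : (gp.pt w).card = 1 := by omega
                obtain ⟨a', ha'⟩ := Finset.card_eq_one.mp hc1
                have := gp.mem_pt w hwS
                rw [ha'] at this
                rw [Finset.mem_singleton] at this
                rw [ha', this]
              obtain ⟨x, hxK⟩ := Finset.card_pos.mp (show 0 < (gp.W u b).card by omega)
              have hxS : x ∈ S := gp.W_sub hxK
              have hxsm : x ∉ gp.pt x1 := hKsm x hxK
              obtain ⟨a2, b2, hor2, hca2, hWa2, hWb2⟩ := hufacts x hxS hxsm
              -- W x b2 ∩ W u b ⊇ smalls minus {x} minus {u}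
              have hpu1 : gp.pt u = {u} := by
                obtain ⟨a', ha'⟩ := Finset.card_eq_one.mp h1
                have := gp.mem_pt u hu
                rw [ha'] at this
                rw [Finset.mem_singleton] at this
                rw [ha', this]
              have hpx1 : gp.pt x = {x} := hall1 x hxK
              have hbig_inter : ((S \ gp.pt x1) \ {u}) \ {x} ⊆ gp.W x b2 ∩ gp.W u b := by
                intro w hw
                obtain ⟨hw1, hwx⟩ := Finset.mem_sdiff.mp hw
                obtain ⟨hw2, hwu⟩ := Finset.mem_sdiff.mp hw1
                rw [Finset.mem_singleton] at hwx hwu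
                refine Finset.mem_inter.mpr ⟨?_, ?_⟩
                · rw [hWb2]
                  refine Finset.mem_sdiff.mpr ⟨hw2, ?_⟩
                  rw [hpx1, Finset.mem_singleton]
                  exact hwx
                · rw [hWb]
                  refine Finset.mem_sdiff.mpr ⟨hw2, ?_⟩
                  rw [hpu1, Finset.mem_singleton]
                  exact hwu
              have hxne_u : x ≠ u := by
                intro h
                rw [h] at hxK
                exact gp.not_mem_W_self hu hxK
              have hcard_inter : 4 ≤ (((S \ gp.pt x1) \ {u}) \ {x}).card := by
                have husm' : u ∈ S \ gp.pt x1 := Finset.mem_sdiff.mpr ⟨hu, hnuP⟩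
                have hxsm' : x ∈ (S \ gp.pt x1) \ {u} := by
                  refine Finset.mem_sdiff.mpr ⟨Finset.mem_sdiff.mpr ⟨hxS, hxsm⟩, ?_⟩
                  rw [Finset.mem_singleton]
                  exact hxne_u
                rw [Finset.card_sdiff_of_subset (Finset.singleton_subset_iff.mpr hxsm'),
                  Finset.card_sdiff_of_subset (Finset.singleton_subset_iff.mpr husm'), hSPcard, hP5']
                simp only [Finset.card_singleton]
                omega
              have := Finset.card_le_card hbig_inter
              have := hw3x u hu b x hxK b2
              omega
          · exact h2
        -- now all smalls are 2-parts: derive that all b-colors agree, then x1 has a big class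
        -- c x1 w is the same for all smalls
        have hx1col : ∀ w ∈ S, w ∉ gp.pt x1 → c x1 w = c x1 usm := by
          intro w hwS hwP
          obtain ⟨aw, bw, horw, hcaw, hWaw, hWbw⟩ := hufacts w hwS hwP
          obtain ⟨au, bu, horu, hcau, hWau, hWbu⟩ := hufacts usm husmS husmP
          -- b-colors of two smalls in different parts agree
          have hbagree : ∀ v1 ∈ S, v1 ∉ gp.pt x1 → ∀ v2 ∈ S, v2 ∉ gp.pt x1 → v2 ∉ gp.pt v1 →
              ∀ a1 b1 a2 b2 : ℕ,
              ((a1 = gp.γ ∧ b1 = gp.δ) ∨ (a1 = gp.δ ∧ b1 = gp.γ)) → c v1 x1 = a1 →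
              gp.W v1 b1 = (S \ gp.pt x1) \ gp.pt v1 →
              ((a2 = gp.γ ∧ b2 = gp.δ) ∨ (a2 = gp.δ ∧ b2 = gp.γ)) → c v2 x1 = a2 →
              gp.W v2 b2 = (S \ gp.pt x1) \ gp.pt v2 →
              b1 = b2 := by
            intro v1 hv1 hv1P v2 hv2 hv2P hnp a1 b1 a2 b2 hor1 hc1 hW1 hor2 hc2 hW2
            have hv1np2 : v1 ∉ gp.pt v2 := gp.pt_flip hv1 hv2 hnp
            have h12 : v2 ∈ gp.W v1 b1 := by
              rw [hW1]
              exact Finset.mem_sdiff.mpr ⟨Finset.mem_sdiff.mpr ⟨hv2, hv2P⟩, hnp⟩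
            have h21 : v1 ∈ gp.W v2 b2 := by
              rw [hW2]
              exact Finset.mem_sdiff.mpr ⟨Finset.mem_sdiff.mpr ⟨hv1, hv1P⟩, hv1np2⟩
            have e1 : c v1 v2 = b1 := (gp.mem_W.mp h12).2.2
            have e2 : c v2 v1 = b2 := (gp.mem_W.mp h21).2.2
            rw [← e1, ← e2, hsym v1 v2]
          -- conclude aw = au by comparing both to a common "outside" small if needed
          by_cases hwu : w ∉ gp.pt usm
          · have hb : bw = bu := hbagree w hwS hwP usm husmS husmP
              (gp.pt_flip husmS hwS hwu) aw bw au bu horw hcaw hWbw horu hcau hWbu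
            rw [hsym x1 w, hsym x1 usm, hcaw, hcau]
            rcases horw with ⟨h1, h2⟩ | ⟨h1, h2⟩ <;> rcases horu with ⟨h3, h4⟩ | ⟨h3, h4⟩ <;>
              rw [h1, h3] <;> omega
          · push_neg at hwu
            -- w ∈ pt usm: find v outside both parts
            have hcards : 0 < (((S \ gp.pt x1) \ gp.pt usm)).card := by
              rw [hcardsm usm husmS husmP, hP5', hsm2 usm husmS husmP]
              omega
            obtain ⟨v, hv⟩ := Finset.card_pos.mp hcards
            obtain ⟨hv1, hv2⟩ := Finset.mem_sdiff.mp hv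
            obtain ⟨hvS, hvP⟩ := Finset.mem_sdiff.mp hv1
            obtain ⟨av, bv, horv, hcav, hWav, hWbv⟩ := hufacts v hvS hvP
            have hvnw : v ∉ gp.pt w := by
              rw [gp.pt_eq usm husmS w hwu]
              exact hv2
            have hb1 : bw = bv := hbagree w hwS hwP v hvS hvP hvnw aw bw av bv
              horw hcaw hWbw horv hcav hWbv
            have hb2 : bu = bv := hbagree usm husmS husmP v hvS hvP hv2 au bu av bv
              horu hcau hWbu horv hcav hWbv
            rw [hsym x1 w, hsym x1 usm, hcaw, hcau]
            rcases horw with ⟨h1, h2⟩ | ⟨h1, h2⟩ <;> rcases horu with ⟨h3, h4⟩ | ⟨h3, h4⟩ <;>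
              rcases horv with ⟨h5, h6⟩ | ⟨h5, h6⟩ <;> rw [h1, h3] <;> omega
        -- x1's class of color (c x1 usm) contains all smalls
        have hsub : S \ gp.pt x1 ⊆ gp.W x1 (c x1 usm) := by
          intro w hw
          obtain ⟨hwS, hwP⟩ := Finset.mem_sdiff.mp hw
          exact gp.mem_W.mpr ⟨hwS, hwP, hx1col w hwS hwP⟩
        have := Finset.card_le_card hsub
        rw [hSPcard, hP5'] at this
        have := hWbig x1 hx1S (c x1 usm)
        omega
    · -- no big part: all parts have ≤ 2 elements
      push_neg at hbigex
      have hle2 : ∀ u ∈ S, (gp.pt u).card ≤ 2 := by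
        intro u hu
        have := hbigex u hu
        omega
      -- step 1: there is a singleton part
      have hex1 : ∃ u ∈ S, (gp.pt u).card = 1 := by
        by_contra h
        push_neg at h
        have hall2 : ∀ u ∈ S, (gp.pt u).card = 2 := by
          intro u hu
          have h1 : 0 < (gp.pt u).card := Finset.card_pos.mpr ⟨u, gp.mem_pt u hu⟩
          have h2 := hle2 u hu
          have h3 := h u hu
          omega
        have hcov := gp.cover_eq hne hu0
        have hwg := hWbig u0 hu0 gp.γ
        have hwd := hWbig u0 hu0 gp.δ
        have h20 := hall2 u0 hu0
        have h5 : (gp.W u0 gp.γ).card = 5 ∨ (gp.W u0 gp.δ).card = 5 := by omega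
        have hcon : ∀ m, (gp.W u0 m).card = 5 → False := by
          intro m hK5
          obtain ⟨x, hxK⟩ := Finset.card_pos.mp (show 0 < (gp.W u0 m).card by omega)
          obtain ⟨m', z, hz⟩ := hpiece u0 hu0 m hK5 x hxK (hall2 x (gp.W_sub hxK))
          have hzmem : z ∈ gp.W x m' ∩ gp.W u0 m := by
            rw [hz]; exact Finset.mem_singleton_self z
          have hzK : z ∈ gp.W u0 m := (Finset.mem_inter.mp hzmem).2
          have hsubz : gp.pt z ⊆ {z} := by
            rw [← hz]
            intro w hw
            exact Finset.mem_inter.mpr ⟨gp.W_closed (gp.W_sub hxK) (Finset.mem_inter.mp hzmem).1 hw,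
              gp.W_closed hu0 hzK hw⟩
          have := Finset.card_le_card hsubz
          rw [Finset.card_singleton] at this
          have := hall2 z (gp.W_sub hzK)
          omega
        rcases h5 with h5 | h5
        · exact hcon gp.γ h5
        · exact hcon gp.δ h5
      obtain ⟨u1, hu1S, hpu1⟩ := hex1
      have hptu1 : gp.pt u1 = {u1} := by
        obtain ⟨a, ha⟩ := Finset.card_eq_one.mp hpu1
        have := gp.mem_pt u1 hu1S
        rw [ha] at this
        rw [Finset.mem_singleton] at this
        rw [ha, this]
      have hcov1 := gp.cover_eq hne hu1S
      have hK1g : (gp.W u1 gp.γ).card = 5 := by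
        have := hWbig u1 hu1S gp.γ
        have := hWbig u1 hu1S gp.δ
        omega
      have hK1d : (gp.W u1 gp.δ).card = 5 := by
        have := hWbig u1 hu1S gp.γ
        have := hWbig u1 hu1S gp.δ
        omega
      -- all parts are singletons
      have hallone : ∀ w ∈ S, gp.pt w = {w} := by
        intro w hwS
        have hge : 0 < (gp.pt w).card := Finset.card_pos.mpr ⟨w, gp.mem_pt w hwS⟩
        have hle := hle2 w hwS
        rcases (show (gp.pt w).card = 1 ∨ (gp.pt w).card = 2 by omega) with h1 | h2
        · obtain ⟨a, ha⟩ := Finset.card_eq_one.mp h1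
          have := gp.mem_pt w hwS
          rw [ha] at this
          rw [Finset.mem_singleton] at this
          rw [ha, this]
        · exfalso
          have hwne : w ∉ gp.pt u1 := by
            rw [hptu1, Finset.mem_singleton]
            intro h
            rw [h] at h2
            omega
          rcases gp.colors u1 hu1S w hwS hwne with h | h
          · exact hCstar u1 hu1S gp.γ hK1g (fun w' hw' => hle2 w' (gp.W_sub hw'))
              w (gp.mem_W.mpr ⟨hwS, hwne, h⟩) h2
          · exact hCstar u1 hu1S gp.δ hK1d (fun w' hw' => hle2 w' (gp.W_sub hw'))
              w (gp.mem_W.mpr ⟨hwS, hwne, h⟩) h2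
      -- parity contradiction: the γ-graph on S is 5-regular on 11 vertices
      classical
      let G : SimpleGraph V := {
        Adj := fun x y => x ≠ y ∧ x ∈ S ∧ y ∈ S ∧ c x y = gp.γ
        symm := ⟨by
          rintro x y ⟨h1, h2, h3, h4⟩
          exact ⟨h1.symm, h3, h2, by rw [hsym y x]; exact h4⟩⟩
        loopless := ⟨fun x h => h.1 rfl⟩ }
      letI : DecidableRel G.Adj := Classical.decRel _
      have hnbr : ∀ v ∈ S, G.neighborFinset v = gp.W v gp.γ := by
        intro v hvS
        ext w
        rw [SimpleGraph.mem_neighborFinset, gp.mem_W]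
        constructor
        · rintro ⟨h1, h2, h3, h4⟩
          refine ⟨h3, ?_, h4⟩
          rw [hallone v hvS, Finset.mem_singleton]
          exact fun h => h1 h.symm
        · rintro ⟨h1, h2, h3⟩
          refine ⟨?_, hvS, h1, h3⟩
          intro h
          rw [hallone v hvS, Finset.mem_singleton] at h2
          exact h2 h.symm
      have hdeg : ∀ v ∈ S, G.degree v = 5 := by
        intro v hvS
        rw [SimpleGraph.degree, hnbr v hvS]
        have hcv := gp.cover_eq hne hvS
        have hp1 : (gp.pt v).card = 1 := by rw [hallone v hvS]; exact Finset.card_singleton v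
        have := hWbig v hvS gp.γ
        have := hWbig v hvS gp.δ
        omega
      have hdeg0 : ∀ v, v ∉ S → G.degree v = 0 := by
        intro v hv
        rw [SimpleGraph.degree, Finset.card_eq_zero]
        ext w
        simp only [SimpleGraph.mem_neighborFinset, Finset.notMem_empty, iff_false]
        rintro ⟨h1, h2, h3, h4⟩
        exact hv h2
      have hsum : ∑ v, G.degree v = 55 := by
        rw [← Finset.sum_subset (Finset.subset_univ S) (fun x _ hx => hdeg0 x hx)]
        rw [Finset.sum_congr rfl (fun x hx => hdeg x hx), Finset.sum_const, hs11]
        rfl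
      have := SimpleGraph.sum_degrees_eq_twice_card_edges G
      rw [hsum] at this
      omega


theorem chain_six {c : V → V → ℕ} {S : Finset V} [Fintype V] (hsym : SymC c) (hG : GallaiOn c S)
    (h26 : 26 ≤ S.card) : Chain c S 6 := by
  obtain ⟨gp⟩ := exists_GP hsym hG (by omega)
  obtain ⟨u0, hu0⟩ := Finset.card_pos.mp (show 0 < S.card by omega)
  by_cases hbig : ∃ u ∈ S, 11 ≤ (gp.pt u).card
  · obtain ⟨u, hu, hcard⟩ := hbig
    obtain ⟨w, hw, hwpt⟩ := gp.exists_outside hu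
    exact gp.win_part hsym hu hw hwpt
      (chain_five hsym (hG.mono (gp.pt_sub u hu)) hcard)
  push_neg at hbig
  by_cases hWbig : ∃ u ∈ S, ∃ m, 11 ≤ (gp.W u m).card
  · obtain ⟨u, hu, m, hcard⟩ := hWbig
    exact gp.win_class hu (chain_five hsym (hG.mono gp.W_sub) hcard)
  push_neg at hWbig
  exfalso
  have hne : gp.γ ≠ gp.δ := by
    intro h
    have hsub : S ⊆ gp.pt u0 ∪ gp.W u0 gp.γ := by
      intro w hw
      by_cases hpt : w ∈ gp.pt u0
      · exact Finset.mem_union_left _ hpt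
      · rcases gp.colors u0 hu0 w hw hpt with h' | h'
        · exact Finset.mem_union_right _ (gp.mem_W.mpr ⟨hw, hpt, h'⟩)
        · exact Finset.mem_union_right _ (gp.mem_W.mpr ⟨hw, hpt, h ▸ h'⟩)
    have := Finset.card_le_card hsub
    have h2 := Finset.card_union_le (gp.pt u0) (gp.W u0 gp.γ)
    have h3 := hbig u0 hu0
    have h4 := hWbig u0 hu0 gp.γ
    omega
  -- every part has ≥ 6 elements
  have hptbig : ∀ u ∈ S, 6 ≤ (gp.pt u).card := by
    intro u hu
    have hc := gp.cover_eq hne hu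
    have h2 := hWbig u hu gp.γ
    have h3 := hWbig u hu gp.δ
    omega
  -- every class is a single part
  have hsingle : ∀ u ∈ S, ∀ m, ∀ x ∈ gp.W u m, ∀ y ∈ gp.W u m, y ∈ gp.pt x := by
    intro u hu m x hx y hy
    by_contra hnot
    have hxS : x ∈ S := gp.W_sub hx
    have hyS : y ∈ S := gp.W_sub hy
    have h1 : gp.pt x ⊆ gp.W u m := gp.W_closed hu hx
    have h2 : gp.pt y ⊆ gp.W u m := gp.W_closed hu hy
    have hdisj : Disjoint (gp.pt x) (gp.pt y) := by
      rw [Finset.disjoint_left]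
      intro a ha
      exact gp.pt_disj hxS hyS hnot ha
    have hsub : gp.pt x ∪ gp.pt y ⊆ gp.W u m := Finset.union_subset h1 h2
    have := Finset.card_le_card hsub
    rw [Finset.card_union_of_disjoint hdisj] at this
    have h3 := hptbig x hxS
    have h4 := hptbig y hyS
    have h5 := hWbig u hu m
    omega
  -- B, C nonempty
  have hc0 := gp.cover_eq hne hu0
  have hBpos : 0 < (gp.W u0 gp.γ).card := by
    have := hWbig u0 hu0 gp.δ
    have := hbig u0 hu0
    omega
  have hCpos : 0 < (gp.W u0 gp.δ).card := by
    have := hWbig u0 hu0 gp.γ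
    have := hbig u0 hu0
    omega
  obtain ⟨u2, hu2B⟩ := Finset.card_pos.mp hBpos
  obtain ⟨u3, hu3C⟩ := Finset.card_pos.mp hCpos
  have hu2S : u2 ∈ S := gp.W_sub hu2B
  have hu3S : u3 ∈ S := gp.W_sub hu3C
  obtain ⟨_, hu2pt, hcu2⟩ := gp.mem_W.mp hu2B
  obtain ⟨_, hu3pt, hcu3⟩ := gp.mem_W.mp hu3C
  -- pt u2 = W u0 γ
  have hptu2 : gp.pt u2 = gp.W u0 gp.γ := by
    apply Finset.Subset.antisymm (gp.W_closed hu0 hu2B)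
    intro y hy
    exact hsingle u0 hu0 gp.γ u2 hu2B y hy
  have hptu3 : gp.pt u3 = gp.W u0 gp.δ := by
    apply Finset.Subset.antisymm (gp.W_closed hu0 hu3C)
    intro y hy
    exact hsingle u0 hu0 gp.δ u3 hu3C y hy
  -- A ⊆ W u2 γ
  have hAW2 : gp.pt u0 ⊆ gp.W u2 gp.γ := by
    intro a ha
    have haS : a ∈ S := gp.pt_sub u0 hu0 ha
    refine gp.mem_W.mpr ⟨haS, ?_, ?_⟩
    · rw [hptu2]
      intro h
      exact (gp.mem_W.mp h).2.1 ha
    · rw [hsym u2 a]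
      rw [gp.mono u0 hu0 u2 hu2S hu2pt a ha u2 (gp.mem_pt u2 hu2S)]
      exact hcu2
  -- W u2 γ ⊆ A
  have hu0W2 : u0 ∈ gp.W u2 gp.γ := hAW2 (gp.mem_pt u0 hu0)
  have hAW2' : gp.pt u0 = gp.W u2 gp.γ := by
    apply Finset.Subset.antisymm hAW2
    intro y hy
    exact hsingle u2 hu2S gp.γ u0 hu0W2 y hy
  have hcu2u3 : c u2 u3 = gp.δ := by
    have hu3ptu2 : u3 ∉ gp.pt u2 := by
      rw [hptu2]
      intro h
      have := (gp.mem_W.mp h).2.2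
      rw [hcu3] at this
      exact hne this.symm
    rcases gp.colors u2 hu2S u3 hu3S hu3ptu2 with h | h
    · exfalso
      have : u3 ∈ gp.W u2 gp.γ := gp.mem_W.mpr ⟨hu3S, hu3ptu2, h⟩
      rw [← hAW2'] at this
      exact (gp.mem_W.mp hu3C).2.1 this
    · exact h
  have hsubW3 : gp.pt u0 ∪ gp.W u0 gp.γ ⊆ gp.W u3 gp.δ := by
    intro a ha
    have haS : a ∈ S := by
      rcases Finset.mem_union.mp ha with h | h
      · exact gp.pt_sub u0 hu0 h
      · exact gp.W_sub h
    have haptu3 : a ∉ gp.pt u3 := by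
      rw [hptu3]
      rcases Finset.mem_union.mp ha with h | h
      · intro h'
        exact (gp.mem_W.mp h').2.1 h
      · intro h'
        have h1 := (gp.mem_W.mp h).2.2
        have h2 := (gp.mem_W.mp h').2.2
        rw [h1] at h2
        exact hne h2
    refine gp.mem_W.mpr ⟨haS, haptu3, ?_⟩
    rcases Finset.mem_union.mp ha with h | h
    · rw [hsym u3 a, gp.mono u0 hu0 u3 hu3S hu3pt a h u3 (gp.mem_pt u3 hu3S)]
      exact hcu3
    · have hu3ptu2 : u3 ∉ gp.pt u2 := by
        rw [hptu2]
        intro h'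
        have := (gp.mem_W.mp h').2.2
        rw [hcu3] at this
        exact hne this.symm
      rw [hsym u3 a, gp.mono u2 hu2S u3 hu3S hu3ptu2 a (hptu2 ▸ h) u3 (gp.mem_pt u3 hu3S)]
      exact hcu2u3
  have hdisjAB : Disjoint (gp.pt u0) (gp.W u0 gp.γ) := by
    rw [Finset.disjoint_left]
    intro a ha ha'
    exact (gp.mem_W.mp ha').2.1 ha
  have hcard12 : 12 ≤ (gp.W u3 gp.δ).card := by
    have := Finset.card_le_card hsubW3
    rw [Finset.card_union_of_disjoint hdisjAB] at this
    have h1 := hptbig u0 hu0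
    have h2 : 6 ≤ (gp.W u0 gp.γ).card := by
      rw [← hptu2]
      exact hptbig u2 hu2S
    omega
  have := hWbig u3 hu3S gp.δ
  omega

/-! ### Lower bound construction: 25 = 5 × 5 iterated pentagon -/

def pentN (a b : ℕ) : ℕ := if (a + 5 - b) % 5 = 1 ∨ (a + 5 - b) % 5 = 4 then 0 else 1

def colN (x y : ℕ) : ℕ :=
  if x / 5 = y / 5 then 2 + 2 * (x / 5) + pentN (x % 5) (y % 5) else pentN (x / 5) (y / 5)

lemma pentN_le_one (a b : ℕ) : pentN a b ≤ 1 := by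
  unfold pentN
  split <;> omega

lemma colN_symm : ∀ x y : Fin 25, colN x.val y.val = colN y.val x.val := by decide

lemma pentN_symm : ∀ a b : Fin 5, pentN a.val b.val = pentN b.val a.val := by decide

/-- no three distinct pentagon neighbours of b in one pentagon color -/
lemma pent_class : ∀ b x y z : Fin 5, b ≠ x → b ≠ y → b ≠ z → x ≠ y → x ≠ z → y ≠ z →
    pentN b.val x.val = pentN b.val y.val → pentN b.val x.val = pentN b.val z.val → False := by
  decide

lemma colN_cross : ∀ x y : Fin 25, x.val / 5 ≠ y.val / 5 →
    colN x.val y.val = pentN (x.val / 5) (y.val / 5) := by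
  intro x y h
  unfold colN
  rw [if_neg h]

lemma colN_cross_le : ∀ x y : Fin 25, x.val / 5 ≠ y.val / 5 → colN x.val y.val ≤ 1 := by
  intro x y h
  rw [colN_cross x y h]
  exact pentN_le_one _ _

lemma colN_inner : ∀ x y : Fin 25, x.val / 5 = y.val / 5 →
    colN x.val y.val = 2 + 2 * (x.val / 5) + pentN (x.val % 5) (y.val % 5) := by
  intro x y h
  unfold colN
  rw [if_pos h]

lemma colN_inner_ge : ∀ x y : Fin 25, x.val / 5 = y.val / 5 → 2 ≤ colN x.val y.val := by
  intro x y h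
  rw [colN_inner x y h]
  omega

lemma fin25_eq_of (x y : Fin 25) (h1 : x.val / 5 = y.val / 5) (h2 : x.val % 5 = y.val % 5) :
    x = y := by
  apply Fin.ext
  omega

/-- no vertex is monochromatic to three others in its own block -/
lemma same_block_mono (v a b d : Fin 25)
    (hva : v.val / 5 = a.val / 5) (hvb : v.val / 5 = b.val / 5) (hvd : v.val / 5 = d.val / 5)
    (h1 : v ≠ a) (h2 : v ≠ b) (h3 : v ≠ d) (h4 : a ≠ b) (h5 : a ≠ d) (h6 : b ≠ d)
    (e1 : colN v.val a.val = colN v.val b.val) (e2 : colN v.val a.val = colN v.val d.val) :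
    False := by
  rw [colN_inner v a hva, colN_inner v b hvb] at e1
  rw [colN_inner v a hva, colN_inner v d hvd] at e2
  have p1 : pentN (v.val % 5) (a.val % 5) = pentN (v.val % 5) (b.val % 5) := by omega
  have p2 : pentN (v.val % 5) (a.val % 5) = pentN (v.val % 5) (d.val % 5) := by omega
  have hv5 := v.isLt
  have ha5 := a.isLt
  have hb5 := b.isLt
  have hd5 := d.isLt
  refine pent_class ⟨v.val % 5, by omega⟩ ⟨a.val % 5, by omega⟩ ⟨b.val % 5, by omega⟩
    ⟨d.val % 5, by omega⟩ ?_ ?_ ?_ ?_ ?_ ?_ p1 p2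
  · intro h; exact h1 (fin25_eq_of v a hva (by simpa using congrArg Fin.val h))
  · intro h; exact h2 (fin25_eq_of v b hvb (by simpa using congrArg Fin.val h))
  · intro h; exact h3 (fin25_eq_of v d hvd (by simpa using congrArg Fin.val h))
  · intro h; exact h4 (fin25_eq_of a b (by omega) (by simpa using congrArg Fin.val h))
  · intro h; exact h5 (fin25_eq_of a d (by omega) (by simpa using congrArg Fin.val h))
  · intro h; exact h6 (fin25_eq_of b d (by omega) (by simpa using congrArg Fin.val h))

def χlow : Sym2 (Fin 25) → ℕ :=
  Sym2.lift ⟨fun x y => colN x.val y.val, colN_symm⟩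

lemma χlow_eq (a b : Fin 25) : χlow s(a, b) = colN a.val b.val := rfl

/-- every triangle has two edges of the same color -/
lemma χlow_gallai (x y z : Fin 25) (hxy : x ≠ y) (hxz : x ≠ z) (hyz : y ≠ z) :
    colN x.val y.val = colN x.val z.val ∨ colN x.val y.val = colN y.val z.val ∨
      colN x.val z.val = colN y.val z.val := by
  by_cases bxy : x.val / 5 = y.val / 5 <;> by_cases bxz : x.val / 5 = z.val / 5
  · -- all same block
    have byz : y.val / 5 = z.val / 5 := by omega
    have e1 := colN_inner x y bxy
    have e2 := colN_inner x z bxz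
    have e3 := colN_inner y z byz
    have q1 := pentN_le_one (x.val % 5) (y.val % 5)
    have q2 := pentN_le_one (x.val % 5) (z.val % 5)
    have q3 := pentN_le_one (y.val % 5) (z.val % 5)
    rw [← bxy] at e3
    omega
  · -- x,y same block, z different
    have byz : y.val / 5 ≠ z.val / 5 := by omega
    right; right
    rw [colN_cross x z bxz, colN_cross y z byz, ← bxy]
  · -- x,z same block, y different
    have byz : y.val / 5 ≠ z.val / 5 := by omega
    right; left
    rw [colN_cross x y bxy, colN_cross y z byz]
    have hx5 := x.isLt
    have hy5 := y.isLt
    have := pentN_symm ⟨x.val / 5, by omega⟩ ⟨y.val / 5, by omega⟩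
    simp only at this
    rw [this, ← bxz]
  · by_cases byz : y.val / 5 = z.val / 5
    · left
      rw [colN_cross x y bxy, colN_cross x z bxz, ← byz]
    · have q1 := colN_cross_le x y bxy
      have q2 := colN_cross_le x z bxz
      have q3 := colN_cross_le y z byz
      omega

theorem lower_no_rainbow : ¬ HasRainbowClique 3 25 χlow := by
  rintro ⟨f, hinj, h⟩
  have h01 : f 0 ≠ f 1 := fun h => absurd (hinj h) (by decide)
  have h02 : f 0 ≠ f 2 := fun h => absurd (hinj h) (by decide)
  have h12 : f 1 ≠ f 2 := fun h => absurd (hinj h) (by decide)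
  rcases χlow_gallai (f 0) (f 1) (f 2) h01 h02 h12 with he | he | he
  · have := h 0 1 0 2 (by decide) (by decide) (by rw [χlow_eq, χlow_eq]; exact he)
    exact absurd this.2 (by decide)
  · have := h 0 1 1 2 (by decide) (by decide) (by rw [χlow_eq, χlow_eq]; exact he)
    exact absurd this.1 (by decide)
  · have := h 0 2 1 2 (by decide) (by decide) (by rw [χlow_eq, χlow_eq]; exact he)
    exact absurd this.1 (by decide)

theorem lower_no_orderable : ¬ HasOrderableClique 6 25 χlow := by
  rintro ⟨f, hinj, π, hπ⟩
  set g : Fin 6 → Fin 25 := fun i => f (π.symm i) with hg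
  have hginj : Function.Injective g := fun i j h => by
    have := hinj h
    exact π.symm.injective this
  have hchain : ∀ a b b' : Fin 6, a < b → a < b' →
      colN (g a).val (g b).val = colN (g a).val (g b').val := by
    intro a b b' hab hab'
    have h1 : π.symm a ≠ π.symm b := fun h => absurd (π.symm.injective h) (Fin.ne_of_lt hab)
    have h2 : π.symm a ≠ π.symm b' := fun h => absurd (π.symm.injective h) (Fin.ne_of_lt hab')
    have := hπ (π.symm a) (π.symm b) (π.symm b') h1 h2
      (by rw [Equiv.apply_symm_apply, Equiv.apply_symm_apply]; exact hab)
      (by rw [Equiv.apply_symm_apply, Equiv.apply_symm_apply]; exact hab')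
    exact this
  have hgne : ∀ i j : Fin 6, i ≠ j → g i ≠ g j := fun i j hij h => hij (hginj h)
  -- step 1
  by_cases hb01 : (g 0).val / 5 = (g 1).val / 5
  · -- all six in one block: pigeonhole
    have hmu : 2 ≤ colN (g 0).val (g 1).val := colN_inner_ge _ _ hb01
    have hall : ∀ j : Fin 6, (g j).val / 5 = (g 0).val / 5 := by
      intro j
      rcases eq_or_ne j 0 with rfl | hj0
      · rfl
      · have hlt : (0 : Fin 6) < j := Fin.pos_of_ne_zero hj0
        have he := hchain 0 1 j (by decide) hlt
        by_contra hblk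
        have := colN_cross_le (g 0) (g j) (fun h => hblk h.symm)
        omega
    have hF : Function.Injective (fun j : Fin 6 => (⟨(g j).val % 5, Nat.mod_lt _ (by norm_num)⟩ : Fin 5)) := by
      intro i j h
      simp only [Fin.mk.injEq] at h
      have : g i = g j := fin25_eq_of _ _ (by rw [hall i, hall j]) h
      exact hginj this
    have := Fintype.card_le_of_injective _ hF
    simp at this
  · -- step 1 cross: μ = pentN b0 bj for all j ≥ 1
    have hmu_le : colN (g 0).val (g 1).val ≤ 1 := colN_cross_le _ _ hb01
    have hblk : ∀ j : Fin 6, 0 < j → (g j).val / 5 ≠ (g 0).val / 5 ∧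
        pentN ((g 0).val / 5) ((g j).val / 5) = colN (g 0).val (g 1).val := by
      intro j hj
      have he := hchain 0 1 j (by decide) hj
      have hcr : (g 0).val / 5 ≠ (g j).val / 5 := by
        intro h
        have := colN_inner_ge (g 0) (g j) h
        omega
      refine ⟨fun h => hcr h.symm, ?_⟩
      rw [← colN_cross (g 0) (g j) hcr]
      exact he.symm
    -- step 2
    by_cases hb12 : (g 1).val / 5 = (g 2).val / 5
    · -- g2..g5 all in block of g1
      have hnu : 2 ≤ colN (g 1).val (g 2).val := colN_inner_ge _ _ hb12
      have hall : ∀ j : Fin 6, 1 < j → (g j).val / 5 = (g 1).val / 5 := by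
        intro j hj
        have he := hchain 1 2 j (by decide) hj
        by_contra hblk'
        have := colN_cross_le (g 1) (g j) (fun h => hblk' h.symm)
        omega
      -- g2 mono to g3 g4 g5, all in the block of g2
      have e1 := hchain 2 3 4 (by decide) (by decide)
      have e2 := hchain 2 3 5 (by decide) (by decide)
      exact same_block_mono (g 2) (g 3) (g 4) (g 5)
        (by rw [hall 2 (by decide), hall 3 (by decide)])
        (by rw [hall 2 (by decide), hall 4 (by decide)])
        (by rw [hall 2 (by decide), hall 5 (by decide)])
        (hgne 2 3 (by decide)) (hgne 2 4 (by decide)) (hgne 2 5 (by decide))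
        (hgne 3 4 (by decide)) (hgne 3 5 (by decide)) (hgne 4 5 (by decide)) e1 e2
    · -- all of g2..g5 avoid blocks of g0 and g1, and pent-see b0 in color μ
      have hnu_le : colN (g 1).val (g 2).val ≤ 1 := colN_cross_le _ _ hb12
      have hblk1 : ∀ j : Fin 6, 1 < j → (g j).val / 5 ≠ (g 1).val / 5 := by
        intro j hj
        have he := hchain 1 2 j (by decide) hj
        intro h
        have := colN_inner_ge (g 1) (g j) h.symm
        omega
      -- blocks of g2..g5 are pairwise equal
      have hbeq : ∀ j k : Fin 6, 1 < j → 1 < k → (g j).val / 5 = (g k).val / 5 := by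
        intro j k hj hk
        by_contra hne'
        have hj0 := hblk 1 (by decide)
        have hjj := hblk j (by omega)
        have hkk := hblk k (by omega)
        have h05 := (g 0).isLt
        have h15 := (g 1).isLt
        have hj5 := (g j).isLt
        have hk5 := (g k).isLt
        refine pent_class ⟨(g 0).val / 5, by omega⟩ ⟨(g 1).val / 5, by omega⟩
          ⟨(g j).val / 5, by omega⟩ ⟨(g k).val / 5, by omega⟩ ?_ ?_ ?_ ?_ ?_ ?_ ?_ ?_
        · intro h
          simp only [Fin.mk.injEq] at h
          exact hj0.1 h.symm
        · intro h
          simp only [Fin.mk.injEq] at h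
          exact hjj.1 h.symm
        · intro h
          simp only [Fin.mk.injEq] at h
          exact hkk.1 h.symm
        · intro h
          simp only [Fin.mk.injEq] at h
          exact hblk1 j (by omega) h.symm
        · intro h
          simp only [Fin.mk.injEq] at h
          exact hblk1 k (by omega) h.symm
        · intro h
          simp only [Fin.mk.injEq] at h
          exact hne' h
        · simp only
          rw [hj0.2, hjj.2]
        · simp only
          rw [hj0.2, hkk.2]
      have e1 := hchain 2 3 4 (by decide) (by decide)
      have e2 := hchain 2 3 5 (by decide) (by decide)
      exact same_block_mono (g 2) (g 3) (g 4) (g 5)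
        (hbeq 2 3 (by decide) (by decide)) (hbeq 2 4 (by decide) (by decide))
        (hbeq 2 5 (by decide) (by decide))
        (hgne 2 3 (by decide)) (hgne 2 4 (by decide)) (hgne 2 5 (by decide))
        (hgne 3 4 (by decide)) (hgne 3 5 (by decide)) (hgne 4 5 (by decide)) e1 e2

/-! ### Upper bound glue -/

theorem upper (χ : Sym2 (Fin 26) → ℕ) :
    HasOrderableClique 6 26 χ ∨ HasRainbowClique 3 26 χ := by
  by_cases hr : HasRainbowClique 3 26 χ
  · exact Or.inr hr
  left
  have hsym : SymC (fun x y : Fin 26 => χ s(x, y)) := by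
    intro x y
    show χ s(x, y) = χ s(y, x)
    rw [Sym2.eq_swap]
  have hG : GallaiOn (fun x y : Fin 26 => χ s(x, y)) (Finset.univ : Finset (Fin 26)) := by
    intro x _ y _ z _ hxy hxz hyz
    by_contra hcon
    push_neg at hcon
    obtain ⟨h1, h2, h3⟩ := hcon
    apply hr
    refine ⟨fun i => if i.val = 0 then x else if i.val = 1 then y else z, ?_, ?_⟩
    · intro i j hij
      have hi := i.isLt
      have hj := j.isLt
      apply Fin.ext
      rcases (show i.val = 0 ∨ i.val = 1 ∨ i.val = 2 by omega) with h | h | h <;>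
        rcases (show j.val = 0 ∨ j.val = 1 ∨ j.val = 2 by omega) with h' | h' | h' <;>
        simp only [h, h', reduceIte] at hij <;>
        first
        | omega
        | exact absurd hij hxy
        | exact absurd hij hxz
        | exact absurd hij hyz
        | exact absurd hij.symm hxy
        | exact absurd hij.symm hxz
        | exact absurd hij.symm hyz
    · intro i j k l hij hkl heq
      rw [Fin.lt_def] at hij hkl
      have hi := i.isLt
      have hj := j.isLt
      have hk := k.isLt
      have hl := l.isLt
      rcases (show (i.val = 0 ∧ j.val = 1) ∨ (i.val = 0 ∧ j.val = 2) ∨ (i.val = 1 ∧ j.val = 2)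
          by omega) with ⟨ha, hb⟩ | ⟨ha, hb⟩ | ⟨ha, hb⟩ <;>
        rcases (show (k.val = 0 ∧ l.val = 1) ∨ (k.val = 0 ∧ l.val = 2) ∨ (k.val = 1 ∧ l.val = 2)
          by omega) with ⟨hc, hd⟩ | ⟨hc, hd⟩ | ⟨hc, hd⟩ <;>
        simp only [ha, hb, hc, hd, reduceIte] at heq <;>
        first
        | exact ⟨Fin.ext (by omega), Fin.ext (by omega)⟩
        | exact absurd heq h1
        | exact absurd heq h2
        | exact absurd heq h3
        | exact absurd heq.symm h1
        | exact absurd heq.symm h2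
        | exact absurd heq.symm h3
  have hch : Chain (fun x y : Fin 26 => χ s(x, y)) Finset.univ 6 := chain_six hsym hG (by simp)
  obtain ⟨f, hf, hinj, hmono⟩ := hch
  exact ⟨f, hinj, ⟨Equiv.refl _, fun i j k _ _ hij hik => hmono i j k hij hik⟩⟩

end CR63

/-- CR(6,3) = 26. -/
theorem CR_6_3 :
    (∀ χ : Sym2 (Fin 26) → ℕ, HasOrderableClique 6 26 χ ∨ HasRainbowClique 3 26 χ) ∧
    (∃ χ : Sym2 (Fin 25) → ℕ,
      ¬ HasOrderableClique 6 25 χ ∧ ¬ HasRainbowClique 3 25 χ) := by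
  exact ⟨CR63.upper, CR63.χlow, CR63.lower_no_orderable, CR63.lower_no_rainbow⟩
end

section
/- CR(3,4) = 7. That is: every edge-coloring of the complete graph K_7 (with arbitrarily many colors) contains an orderable copy of K_3 or a rainbow copy of K_4, and there exists an edge-coloring of K_6 containing neither an orderable K_3 nor a rainbow K_4. -/
set_option maxRecDepth 10000
set_option maxHeartbeats 1000000

open Finset

/-! ### Auxiliary lemmas for the upper bound -/

/-- No orderable triangle means the coloring is proper: two edges sharing a vertex
get distinct colors. -/
lemma proper7 {χ : Sym2 (Fin 7) → ℕ} (h : ¬ HasOrderableClique 3 7 χ) :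
    ∀ a b c : Fin 7, a ≠ b → a ≠ c → b ≠ c → χ s(a,b) ≠ χ s(a,c) := by
  intro a b c hab hac hbc heq
  apply h
  refine ⟨![a,b,c], ?_, Equiv.refl _, ?_⟩
  · intro i j hij
    fin_cases i <;> fin_cases j <;> simp_all
  · intro i j k hij hik h1 h2
    simp only [Equiv.refl_apply] at h1 h2
    fin_cases i <;> fin_cases j <;> fin_cases k <;>
      simp_all [Fin.lt_def, heq, Matrix.cons_val_zero, Matrix.cons_val_one]

/-- In a proper coloring, two distinct edges with the same color are vertex-disjoint. -/
lemma same_color_cases {χ : Sym2 (Fin 7) → ℕ}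
    (P : ∀ a b c : Fin 7, a ≠ b → a ≠ c → b ≠ c → χ s(a,b) ≠ χ s(a,c))
    (a b c d : Fin 7) (hab : a ≠ b) (hcd : c ≠ d) (h : χ s(a,b) = χ s(c,d)) :
    s(a,b) = s(c,d) ∨ (a ≠ c ∧ a ≠ d ∧ b ≠ c ∧ b ≠ d) := by
  by_cases hac : a = c
  · subst hac
    by_cases hbd : b = d
    · subst hbd; exact Or.inl rfl
    · exact absurd h (P a b d hab hcd hbd)
  by_cases hbc : b = c
  · subst hbc
    by_cases had : a = d
    · subst had; exact Or.inl (by rw [Sym2.eq_iff]; tauto)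
    · rw [show s(a,b) = s(b,a) from Sym2.eq_swap] at h
      exact absurd h (P b a d (Ne.symm hab) hcd had)
  by_cases had : a = d
  · subst had
    rw [show s(c,a) = s(a,c) from Sym2.eq_swap] at h
    exact absurd h (P a b c hab hac hbc)
  by_cases hbd : b = d
  · subst hbd
    rw [show s(a,b) = s(b,a) from Sym2.eq_swap,
        show s(c,b) = s(b,c) from Sym2.eq_swap] at h
    exact absurd h (P b a c (Ne.symm hab) hbc hac)
  · exact Or.inr ⟨hac, had, hbc, hbd⟩

/-- Every 4-set of vertices contains a vertex-disjoint pair of equally colored edges. -/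
lemma quad7 {χ : Sym2 (Fin 7) → ℕ}
    (scc : ∀ (a b c d : Fin 7), a ≠ b → c ≠ d → χ s(a,b) = χ s(c,d) →
      s(a,b) = s(c,d) ∨ (a ≠ c ∧ a ≠ d ∧ b ≠ c ∧ b ≠ d))
    (hR : ¬ HasRainbowClique 4 7 χ) :
    ∀ S : Finset (Fin 7), S.card = 4 → ∃ a b c d : Fin 7,
      a ≠ b ∧ c ≠ d ∧ a ≠ c ∧ a ≠ d ∧ b ≠ c ∧ b ≠ d ∧
      S = {a, b, c, d} ∧ χ s(a,b) = χ s(c,d) := by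
  intro S hS
  set f := S.orderEmbOfFin hS with hf
  have hfinj : Function.Injective fun i => f i := f.injective
  have hnot : ¬ ∀ i j k l : Fin 4, i < j → k < l →
      χ s(f i, f j) = χ s(f k, f l) → i = k ∧ j = l := by
    intro hall; exact hR ⟨fun i => f i, hfinj, hall⟩
  push_neg at hnot
  obtain ⟨i, j, k, l, hij, hkl, hcol, hne⟩ := hnot
  have hED : s(f i, f j) ≠ s(f k, f l) := by
    intro hEq
    rw [Sym2.eq_iff] at hEq
    rcases hEq with ⟨h1, h2⟩ | ⟨h1, h2⟩
    · exact hne (f.injective h1) (f.injective h2)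
    · have e1 : i = l := f.injective h1
      have e2 : j = k := f.injective h2
      subst e1; subst e2
      exact absurd (hkl.trans hij) (lt_irrefl _)
  have hab : f i ≠ f j := fun h => absurd (f.injective h) (ne_of_lt hij)
  have hcd : f k ≠ f l := fun h => absurd (f.injective h) (ne_of_lt hkl)
  rcases scc (f i) (f j) (f k) (f l) hab hcd hcol with h | ⟨h1, h2, h3, h4⟩
  · exact absurd h hED
  refine ⟨f i, f j, f k, f l, hab, hcd, h1, h2, h3, h4, ?_, hcol⟩
  have hsub : ({f i, f j, f k, f l} : Finset (Fin 7)) ⊆ S := by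
    intro v hv
    simp only [mem_insert, mem_singleton] at hv
    rcases hv with rfl | rfl | rfl | rfl <;> exact Finset.orderEmbOfFin_mem S hS _
  have hcard : ({f i, f j, f k, f l} : Finset (Fin 7)).card = 4 := by
    rw [card_insert_of_notMem (by simp [hab, h1, h2]),
        card_insert_of_notMem (by simp [h3, h4]),
        card_insert_of_notMem (by simp [hcd]), card_singleton]
  exact (Finset.eq_of_subset_of_card_le hsub (by rw [hS, hcard])).symm

/-- Two vertex-disjoint pairs spanning the same 4-set. -/
lemma quadSetEq (a b c d a' b' c' d' : Fin 7) (S S' : Finset (Fin 7))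
    (e1 : S = {a,b,c,d}) (e2 : S' = {a',b',c',d'})
    (h : (s(a,b) = s(a',b') ∧ s(c,d) = s(c',d')) ∨
         (s(a,b) = s(c',d') ∧ s(c,d) = s(a',b'))) : S = S' := by
  have key : ∀ (x y z w v : Fin 7), s(x,y) = s(z,w) → (v = x ∨ v = y ↔ v = z ∨ v = w) := by
    intro x y z w v h
    rw [← Sym2.mem_iff (a := v), ← Sym2.mem_iff (a := v), h]
  rw [e1, e2]; ext v
  simp only [mem_insert, mem_singleton]
  rcases h with ⟨c1, c2⟩ | ⟨c1, c2⟩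
  · have k1 := key _ _ _ _ v c1
    have k2 := key _ _ _ _ v c2
    tauto
  · have k1 := key _ _ _ _ v c1
    have k2 := key _ _ _ _ v c2
    tauto

/-- Eight pairwise distinct elements cannot fit in `Fin 7`. -/
lemma eight_ne (x y a1 a2 b1 b2 c1 c2 : Fin 7)
    (h1 : x ≠ y) (h2 : a1 ≠ a2) (h3 : b1 ≠ b2) (h4 : c1 ≠ c2)
    (h5 : x ≠ a1) (h6 : x ≠ a2) (h7 : y ≠ a1) (h8 : y ≠ a2)
    (h9 : x ≠ b1) (h10 : x ≠ b2) (h11 : y ≠ b1) (h12 : y ≠ b2)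
    (h13 : x ≠ c1) (h14 : x ≠ c2) (h15 : y ≠ c1) (h16 : y ≠ c2)
    (h17 : a1 ≠ b1) (h18 : a1 ≠ b2) (h19 : a2 ≠ b1) (h20 : a2 ≠ b2)
    (h21 : a1 ≠ c1) (h22 : a1 ≠ c2) (h23 : a2 ≠ c1) (h24 : a2 ≠ c2)
    (h25 : b1 ≠ c1) (h26 : b1 ≠ c2) (h27 : b2 ≠ c1) (h28 : b2 ≠ c2) : False := by
  have hc : ({x, y, a1, a2, b1, b2, c1, c2} : Finset (Fin 7)).card = 8 := by
    rw [Finset.card_insert_of_notMem (by simp [h1, h5, h6, h9, h10, h13, h14]),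
        Finset.card_insert_of_notMem (by simp [h7, h8, h11, h12, h15, h16]),
        Finset.card_insert_of_notMem (by simp [h2, h17, h18, h21, h22]),
        Finset.card_insert_of_notMem (by simp [h19, h20, h23, h24]),
        Finset.card_insert_of_notMem (by simp [h3, h25, h26]),
        Finset.card_insert_of_notMem (by simp [h27, h28]),
        Finset.card_insert_of_notMem (by simp [h4]),
        Finset.card_singleton]
  have hle := Finset.card_le_univ ({x, y, a1, a2, b1, b2, c1, c2} : Finset (Fin 7))
  rw [hc] at hle
  simp at hle

/-- The double counting argument: 70 ≤ #(monochromatic ordered disjoint pairs) ≤ 42. -/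
lemma counting7 (χ : Sym2 (Fin 7) → ℕ)
    (scc : ∀ (a b c d : Fin 7), a ≠ b → c ≠ d → χ s(a,b) = χ s(c,d) →
      s(a,b) = s(c,d) ∨ (a ≠ c ∧ a ≠ d ∧ b ≠ c ∧ b ≠ d))
    (H : ∀ S : Finset (Fin 7), S.card = 4 → ∃ a b c d : Fin 7,
      a ≠ b ∧ c ≠ d ∧ a ≠ c ∧ a ≠ d ∧ b ≠ c ∧ b ≠ d ∧
      S = {a, b, c, d} ∧ χ s(a,b) = χ s(c,d)) : False := by
  classical
  set OP : Finset (Sym2 (Fin 7) × Sym2 (Fin 7)) :=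
    univ.filter (fun p => ¬ p.1.IsDiag ∧ ¬ p.2.IsDiag ∧ χ p.1 = χ p.2 ∧
      ∀ v, v ∈ p.1 → v ∉ p.2) with hOPdef
  have memOP : ∀ p : Sym2 (Fin 7) × Sym2 (Fin 7), p ∈ OP ↔
      (¬ p.1.IsDiag ∧ ¬ p.2.IsDiag ∧ χ p.1 = χ p.2 ∧ ∀ v, v ∈ p.1 → v ∉ p.2) := by
    intro p; rw [hOPdef, mem_filter]; simp
  have H' : ∀ S : Finset (Fin 7), ∃ a b c d : Fin 7, S.card = 4 →
      a ≠ b ∧ c ≠ d ∧ a ≠ c ∧ a ≠ d ∧ b ≠ c ∧ b ≠ d ∧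
      S = {a, b, c, d} ∧ χ s(a,b) = χ s(c,d) := by
    intro S
    by_cases h4 : S.card = 4
    · obtain ⟨a, b, c, d, hh⟩ := H S h4
      exact ⟨a, b, c, d, fun _ => hh⟩
    · exact ⟨0, 0, 0, 0, fun h => absurd h h4⟩
  choose A B C D hprop using H'
  set g : Finset (Fin 7) × Bool → Sym2 (Fin 7) × Sym2 (Fin 7) := fun q =>
    if q.2 then (s(A q.1, B q.1), s(C q.1, D q.1))
    else (s(C q.1, D q.1), s(A q.1, B q.1)) with hgdef
  have hmaps : ∀ q ∈ ((univ.powersetCard 4 : Finset (Finset (Fin 7))) ×ˢ (univ : Finset Bool)),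
      g q ∈ OP := by
    rintro ⟨S, t⟩ hq
    rw [mem_product, Finset.mem_powersetCard_univ] at hq
    obtain ⟨h4, -⟩ := hq
    obtain ⟨hab, hcd, hac, had, hbc, hbd, hSeq, hcol⟩ := hprop S h4
    rw [memOP, hgdef]
    cases t
    · simp only [Bool.false_eq_true, if_false]
      refine ⟨?_, ?_, hcol.symm, ?_⟩
      · simp [Sym2.mk_isDiag_iff, hcd]
      · simp [Sym2.mk_isDiag_iff, hab]
      · intro v hv hv'
        rw [Sym2.mem_iff] at hv hv'
        rcases hv with rfl | rfl <;> rcases hv' with h | h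
        · exact hac h.symm
        · exact hbc h.symm
        · exact had h.symm
        · exact hbd h.symm
    · simp only [if_true]
      refine ⟨?_, ?_, hcol, ?_⟩
      · simp [Sym2.mk_isDiag_iff, hab]
      · simp [Sym2.mk_isDiag_iff, hcd]
      · intro v hv hv'
        rw [Sym2.mem_iff] at hv hv'
        rcases hv with rfl | rfl <;> rcases hv' with h | h
        · exact hac h
        · exact had h
        · exact hbc h
        · exact hbd h
  have hinj : Set.InjOn g
      (((univ.powersetCard 4 : Finset (Finset (Fin 7))) ×ˢ (univ : Finset Bool) :
        Finset (Finset (Fin 7) × Bool)) : Set (Finset (Fin 7) × Bool)) := by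
    rintro ⟨S, t⟩ hq ⟨S', t'⟩ hq' heq
    simp only [coe_product, Set.mem_prod, mem_coe, Finset.mem_powersetCard_univ,
      Finset.mem_coe, Finset.mem_product] at hq hq'
    obtain ⟨h4, -⟩ := hq
    obtain ⟨h4', -⟩ := hq'
    obtain ⟨hab, hcd, hac, had, hbc, hbd, hSeq, hcol⟩ := hprop S h4
    obtain ⟨hab', hcd', hac', had', hbc', hbd', hSeq', hcol'⟩ := hprop S' h4'
    simp only [hgdef] at heq
    cases t <;> cases t' <;>
      simp only [Bool.false_eq_true, if_false, if_true] at heq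
    · injection heq with f1 f2
      have hS : S = S' := quadSetEq _ _ _ _ _ _ _ _ S S' hSeq hSeq' (Or.inl ⟨f2, f1⟩)
      rw [hS]
    · injection heq with f1 f2
      exfalso
      have hS : S = S' := quadSetEq _ _ _ _ _ _ _ _ S S' hSeq hSeq' (Or.inr ⟨f2, f1⟩)
      subst hS
      rcases Sym2.eq_iff.mp f2 with ⟨e1, -⟩ | ⟨e1, -⟩
      · exact hac e1
      · exact had e1
    · injection heq with f1 f2
      exfalso
      have hS : S = S' := quadSetEq _ _ _ _ _ _ _ _ S S' hSeq hSeq' (Or.inr ⟨f1, f2⟩)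
      subst hS
      rcases Sym2.eq_iff.mp f1 with ⟨e1, -⟩ | ⟨e1, -⟩
      · exact hac e1
      · exact had e1
    · injection heq with f1 f2
      have hS : S = S' := quadSetEq _ _ _ _ _ _ _ _ S S' hSeq hSeq' (Or.inl ⟨f1, f2⟩)
      rw [hS]
  have h70 : (70 : ℕ) ≤ OP.card := by
    have hcard := Finset.card_le_card_of_injOn g hmaps hinj
    rw [card_product, card_powersetCard] at hcard
    simpa [card_univ, show Nat.choose 7 4 = 35 from rfl] using hcard
  -- upper bound
  set E : Finset (Sym2 (Fin 7)) := univ.filter (fun e => ¬ e.IsDiag) with hEdef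
  have hEcard : E.card = 21 := by rw [hEdef]; decide
  have hrep : ∀ z : Sym2 (Fin 7), ∃ u v, z = s(u,v) :=
    fun z => Sym2.ind (f := fun z => ∃ u v, z = s(u,v)) (fun u v => ⟨u, v, rfl⟩) z
  have hfib : ∀ e ∈ E, (OP.filter (fun p => p.1 = e)).card ≤ 2 := by
    intro e _
    by_contra hgt
    push_neg at hgt
    obtain ⟨p, q, r, hp, hq, hr, hpq, hpr, hqr⟩ := Finset.two_lt_card_iff.mp hgt
    rw [mem_filter] at hp hq hr
    obtain ⟨hpOP, hp1⟩ := hp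
    obtain ⟨hqOP, hq1⟩ := hq
    obtain ⟨hrOP, hr1⟩ := hr
    rw [memOP] at hpOP hqOP hrOP
    obtain ⟨hpd1, hpd2, hpc, hpdisj⟩ := hpOP
    obtain ⟨hqd1, hqd2, hqc, hqdisj⟩ := hqOP
    obtain ⟨hrd1, hrd2, hrc, hrdisj⟩ := hrOP
    obtain ⟨x, y, hxy⟩ := hrep e
    obtain ⟨a1, a2, ha⟩ := hrep p.2
    obtain ⟨b1, b2, hbb⟩ := hrep q.2
    obtain ⟨c1, c2, hcc⟩ := hrep r.2
    have hxyne : x ≠ y := by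
      rw [hp1, hxy] at hpd1; simpa [Sym2.mk_isDiag_iff] using hpd1
    have ha12 : a1 ≠ a2 := by rw [ha] at hpd2; simpa [Sym2.mk_isDiag_iff] using hpd2
    have hb12 : b1 ≠ b2 := by rw [hbb] at hqd2; simpa [Sym2.mk_isDiag_iff] using hqd2
    have hc12 : c1 ≠ c2 := by rw [hcc] at hrd2; simpa [Sym2.mk_isDiag_iff] using hrd2
    rw [hp1, hxy, ha] at hpdisj
    rw [hq1, hxy, hbb] at hqdisj
    rw [hr1, hxy, hcc] at hrdisj
    have hxa1 : x ≠ a1 := fun h => hpdisj x (Sym2.mem_iff.mpr (Or.inl rfl)) (Sym2.mem_iff.mpr (Or.inl h))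
    have hxa2 : x ≠ a2 := fun h => hpdisj x (Sym2.mem_iff.mpr (Or.inl rfl)) (Sym2.mem_iff.mpr (Or.inr h))
    have hya1 : y ≠ a1 := fun h => hpdisj y (Sym2.mem_iff.mpr (Or.inr rfl)) (Sym2.mem_iff.mpr (Or.inl h))
    have hya2 : y ≠ a2 := fun h => hpdisj y (Sym2.mem_iff.mpr (Or.inr rfl)) (Sym2.mem_iff.mpr (Or.inr h))
    have hxb1 : x ≠ b1 := fun h => hqdisj x (Sym2.mem_iff.mpr (Or.inl rfl)) (Sym2.mem_iff.mpr (Or.inl h))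
    have hxb2 : x ≠ b2 := fun h => hqdisj x (Sym2.mem_iff.mpr (Or.inl rfl)) (Sym2.mem_iff.mpr (Or.inr h))
    have hyb1 : y ≠ b1 := fun h => hqdisj y (Sym2.mem_iff.mpr (Or.inr rfl)) (Sym2.mem_iff.mpr (Or.inl h))
    have hyb2 : y ≠ b2 := fun h => hqdisj y (Sym2.mem_iff.mpr (Or.inr rfl)) (Sym2.mem_iff.mpr (Or.inr h))
    have hxc1 : x ≠ c1 := fun h => hrdisj x (Sym2.mem_iff.mpr (Or.inl rfl)) (Sym2.mem_iff.mpr (Or.inl h))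
    have hxc2 : x ≠ c2 := fun h => hrdisj x (Sym2.mem_iff.mpr (Or.inl rfl)) (Sym2.mem_iff.mpr (Or.inr h))
    have hyc1 : y ≠ c1 := fun h => hrdisj y (Sym2.mem_iff.mpr (Or.inr rfl)) (Sym2.mem_iff.mpr (Or.inl h))
    have hyc2 : y ≠ c2 := fun h => hrdisj y (Sym2.mem_iff.mpr (Or.inr rfl)) (Sym2.mem_iff.mpr (Or.inr h))
    have hpc' : χ s(a1,a2) = χ s(x,y) := by rw [← ha, ← hxy, ← hp1]; exact hpc.symm
    have hqc' : χ s(b1,b2) = χ s(x,y) := by rw [← hbb, ← hxy, ← hq1]; exact hqc.symm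
    have hrc' : χ s(c1,c2) = χ s(x,y) := by rw [← hcc, ← hxy, ← hr1]; exact hrc.symm
    have hab2 : s(a1,a2) ≠ s(b1,b2) := by
      rw [← ha, ← hbb]
      intro h
      exact hpq (Prod.ext (hp1.trans hq1.symm) h)
    have hac2 : s(a1,a2) ≠ s(c1,c2) := by
      rw [← ha, ← hcc]
      intro h
      exact hpr (Prod.ext (hp1.trans hr1.symm) h)
    have hbc2 : s(b1,b2) ≠ s(c1,c2) := by
      rw [← hbb, ← hcc]
      intro h
      exact hqr (Prod.ext (hq1.trans hr1.symm) h)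
    rcases scc a1 a2 b1 b2 ha12 hb12 (hpc'.trans hqc'.symm) with hEq | ⟨n1, n2, n3, n4⟩
    · exact hab2 hEq
    rcases scc a1 a2 c1 c2 ha12 hc12 (hpc'.trans hrc'.symm) with hEq | ⟨m1, m2, m3, m4⟩
    · exact hac2 hEq
    rcases scc b1 b2 c1 c2 hb12 hc12 (hqc'.trans hrc'.symm) with hEq | ⟨o1, o2, o3, o4⟩
    · exact hbc2 hEq
    exact eight_ne x y a1 a2 b1 b2 c1 c2 hxyne ha12 hb12 hc12
      hxa1 hxa2 hya1 hya2 hxb1 hxb2 hyb1 hyb2 hxc1 hxc2 hyc1 hyc2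
      n1 n2 n3 n4 m1 m2 m3 m4 o1 o2 o3 o4
  have hmemE : ∀ p ∈ OP, p.1 ∈ E := by
    intro p hp
    rw [memOP] at hp
    rw [hEdef, mem_filter]
    exact ⟨mem_univ _, hp.1⟩
  have h42 : OP.card ≤ 42 := by
    rw [Finset.card_eq_sum_card_fiberwise hmemE]
    calc ∑ e ∈ E, ((OP.filter (fun p => p.1 = e)).card)
        ≤ ∑ _e ∈ E, 2 := Finset.sum_le_sum hfib
      _ = 42 := by rw [Finset.sum_const, hEcard, smul_eq_mul]
  omega

/-! ### The K6 construction -/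

def c6 : Fin 6 → Fin 6 → ℕ := fun i j =>
  if i = 5 then (2 * j.val) % 5 else if j = 5 then (2 * i.val) % 5 else (i.val + j.val) % 5

def χ6 : Sym2 (Fin 6) → ℕ := Sym2.lift ⟨c6, by decide⟩

lemma χ6_lt : ∀ e : Sym2 (Fin 6), χ6 e < 5 := by
  intro e
  induction e using Sym2.ind with
  | _ x y =>
    simp only [χ6, Sym2.lift_mk, c6]
    split_ifs <;> omega

lemma no_orderable6 : ¬ HasOrderableClique 3 6 χ6 := by
  unfold HasOrderableClique OrderableColoring χ6
  decide

lemma no_rainbow6 : ¬ HasRainbowClique 4 6 χ6 := by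
  rintro ⟨f, hf, h⟩
  have b01 := χ6_lt s(f 0, f 1)
  have b02 := χ6_lt s(f 0, f 2)
  have b03 := χ6_lt s(f 0, f 3)
  have b12 := χ6_lt s(f 1, f 2)
  have b13 := χ6_lt s(f 1, f 3)
  have b23 := χ6_lt s(f 2, f 3)
  have n1 : χ6 s(f 0, f 1) ≠ χ6 s(f 0, f 2) := fun e =>
    absurd (h 0 1 0 2 (by decide) (by decide) e) (by decide)
  have n2 : χ6 s(f 0, f 1) ≠ χ6 s(f 0, f 3) := fun e =>
    absurd (h 0 1 0 3 (by decide) (by decide) e) (by decide)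
  have n3 : χ6 s(f 0, f 1) ≠ χ6 s(f 1, f 2) := fun e =>
    absurd (h 0 1 1 2 (by decide) (by decide) e) (by decide)
  have n4 : χ6 s(f 0, f 1) ≠ χ6 s(f 1, f 3) := fun e =>
    absurd (h 0 1 1 3 (by decide) (by decide) e) (by decide)
  have n5 : χ6 s(f 0, f 1) ≠ χ6 s(f 2, f 3) := fun e =>
    absurd (h 0 1 2 3 (by decide) (by decide) e) (by decide)
  have n6 : χ6 s(f 0, f 2) ≠ χ6 s(f 0, f 3) := fun e =>
    absurd (h 0 2 0 3 (by decide) (by decide) e) (by decide)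
  have n7 : χ6 s(f 0, f 2) ≠ χ6 s(f 1, f 2) := fun e =>
    absurd (h 0 2 1 2 (by decide) (by decide) e) (by decide)
  have n8 : χ6 s(f 0, f 2) ≠ χ6 s(f 1, f 3) := fun e =>
    absurd (h 0 2 1 3 (by decide) (by decide) e) (by decide)
  have n9 : χ6 s(f 0, f 2) ≠ χ6 s(f 2, f 3) := fun e =>
    absurd (h 0 2 2 3 (by decide) (by decide) e) (by decide)
  have n10 : χ6 s(f 0, f 3) ≠ χ6 s(f 1, f 2) := fun e =>
    absurd (h 0 3 1 2 (by decide) (by decide) e) (by decide)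
  have n11 : χ6 s(f 0, f 3) ≠ χ6 s(f 1, f 3) := fun e =>
    absurd (h 0 3 1 3 (by decide) (by decide) e) (by decide)
  have n12 : χ6 s(f 0, f 3) ≠ χ6 s(f 2, f 3) := fun e =>
    absurd (h 0 3 2 3 (by decide) (by decide) e) (by decide)
  have n13 : χ6 s(f 1, f 2) ≠ χ6 s(f 1, f 3) := fun e =>
    absurd (h 1 2 1 3 (by decide) (by decide) e) (by decide)
  have n14 : χ6 s(f 1, f 2) ≠ χ6 s(f 2, f 3) := fun e =>
    absurd (h 1 2 2 3 (by decide) (by decide) e) (by decide)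
  have n15 : χ6 s(f 1, f 3) ≠ χ6 s(f 2, f 3) := fun e =>
    absurd (h 1 3 2 3 (by decide) (by decide) e) (by decide)
  omega

/-- CR(3,4) = 7. -/
theorem CR_3_4 :
    (∀ χ : Sym2 (Fin 7) → ℕ, HasOrderableClique 3 7 χ ∨ HasRainbowClique 4 7 χ) ∧
    (∃ χ : Sym2 (Fin 6) → ℕ,
      ¬ HasOrderableClique 3 6 χ ∧ ¬ HasRainbowClique 4 6 χ) := by
  constructor
  · intro χ
    by_contra hcon
    push_neg at hcon
    obtain ⟨hO, hR⟩ := hcon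
    have P := proper7 hO
    have scc := same_color_cases P
    have H := quad7 scc hR
    exact counting7 χ scc H
  · exact ⟨χ6, no_orderable6, no_rainbow6⟩
end

section
/- CR(4,3) = 6. That is: every edge-coloring of the complete graph K_6 (with arbitrarily many colors) contains an orderable copy of K_4 or a rainbow copy of K_3, and there exists an edge-coloring of K_5 containing neither an orderable K_4 nor a rainbow K_3. -/
set_option maxRecDepth 10000

instance (t n : ℕ) (χ : Sym2 (Fin n) → ℕ) : Decidable (HasRainbowClique t n χ) := by
  unfold HasRainbowClique; infer_instance

/-- The pentagon coloring of `K_5`: edges of the 5-cycle get color 0, the rest color 1. -/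
def pent : Sym2 (Fin 5) → ℕ :=
  Sym2.lift ⟨fun i j => if (i.val + 1) % 5 = j.val ∨ (j.val + 1) % 5 = i.val then 0 else 1,
    by intro i j; simp [or_comm]⟩

/-- An orderable `K_4` yields a vertex with three equally-colored edges. -/
lemma orderable_mono {n : ℕ} (χ : Sym2 (Fin n) → ℕ) (h : HasOrderableClique 4 n χ) :
    ∃ a b c d : Fin n, a ≠ b ∧ a ≠ c ∧ a ≠ d ∧ b ≠ c ∧ b ≠ d ∧ c ≠ d ∧
      χ s(a, b) = χ s(a, c) ∧ χ s(a, b) = χ s(a, d) := by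
  obtain ⟨f, finj, π, hπ⟩ := h
  set i0 : Fin 4 := π.symm 0 with hi0
  have hmin : ∀ j : Fin 4, j ≠ i0 → π i0 < π j := by
    intro j hj
    have : π i0 = 0 := by simp [hi0]
    rw [this]
    exact Fin.pos_iff_ne_zero.mpr (by
      intro h0
      exact hj (by simpa [hi0] using congrArg π.symm h0))
  have key : ∀ j : Fin 4, j ≠ i0 → ∀ k : Fin 4, k ≠ i0 →
      χ s(f i0, f j) = χ s(f i0, f k) := by
    intro j hj k hk
    exact hπ i0 j k (fun h => hj h.symm) (fun h => hk h.symm) (hmin j hj) (hmin k hk)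
  refine ⟨f i0, f (i0.succAbove 0), f (i0.succAbove 1), f (i0.succAbove 2),
    ?_, ?_, ?_, ?_, ?_, ?_, ?_, ?_⟩
  · exact fun h => (Fin.succAbove_ne i0 0) (finj h).symm
  · exact fun h => (Fin.succAbove_ne i0 1) (finj h).symm
  · exact fun h => (Fin.succAbove_ne i0 2) (finj h).symm
  · exact fun h => (by decide : (0:Fin 3) ≠ 1) (Fin.succAbove_right_injective (finj h))
  · exact fun h => (by decide : (0:Fin 3) ≠ 2) (Fin.succAbove_right_injective (finj h))
  · exact fun h => (by decide : (1:Fin 3) ≠ 2) (Fin.succAbove_right_injective (finj h))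
  · exact key _ (Fin.succAbove_ne i0 0) _ (Fin.succAbove_ne i0 1)
  · exact key _ (Fin.succAbove_ne i0 0) _ (Fin.succAbove_ne i0 2)

/-- Constructor for orderable `K_4`'s. -/
lemma build_orderable {n : ℕ} (χ : Sym2 (Fin n) → ℕ) (v a b c : Fin n)
    (hva : v ≠ a) (hvb : v ≠ b) (hvc : v ≠ c) (hab : a ≠ b) (hac : a ≠ c) (hbc : b ≠ c)
    (h1 : χ s(v, a) = χ s(v, b)) (h2 : χ s(v, a) = χ s(v, c))
    (h3 : χ s(a, b) = χ s(a, c)) : HasOrderableClique 4 n χ := by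
  refine ⟨![v, a, b, c], ?_, Equiv.refl _, ?_⟩
  · intro i j hij
    fin_cases i <;> fin_cases j <;> simp_all
  · intro i j k _ _ hij hik
    simp only [Equiv.refl_apply] at hij hik
    fin_cases i <;> fin_cases j <;> fin_cases k <;>
      simp_all [Fin.lt_def] <;> omega

/-- If there is no rainbow triangle, every triangle has two equal edges. -/
lemma no_rainbow {χ : Sym2 (Fin 6) → ℕ} (h : ¬ HasRainbowClique 3 6 χ)
    (a b c : Fin 6) (hab : a ≠ b) (hac : a ≠ c) (hbc : b ≠ c) :
    χ s(a,b) = χ s(a,c) ∨ χ s(a,b) = χ s(b,c) ∨ χ s(a,c) = χ s(b,c) := by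
  by_contra hcon
  push_neg at hcon
  obtain ⟨h1, h2, h3⟩ := hcon
  apply h
  refine ⟨![a,b,c], ?_, ?_⟩
  · intro i j hij
    fin_cases i <;> fin_cases j <;> simp_all
  · intro i j k l hij hkl heq
    fin_cases i <;> fin_cases j <;> fin_cases k <;> fin_cases l <;>
      simp_all [Sym2.eq_swap]

/-- Two distinct cherries at `v` are disjoint, when `v` has no monochromatic triple. -/
lemma cherry_disj (χ : Sym2 (Fin 6) → ℕ) (v x1 y1 x2 y2 : Fin 6)
    (h : ∀ x y z : Fin 6, v ≠ x → v ≠ y → v ≠ z → x ≠ y → x ≠ z → y ≠ z →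
      ¬(χ s(v,x) = χ s(v,y) ∧ χ s(v,x) = χ s(v,z)))
    (hlt1 : x1 < y1) (hv1 : v ≠ x1) (hv2 : v ≠ y1) (he1 : χ s(v,x1) = χ s(v,y1))
    (hlt2 : x2 < y2) (hv3 : v ≠ x2) (hv4 : v ≠ y2) (he2 : χ s(v,x2) = χ s(v,y2))
    (hne : ¬(x1 = x2 ∧ y1 = y2)) :
    x1 ≠ x2 ∧ x1 ≠ y2 ∧ y1 ≠ x2 ∧ y1 ≠ y2 := by
  refine ⟨?_, ?_, ?_, ?_⟩
  · intro heq
    have hyy : y1 ≠ y2 := fun hy => hne ⟨heq, hy⟩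
    refine h x1 y1 y2 hv1 hv2 hv4 (ne_of_lt hlt1) ?_ hyy ⟨he1, ?_⟩
    · rw [heq]; exact ne_of_lt hlt2
    · rw [heq]; exact he2
  · intro heq
    by_cases hxy : y1 = x2
    · rw [heq] at hlt1; rw [hxy] at hlt1
      exact absurd (hlt2.trans hlt1) (lt_irrefl _)
    · refine h x1 y1 x2 hv1 hv2 hv3 (ne_of_lt hlt1) ?_ hxy ⟨he1, ?_⟩
      · rw [heq]; exact (ne_of_lt hlt2).symm
      · rw [heq]; exact he2.symm
  · intro heq
    by_cases hxy : x1 = y2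
    · rw [hxy] at hlt1; rw [heq] at hlt1
      exact absurd (hlt1.trans hlt2) (lt_irrefl _)
    · refine h y1 x1 y2 hv2 hv1 hv4 (ne_of_lt hlt1).symm ?_ hxy ⟨he1.symm, ?_⟩
      · rw [heq]; exact ne_of_lt hlt2
      · rw [heq]; exact he2
  · intro heq
    have hxx : x1 ≠ x2 := fun hx => hne ⟨hx, heq⟩
    refine h y1 x1 x2 hv2 hv1 hv3 (ne_of_lt hlt1).symm ?_ hxx ⟨he1.symm, ?_⟩
    · rw [heq]; exact (ne_of_lt hlt2).symm
    · rw [heq]; exact he2.symm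

/-- At most two cherries at each vertex, when it has no monochromatic triple. -/
lemma fiber_bound (χ : Sym2 (Fin 6) → ℕ) (v : Fin 6)
    (h : ∀ x y z : Fin 6, v ≠ x → v ≠ y → v ≠ z → x ≠ y → x ≠ z → y ≠ z →
      ¬(χ s(v,x) = χ s(v,y) ∧ χ s(v,x) = χ s(v,z))) :
    ((Finset.univ.filter (fun t : Fin 6 × Fin 6 × Fin 6 =>
        t.2.1 < t.2.2 ∧ t.1 ≠ t.2.1 ∧ t.1 ≠ t.2.2 ∧
          χ s(t.1, t.2.1) = χ s(t.1, t.2.2))).filter (fun t => t.1 = v)).card ≤ 2 := by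
  by_contra hc
  push_neg at hc
  rw [Finset.two_lt_card_iff] at hc
  obtain ⟨t1, t2, t3, ht1, ht2, ht3, h12, h13, h23⟩ := hc
  obtain ⟨v1', x1, y1⟩ := t1
  obtain ⟨v2', x2, y2⟩ := t2
  obtain ⟨v3', x3, y3⟩ := t3
  simp only [Finset.mem_filter, Finset.mem_univ, true_and] at ht1 ht2 ht3
  obtain ⟨⟨l1, n1, n1', e1⟩, hv1⟩ := ht1
  obtain ⟨⟨l2, n2, n2', e2⟩, hv2⟩ := ht2
  obtain ⟨⟨l3, n3, n3', e3⟩, hv3⟩ := ht3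
  rw [hv1] at n1 n1' e1 h12 h13
  rw [hv2] at n2 n2' e2 h23
  rw [hv3] at n3 n3' e3
  rw [hv2] at h12
  rw [hv3] at h13 h23
  have hp12 : ¬(x1 = x2 ∧ y1 = y2) := by
    rintro ⟨rfl, rfl⟩; exact h12 rfl
  have hp13 : ¬(x1 = x3 ∧ y1 = y3) := by
    rintro ⟨rfl, rfl⟩; exact h13 rfl
  have hp23 : ¬(x2 = x3 ∧ y2 = y3) := by
    rintro ⟨rfl, rfl⟩; exact h23 rfl
  obtain ⟨d1, d2, d3, d4⟩ := cherry_disj χ v x1 y1 x2 y2 h l1 n1 n1' e1 l2 n2 n2' e2 hp12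
  obtain ⟨d5, d6, d7, d8⟩ := cherry_disj χ v x1 y1 x3 y3 h l1 n1 n1' e1 l3 n3 n3' e3 hp13
  obtain ⟨d9, d10, d11, d12⟩ := cherry_disj χ v x2 y2 x3 y3 h l2 n2 n2' e2 l3 n3 n3' e3 hp23
  have q1 : x1 ≠ y1 := ne_of_lt l1
  have q2 : x2 ≠ y2 := ne_of_lt l2
  have q3 : x3 ≠ y3 := ne_of_lt l3
  have n1s := n1.symm; have n1's := n1'.symm
  have h7 : ({v, x1, y1, x2, y2, x3, y3} : Finset (Fin 6)).card = 7 := by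
    repeat rw [Finset.card_insert_of_notMem (by simp_all)]
    rfl
  have := Finset.card_le_univ ({v, x1, y1, x2, y2, x3, y3} : Finset (Fin 6))
  rw [h7] at this
  simp at this

/-- The main counting argument: 20 triangles, at most 12 cherries. -/
lemma counting (χ : Sym2 (Fin 6) → ℕ)
    (hA : ∀ a b c : Fin 6, a ≠ b → a ≠ c → b ≠ c →
      χ s(a,b) = χ s(a,c) ∨ χ s(a,b) = χ s(b,c) ∨ χ s(a,c) = χ s(b,c))
    (hB : ∀ v : Fin 6,
      ((Finset.univ.filter (fun t : Fin 6 × Fin 6 × Fin 6 =>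
        t.2.1 < t.2.2 ∧ t.1 ≠ t.2.1 ∧ t.1 ≠ t.2.2 ∧
          χ s(t.1, t.2.1) = χ s(t.1, t.2.2))).filter (fun t => t.1 = v)).card ≤ 2) :
    False := by
  set S : Finset (Fin 6 × Fin 6 × Fin 6) :=
    Finset.univ.filter (fun t : Fin 6 × Fin 6 × Fin 6 =>
      t.2.1 < t.2.2 ∧ t.1 ≠ t.2.1 ∧ t.1 ≠ t.2.2 ∧
        χ s(t.1, t.2.1) = χ s(t.1, t.2.2)) with hS
  set T : Finset (Fin 6 × Fin 6 × Fin 6) :=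
    Finset.univ.filter (fun t : Fin 6 × Fin 6 × Fin 6 =>
      t.1 < t.2.1 ∧ t.2.1 < t.2.2) with hT
  have hTcard : T.card = 20 := by rw [hT]; decide
  have hle : T.card ≤ S.card := by
    apply Finset.card_le_card_of_injOn (fun t =>
      if χ s(t.1, t.2.1) = χ s(t.1, t.2.2) then t
      else if χ s(t.1, t.2.1) = χ s(t.2.1, t.2.2) then (t.2.1, t.1, t.2.2)
      else (t.2.2, t.1, t.2.1))
    · intro t ht
      simp only [hT, Finset.mem_coe, Finset.mem_filter] at ht
      obtain ⟨-, h1, h2⟩ := ht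
      obtain ⟨a, b, c⟩ := t
      simp only at h1 h2 ⊢
      have hab : a ≠ b := ne_of_lt h1
      have hbc : b ≠ c := ne_of_lt h2
      have hac : a ≠ c := ne_of_lt (h1.trans h2)
      rw [hS]
      split_ifs with e1 e2
      · simp only [Finset.mem_coe, Finset.mem_filter, Finset.mem_univ, true_and]
        exact ⟨h2, hab, hac, e1⟩
      · simp only [Finset.mem_coe, Finset.mem_filter, Finset.mem_univ, true_and]
        refine ⟨h1.trans h2, hab.symm, hbc, ?_⟩
        rw [Sym2.eq_swap (a := b) (b := a)]
        exact e2
      · simp only [Finset.mem_coe, Finset.mem_filter, Finset.mem_univ, true_and]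
        refine ⟨h1, hac.symm, hbc.symm, ?_⟩
        have := hA a b c hab hac hbc
        rcases this with h | h | h
        · exact absurd h e1
        · exact absurd h e2
        · rw [Sym2.eq_swap (a := c) (b := a), Sym2.eq_swap (a := c) (b := b)]
          exact h
    · intro t ht t' ht' heq
      simp only [Finset.mem_coe, hT, Finset.mem_filter] at ht ht'
      obtain ⟨-, p1, p2⟩ := ht
      obtain ⟨-, p1', p2'⟩ := ht'
      obtain ⟨a, b, c⟩ := t
      obtain ⟨a', b', c'⟩ := t'
      simp only at p1 p2 p1' p2' heq ⊢
      split_ifs at heq <;>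
        (simp only [Prod.mk.injEq] at heq ⊢;
         rw [Fin.lt_def] at p1 p2 p1' p2';
         obtain ⟨e1, e2, e3⟩ := heq;
         rw [Fin.ext_iff] at e1 e2 e3 ⊢;
         refine ⟨?_, ?_, ?_⟩ <;> omega)
  have hsum : S.card = ∑ v : Fin 6, (S.filter (fun t => t.1 = v)).card :=
    Finset.card_eq_sum_card_fiberwise (fun t _ => Finset.mem_univ t.1)
  have hbound : ∑ v : Fin 6, (S.filter (fun t => t.1 = v)).card ≤ 12 := by
    calc ∑ v : Fin 6, (S.filter (fun t => t.1 = v)).card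
        ≤ ∑ _v : Fin 6, 2 := Finset.sum_le_sum (fun v _ => hB v)
      _ = 12 := by simp
  omega

/-- CR(4,3) = 6. -/
theorem CR_4_3 :
    (∀ χ : Sym2 (Fin 6) → ℕ, HasOrderableClique 4 6 χ ∨ HasRainbowClique 3 6 χ) ∧
    (∃ χ : Sym2 (Fin 5) → ℕ,
      ¬ HasOrderableClique 4 5 χ ∧ ¬ HasRainbowClique 3 5 χ) := by
  constructor
  · intro χ
    by_cases hr : HasRainbowClique 3 6 χ
    · exact Or.inr hr
    · left
      by_contra ho
      apply counting χ (no_rainbow hr)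
      intro v
      apply fiber_bound
      intro x y z hvx hvy hvz hxy hxz hyz hcon
      obtain ⟨c1, c2⟩ := hcon
      rcases no_rainbow hr x y z hxy hxz hyz with h | h | h
      · exact ho (build_orderable χ v x y z hvx hvy hvz hxy hxz hyz c1 c2 h)
      · refine ho (build_orderable χ v y x z hvy hvx hvz hxy.symm hyz hxz
          c1.symm (c1.symm.trans c2) ?_)
        rw [Sym2.eq_swap (a := y) (b := x)]
        exact h
      · refine ho (build_orderable χ v z x y hvz hvx hvy hxz.symm hyz.symm hxy
          c2.symm (c2.symm.trans c1) ?_)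
        rw [Sym2.eq_swap (a := z) (b := x), Sym2.eq_swap (a := z) (b := y)]
        exact h
  · refine ⟨pent, ?_, ?_⟩
    · intro h
      have := orderable_mono pent h
      revert this
      decide
    · decide
end

section
/- CR(5,3) = 11. That is: every edge-coloring of the complete graph K_11 (with arbitrarily many colors) contains an orderable copy of K_5 or a rainbow copy of K_3, and there exists an edge-coloring of K_10 containing neither an orderable K_5 nor a rainbow K_3. -/
namespace CR53

open Finset

lemma three_of_card {α : Type*} [DecidableEq α] {s : Finset α} (h : 3 ≤ s.card) :
    ∃ a b c, a ∈ s ∧ b ∈ s ∧ c ∈ s ∧ a ≠ b ∧ a ≠ c ∧ b ≠ c := by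
  obtain ⟨a, ha⟩ : s.Nonempty := card_pos.mp (by omega)
  obtain ⟨b, hb⟩ : (s.erase a).Nonempty := card_pos.mp (by rw [card_erase_of_mem ha]; omega)
  obtain ⟨c, hc⟩ : ((s.erase a).erase b).Nonempty := card_pos.mp (by
    rw [card_erase_of_mem hb, card_erase_of_mem ha]; omega)
  have hb' := mem_erase.mp hb
  have hc' := mem_erase.mp hc
  have hc'' := mem_erase.mp hc'.2
  exact ⟨a, b, c, ha, hb'.2, hc''.2, fun h => hb'.1 h.symm, fun h => hc''.1 h.symm,
    fun h => hc'.1 h.symm⟩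


lemma row_count {α β : Type*} [DecidableEq α] [DecidableEq β]
    (A : Finset α) (B : Finset β) (Q : α → β → Prop) [∀ a b, Decidable (Q a b)] :
    ((A ×ˢ B).filter fun p => Q p.1 p.2).card = ∑ u ∈ A, (B.filter fun w => Q u w).card := by
  rw [card_eq_sum_card_fiberwise (f := Prod.fst) (t := A)
    (fun p hp => (mem_product.mp (mem_filter.mp hp).1).1)]
  refine sum_congr rfl fun u hu => ?_
  refine card_bij (fun p _ => p.2) ?_ ?_ ?_
  · intro p hp
    obtain ⟨hp1, hp2⟩ := mem_filter.mp hp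
    obtain ⟨hm, hQ⟩ := mem_filter.mp hp1
    exact mem_filter.mpr ⟨(mem_product.mp hm).2, hp2 ▸ hQ⟩
  · intro p1 hp1 p2 hp2 hh
    have e1 := (mem_filter.mp hp1).2
    have e2 := (mem_filter.mp hp2).2
    exact Prod.ext (e1.trans e2.symm) hh
  · intro w hw
    obtain ⟨hwB, hwQ⟩ := mem_filter.mp hw
    exact ⟨(u, w), mem_filter.mpr ⟨mem_filter.mpr ⟨mem_product.mpr ⟨hu, hwB⟩, hwQ⟩, rfl⟩, rfl⟩

lemma col_count {α β : Type*} [DecidableEq α] [DecidableEq β]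
    (A : Finset α) (B : Finset β) (Q : α → β → Prop) [∀ a b, Decidable (Q a b)] :
    ((A ×ˢ B).filter fun p => Q p.1 p.2).card = ∑ w ∈ B, (A.filter fun u => Q u w).card := by
  rw [card_eq_sum_card_fiberwise (f := Prod.snd) (t := B)
    (fun p hp => (mem_product.mp (mem_filter.mp hp).1).2)]
  refine sum_congr rfl fun w hw => ?_
  refine card_bij (fun p _ => p.1) ?_ ?_ ?_
  · intro p hp
    obtain ⟨hp1, hp2⟩ := mem_filter.mp hp
    obtain ⟨hm, hQ⟩ := mem_filter.mp hp1
    exact mem_filter.mpr ⟨(mem_product.mp hm).1, hp2 ▸ hQ⟩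
  · intro p1 hp1 p2 hp2 hh
    have e1 := (mem_filter.mp hp1).2
    have e2 := (mem_filter.mp hp2).2
    exact Prod.ext hh (e1.trans e2.symm)
  · intro u hu
    obtain ⟨huA, huQ⟩ := mem_filter.mp hu
    exact ⟨(u, w), mem_filter.mpr ⟨mem_filter.mpr ⟨mem_product.mpr ⟨huA, hw⟩, huQ⟩, rfl⟩, rfl⟩

def lbc (i j : Fin 10) : ℕ :=
  if (i:ℕ)/2 = (j:ℕ)/2 then 2 + (i:ℕ)/2
  else if ((i:ℕ)/2 + 1) % 5 = (j:ℕ)/2 ∨ ((j:ℕ)/2 + 1) % 5 = (i:ℕ)/2 then 0 else 1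

lemma lbc_symm : ∀ i j : Fin 10, lbc i j = lbc j i := by decide

def χ₀ : Sym2 (Fin 10) → ℕ := Sym2.lift ⟨lbc, lbc_symm⟩

lemma χ₀_mk (x y : Fin 10) : χ₀ s(x, y) = lbc x y := rfl

lemma lb_nrb : ∀ a b c : Fin 10, a ≠ b → a ≠ c → b ≠ c →
    (lbc a b = lbc a c ∨ lbc a b = lbc b c ∨ lbc a c = lbc b c) := by decide

set_option maxHeartbeats 1000000 in
lemma lb_nt : ∀ v u : Fin 10, v ≠ u → ∀ t1 : Fin 10,
    (v ≠ t1 ∧ u ≠ t1 ∧ lbc v u = lbc v t1) → ∀ t2 : Fin 10,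
    (v ≠ t2 ∧ u ≠ t2 ∧ t1 ≠ t2 ∧ lbc v u = lbc v t2 ∧ lbc u t1 = lbc u t2) → ∀ t3 : Fin 10,
    (v ≠ t3 ∧ u ≠ t3 ∧ t1 ≠ t3 ∧ t2 ≠ t3 ∧ lbc v u = lbc v t3 ∧ lbc u t1 = lbc u t3) → False := by
  decide

lemma no_rainbow₀ : ¬ HasRainbowClique 3 10 χ₀ := by
  rintro ⟨f, hinj, hp⟩
  have d01 : f 0 ≠ f 1 := fun h => by have := hinj h; simp at this
  have d02 : f 0 ≠ f 2 := fun h => by have := hinj h; simp at this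
  have d12 : f 1 ≠ f 2 := fun h => by have := hinj h; simp at this
  have h1 : lbc (f 0) (f 1) ≠ lbc (f 0) (f 2) := fun h => by
    have := hp 0 1 0 2 (by decide) (by decide) (by rw [χ₀_mk, χ₀_mk]; exact h)
    simp at this
  have h2 : lbc (f 0) (f 1) ≠ lbc (f 1) (f 2) := fun h => by
    have := hp 0 1 1 2 (by decide) (by decide) (by rw [χ₀_mk, χ₀_mk]; exact h)
    simp at this
  have h3 : lbc (f 0) (f 2) ≠ lbc (f 1) (f 2) := fun h => by
    have := hp 0 2 1 2 (by decide) (by decide) (by rw [χ₀_mk, χ₀_mk]; exact h)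
    simp at this
  rcases lb_nrb (f 0) (f 1) (f 2) d01 d02 d12 with h | h | h
  exacts [h1 h, h2 h, h3 h]

lemma no_orderable₀ : ¬ HasOrderableClique 5 10 χ₀ := by
  rintro ⟨f, hinj, π, hπ⟩
  set w : Fin 5 → Fin 10 := f ∘ π.symm with hw
  have hwinj : Function.Injective w := hinj.comp π.symm.injective
  have key : ∀ a b b' : Fin 5, a ≠ b → a ≠ b' → a < b → a < b' →
      lbc (w a) (w b) = lbc (w a) (w b') := by
    intro a b b' hab hab' h1 h2
    have := hπ (π.symm a) (π.symm b) (π.symm b')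
      (fun h => hab (by simpa using congrArg π h))
      (fun h => hab' (by simpa using congrArg π h))
      (by simpa using h1) (by simpa using h2)
    simpa [χ₀_mk, hw] using this
  have dd : ∀ a b : Fin 5, a ≠ b → w a ≠ w b := fun a b hab h => hab (hwinj h)
  exact lb_nt (w 0) (w 1) (dd 0 1 (by decide)) (w 2)
    ⟨dd 0 2 (by decide), dd 1 2 (by decide), key 0 1 2 (by decide) (by decide) (by decide) (by decide)⟩
    (w 3)
    ⟨dd 0 3 (by decide), dd 1 3 (by decide), dd 2 3 (by decide),
      key 0 1 3 (by decide) (by decide) (by decide) (by decide),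
      key 1 2 3 (by decide) (by decide) (by decide) (by decide)⟩
    (w 4)
    ⟨dd 0 4 (by decide), dd 1 4 (by decide), dd 2 4 (by decide), dd 3 4 (by decide),
      key 0 1 4 (by decide) (by decide) (by decide) (by decide),
      key 1 2 4 (by decide) (by decide) (by decide) (by decide)⟩


lemma rainbow_of_three {n : ℕ} (χ : Sym2 (Fin n) → ℕ) (x y z : Fin n)
    (hxy : x ≠ y) (hxz : x ≠ z) (hyz : y ≠ z)
    (h1 : χ s(x,y) ≠ χ s(x,z)) (h2 : χ s(x,y) ≠ χ s(y,z)) (h3 : χ s(x,z) ≠ χ s(y,z)) :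
    HasRainbowClique 3 n χ := by
  refine ⟨![x, y, z], ?_, ?_⟩
  · intro i j hij
    fin_cases i <;> fin_cases j <;> simp_all
  · intro i j k l hij hkl h
    fin_cases i <;> fin_cases j <;> fin_cases k <;> fin_cases l <;> simp_all

set_option maxHeartbeats 1000000 in
lemma orderable_of_five {n : ℕ} (χ : Sym2 (Fin n) → ℕ) (v u a p q : Fin n)
    (hvu : v ≠ u) (hva : v ≠ a) (hvp : v ≠ p) (hvq : v ≠ q)
    (hua : u ≠ a) (hup : u ≠ p) (huq : u ≠ q)
    (hap : a ≠ p) (haq : a ≠ q) (hpq : p ≠ q)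
    (h1 : χ s(v,u) = χ s(v,a)) (h2 : χ s(v,u) = χ s(v,p)) (h3 : χ s(v,u) = χ s(v,q))
    (h4 : χ s(u,a) = χ s(u,p)) (h5 : χ s(u,a) = χ s(u,q))
    (h6 : χ s(a,p) = χ s(a,q)) :
    HasOrderableClique 5 n χ := by
  refine ⟨![v, u, a, p, q], ?_, Equiv.refl _, ?_⟩
  · intro i j hij
    fin_cases i <;> fin_cases j <;> simp_all
  · intro i j k hij hik hlt1 hlt2
    simp only [Equiv.refl_apply] at hlt1 hlt2
    fin_cases i <;> fin_cases j <;> fin_cases k <;> simp_all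

section Upper

variable (e : Fin 11 → Fin 11 → ℕ)

/-- no rainbow triangle -/
def NRB : Prop := ∀ x y z : Fin 11, x ≠ y → x ≠ z → y ≠ z →
    (e x y = e x z ∨ e y x = e y z ∨ e z x = e z y)

/-- no "ordered tuple" (v mono to u,t₁,t₂,t₃ and u mono to t₁,t₂,t₃) -/
def NT : Prop := ∀ v u t1 t2 t3 : Fin 11, v ≠ u → v ≠ t1 → v ≠ t2 → v ≠ t3 →
    u ≠ t1 → u ≠ t2 → u ≠ t3 → t1 ≠ t2 → t1 ≠ t3 → t2 ≠ t3 →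
    e v u = e v t1 → e v u = e v t2 → e v u = e v t3 →
    e u t1 = e u t2 → e u t1 = e u t3 → False

variable {e}

/-- any monochromatic (from x) set has at most 5 elements -/
lemma class_le_five (esymm : ∀ x y, e x y = e y x) (hnrb : NRB e) (hnt : NT e)
    (x : Fin 11) (c : ℕ) (s : Finset (Fin 11)) (hx : x ∉ s)
    (hcol : ∀ y ∈ s, e x y = c) : s.card ≤ 5 := by
  by_contra hbig
  push_neg at hbig
  obtain ⟨y1, hy1⟩ : s.Nonempty := card_pos.mp (by omega)
  set O := s.erase y1 with hO
  have hOcard : 5 ≤ O.card := by rw [hO, card_erase_of_mem hy1]; omega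
  have hxneq : ∀ y ∈ s, x ≠ y := fun y hy h => hx (h ▸ hy)
  by_cases him : 3 ≤ (O.image (fun z => e y1 z)).card
  · obtain ⟨c1, c2, c3, hc1, hc2, hc3, h12, h13, h23⟩ := three_of_card him
    obtain ⟨r1, hr1O, hr1⟩ := mem_image.mp hc1
    obtain ⟨r2, hr2O, hr2⟩ := mem_image.mp hc2
    obtain ⟨r3, hr3O, hr3⟩ := mem_image.mp hc3
    have hr1s := (mem_erase.mp hr1O)
    have hr2s := (mem_erase.mp hr2O)
    have hr3s := (mem_erase.mp hr3O)
    have hr12 : r1 ≠ r2 := fun h => h12 (by rw [← hr1, ← hr2, h])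
    have hr13 : r1 ≠ r3 := fun h => h13 (by rw [← hr1, ← hr3, h])
    have hr23 : r2 ≠ r3 := fun h => h23 (by rw [← hr2, ← hr3, h])
    -- membership facts: e ri rj ∈ {ci, cj}
    have m12 : e r1 r2 = c1 ∨ e r1 r2 = c2 := by
      rcases hnrb y1 r1 r2 (fun h => hr1s.1 h.symm) (fun h => hr2s.1 h.symm) hr12 with h | h | h
      · exact absurd (by rw [← hr1, ← hr2, h]) h12
      · exact Or.inl (by rw [← h, esymm r1 y1, hr1])
      · exact Or.inr (by rw [esymm r1 r2, ← h, esymm r2 y1, hr2])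
    have m13 : e r1 r3 = c1 ∨ e r1 r3 = c3 := by
      rcases hnrb y1 r1 r3 (fun h => hr1s.1 h.symm) (fun h => hr3s.1 h.symm) hr13 with h | h | h
      · exact absurd (by rw [← hr1, ← hr3, h]) h13
      · exact Or.inl (by rw [← h, esymm r1 y1, hr1])
      · exact Or.inr (by rw [esymm r1 r3, ← h, esymm r3 y1, hr3])
    have m23 : e r2 r3 = c2 ∨ e r2 r3 = c3 := by
      rcases hnrb y1 r2 r3 (fun h => hr2s.1 h.symm) (fun h => hr3s.1 h.symm) hr23 with h | h | h
      · exact absurd (by rw [← hr2, ← hr3, h]) h23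
      · exact Or.inl (by rw [← h, esymm r2 y1, hr2])
      · exact Or.inr (by rw [esymm r2 r3, ← h, esymm r3 y1, hr3])
    -- apex of triangle r1 r2 r3
    have hy1r1 : e r1 y1 = c1 := by rw [esymm r1 y1, hr1]
    have hy1r2 : e r2 y1 = c2 := by rw [esymm r2 y1, hr2]
    have hy1r3 : e r3 y1 = c3 := by rw [esymm r3 y1, hr3]
    rcases hnrb r1 r2 r3 hr12 hr13 hr23 with h | h | h
    · -- e r1 r2 = e r1 r3, so both = c1
      have hcc : e r1 r2 = c1 := by
        rcases m12 with h' | h' <;> rcases m13 with h'' | h'' <;> omega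
      exact hnt x r1 y1 r2 r3 (hxneq r1 hr1s.2) (hxneq y1 hy1) (hxneq r2 hr2s.2)
        (hxneq r3 hr3s.2) hr1s.1 hr12 hr13 (fun hh => hr2s.1 hh.symm) (fun hh => hr3s.1 hh.symm)
        hr23 (by rw [hcol r1 hr1s.2, hcol y1 hy1]) (by rw [hcol r1 hr1s.2, hcol r2 hr2s.2])
        (by rw [hcol r1 hr1s.2, hcol r3 hr3s.2])
        (by rw [hy1r1, hcc]) (by rw [hy1r1, ← h, hcc])
    · have h' : e r1 r2 = e r2 r3 := by rw [esymm r1 r2]; exact h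
      have hcc3 : e r2 r3 = c2 := by
        rcases m12 with h1' | h1' <;> rcases m23 with h2' | h2' <;> omega
      have hcc : e r2 r1 = c2 := by rw [esymm r2 r1]; omega
      exact hnt x r2 y1 r1 r3 (hxneq r2 hr2s.2) (hxneq y1 hy1) (hxneq r1 hr1s.2)
        (hxneq r3 hr3s.2) hr2s.1 (fun hh => hr12 hh.symm) hr23
        (fun hh => hr1s.1 hh.symm) (fun hh => hr3s.1 hh.symm) hr13
        (by rw [hcol r2 hr2s.2, hcol y1 hy1]) (by rw [hcol r2 hr2s.2, hcol r1 hr1s.2])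
        (by rw [hcol r2 hr2s.2, hcol r3 hr3s.2])
        (by rw [hy1r2, hcc]) (by rw [hy1r2, hcc3])
    · have h' : e r1 r3 = e r2 r3 := by rw [esymm r1 r3, esymm r2 r3]; exact h
      have hcc0 : e r1 r3 = c3 := by
        rcases m13 with h1' | h1' <;> rcases m23 with h2' | h2' <;> omega
      have hcc1 : e r3 r1 = c3 := by rw [esymm r3 r1]; omega
      have hcc2 : e r3 r2 = c3 := by rw [esymm r3 r2]; omega
      exact hnt x r3 y1 r1 r2 (hxneq r3 hr3s.2) (hxneq y1 hy1) (hxneq r1 hr1s.2)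
        (hxneq r2 hr2s.2) hr3s.1 (fun hh => hr13 hh.symm) (fun hh => hr23 hh.symm)
        (fun hh => hr1s.1 hh.symm) (fun hh => hr2s.1 hh.symm) hr12
        (by rw [hcol r3 hr3s.2, hcol y1 hy1]) (by rw [hcol r3 hr3s.2, hcol r1 hr1s.2])
        (by rw [hcol r3 hr3s.2, hcol r2 hr2s.2])
        (by rw [hy1r3, hcc1]) (by rw [hy1r3, hcc2])
  · push_neg at him
    have hmaps : ∀ z ∈ O, e y1 z ∈ O.image (fun z => e y1 z) := fun z hz => mem_image_of_mem _ hz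
    have hlt : (O.image (fun z => e y1 z)).card * 2 < O.card := by omega
    obtain ⟨d, _, hd⟩ := exists_lt_card_fiber_of_mul_lt_card_of_maps_to hmaps hlt
    obtain ⟨t1, t2, t3, ht1, ht2, ht3, g12, g13, g23⟩ := three_of_card (by omega : 3 ≤ (O.filter fun z => e y1 z = d).card)
    have ht1' := mem_filter.mp ht1
    have ht2' := mem_filter.mp ht2
    have ht3' := mem_filter.mp ht3
    have ht1O := mem_erase.mp ht1'.1
    have ht2O := mem_erase.mp ht2'.1
    have ht3O := mem_erase.mp ht3'.1
    exact hnt x y1 t1 t2 t3 (hxneq y1 hy1) (hxneq t1 ht1O.2) (hxneq t2 ht2O.2)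
      (hxneq t3 ht3O.2) (fun h => ht1O.1 h.symm) (fun h => ht2O.1 h.symm)
      (fun h => ht3O.1 h.symm) g12 g13 g23
      (by rw [hcol y1 hy1, hcol t1 ht1O.2]) (by rw [hcol y1 hy1, hcol t2 ht2O.2])
      (by rw [hcol y1 hy1, hcol t3 ht3O.2])
      (by rw [ht1'.2, ht2'.2]) (by rw [ht1'.2, ht3'.2])

end Upper

lemma no_five_four (esymm : ∀ x y, e x y = e y x) (hnrb : NRB e) (hnt : NT e)
    (x : Fin 11) (c d : ℕ) (hcd : c ≠ d) (A B : Finset (Fin 11))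
    (hxA : x ∉ A) (hxB : x ∉ B)
    (hA : ∀ y ∈ A, e x y = c) (hB : ∀ w ∈ B, e x w = d)
    (hAc : A.card = 5) (hBc : B.card = 4) : False := by
  have hAB : ∀ u ∈ A, ∀ w ∈ B, u ≠ w := fun u hu w hw h => hcd (by rw [← hA u hu, h, hB w hw])
  have hxA' : ∀ u ∈ A, x ≠ u := fun u hu h => hxA (h ▸ hu)
  have hxB' : ∀ w ∈ B, x ≠ w := fun w hw h => hxB (h ▸ hw)
  -- row bound
  have hrow : ∀ u ∈ A, (B.filter fun w => ¬ e u w = c).card ≥ 2 := by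
    intro u hu
    have hle : (B.filter fun w => e u w = c).card ≤ 2 := by
      by_contra hgt
      push_neg at hgt
      obtain ⟨w1, w2, w3, hw1, hw2, hw3, g12, g13, g23⟩ :=
        three_of_card (s := B.filter fun w => e u w = c) (by omega)
      have hw1' := mem_filter.mp hw1
      have hw2' := mem_filter.mp hw2
      have hw3' := mem_filter.mp hw3
      exact hnt u x w1 w2 w3 (fun h => hxA' u hu h.symm) (hAB u hu w1 hw1'.1)
        (hAB u hu w2 hw2'.1) (hAB u hu w3 hw3'.1)
        (hxB' w1 hw1'.1) (hxB' w2 hw2'.1) (hxB' w3 hw3'.1) g12 g13 g23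
        (by rw [esymm u x, hA u hu, hw1'.2]) (by rw [esymm u x, hA u hu, hw2'.2])
        (by rw [esymm u x, hA u hu, hw3'.2])
        (by rw [hB w1 hw1'.1, hB w2 hw2'.1]) (by rw [hB w1 hw1'.1, hB w3 hw3'.1])
    have := card_filter_add_card_filter_not (s := B) (p := fun w => e u w = c)
    omega
  -- column bound
  have hcolb : ∀ w ∈ B, (A.filter fun u => ¬ e u w = c).card ≤ 2 := by
    intro w hw
    by_contra hgt
    rw [not_le] at hgt
    obtain ⟨u1, u2, u3, hu1, hu2, hu3, g12, g13, g23⟩ :=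
      three_of_card (s := A.filter fun u => ¬ e u w = c) (by omega)
    have hu1' := mem_filter.mp hu1
    have hu2' := mem_filter.mp hu2
    have hu3' := mem_filter.mp hu3
    have hwd : ∀ u', u' ∈ A → ¬ e u' w = c → e w u' = d := by
      intro u' hu' hne
      rcases hnrb x u' w (hxA' u' hu') (hxB' w hw) (hAB u' hu' w hw) with h | h | h
      · exact absurd (by rw [← hA u' hu', h, hB w hw]) hcd
      · exact absurd (by rw [← h, esymm u' x, hA u' hu']) hne
      · rw [← h, esymm w x, hB w hw]
    exact hnt w x u1 u2 u3 (hxB' w hw).symm ((hAB u1 hu1'.1 w hw).symm)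
      ((hAB u2 hu2'.1 w hw).symm) ((hAB u3 hu3'.1 w hw).symm)
      (hxA' u1 hu1'.1) (hxA' u2 hu2'.1) (hxA' u3 hu3'.1) g12 g13 g23
      (by rw [esymm w x, hB w hw, hwd u1 hu1'.1 hu1'.2])
      (by rw [esymm w x, hB w hw, hwd u2 hu2'.1 hu2'.2])
      (by rw [esymm w x, hB w hw, hwd u3 hu3'.1 hu3'.2])
      (by rw [hA u1 hu1'.1, hA u2 hu2'.1]) (by rw [hA u1 hu1'.1, hA u3 hu3'.1])
  have h1 : ((A ×ˢ B).filter fun p => ¬ e p.1 p.2 = c).card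
      = ∑ u ∈ A, (B.filter fun w => ¬ e u w = c).card := row_count A B (fun u w => ¬ e u w = c)
  have h2 : ((A ×ˢ B).filter fun p => ¬ e p.1 p.2 = c).card
      = ∑ w ∈ B, (A.filter fun u => ¬ e u w = c).card := col_count A B (fun u w => ¬ e u w = c)
  have hlow : A.card • 2 ≤ ∑ u ∈ A, (B.filter fun w => ¬ e u w = c).card :=
    Finset.card_nsmul_le_sum A _ 2 hrow
  have hhigh : ∑ w ∈ B, (A.filter fun u => ¬ e u w = c).card ≤ B.card • 2 :=
    Finset.sum_le_card_nsmul B _ 2 hcolb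
  simp only [smul_eq_mul, hAc, hBc] at hlow hhigh
  omega


lemma profile_bound (I : Finset ℕ) (m : ℕ → ℕ)
    (h1 : ∀ c ∈ I, 1 ≤ m c) (h5 : ∀ c ∈ I, m c ≤ 5)
    (hsum : ∑ c ∈ I, m c = 10)
    (h54 : ∀ c ∈ I, ∀ d ∈ I, c ≠ d → m c = 5 → m d ≤ 3) :
    ∑ c ∈ I, (m c * m c - m c) ≤ 29 := by
  have key : ∀ mm : ℕ, mm ≤ 3 → mm * mm - mm ≤ 3 * mm - 3 ∨ mm = 0 := by decide
  by_cases hex : ∃ c ∈ I, m c = 5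
  · obtain ⟨c5, hc5I, hc5⟩ := hex
    have hJs := Finset.sum_erase_add I m hc5I
    have hJsq : ∑ c ∈ I.erase c5, (m c * m c - m c) + (m c5 * m c5 - m c5)
        = ∑ c ∈ I, (m c * m c - m c) := Finset.sum_erase_add I _ hc5I
    set J := I.erase c5 with hJ
    have hJsum : ∑ c ∈ J, m c = 5 := by omega
    have hJ3 : ∀ c ∈ J, m c ≤ 3 := by
      intro c hc
      have hcm := mem_erase.mp hc
      exact h54 c5 hc5I c hcm.2 (fun h => hcm.1 h.symm) hc5
    have hJ2 : 2 ≤ J.card := by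
      by_contra hlt
      have : ∑ c ∈ J, m c ≤ J.card • 3 := Finset.sum_le_card_nsmul J m 3 hJ3
      simp only [smul_eq_mul] at this
      omega
    -- ∑_J (m-1) = 5 - J.card
    have hsub : ∑ c ∈ J, (m c - 1) + J.card = 5 := by
      have : ∑ c ∈ J, ((m c - 1) + 1) = ∑ c ∈ J, m c :=
        Finset.sum_congr rfl fun c hc => by
          have := h1 c (mem_of_mem_erase hc); omega
      rw [Finset.sum_add_distrib, Finset.sum_const, smul_eq_mul, mul_one] at this
      omega
    have hterm : ∀ c ∈ J, m c * m c - m c ≤ 3 * (m c - 1) := by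
      intro c hc
      have := h1 c (mem_of_mem_erase hc)
      have := hJ3 c hc
      interval_cases h : m c <;> omega
    have hJbound : ∑ c ∈ J, (m c * m c - m c) ≤ ∑ c ∈ J, 3 * (m c - 1) :=
      Finset.sum_le_sum hterm
    rw [← Finset.mul_sum] at hJbound
    have : m c5 * m c5 - m c5 = 20 := by rw [hc5]
    omega
  · push_neg at hex
    have h4 : ∀ c ∈ I, m c ≤ 4 := fun c hc => by
      have := h5 c hc; have := hex c hc; omega
    have hne : ∃ c0 ∈ I, m c0 ≤ 3 := by
      by_contra hno
      push_neg at hno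
      have hall : ∀ c ∈ I, m c = 4 := fun c hc => by
        have := hno c hc; have := h4 c hc; omega
      have : ∑ c ∈ I, m c = ∑ c ∈ I, 4 := Finset.sum_congr rfl hall
      rw [Finset.sum_const, smul_eq_mul] at this
      omega
    obtain ⟨c0, hc0I, hc0⟩ := hne
    have hJs := Finset.sum_erase_add I m hc0I
    have hJsq : ∑ c ∈ I.erase c0, (m c * m c - m c) + (m c0 * m c0 - m c0)
        = ∑ c ∈ I, (m c * m c - m c) := Finset.sum_erase_add I _ hc0I
    set J := I.erase c0 with hJ
    have hterm : ∀ c ∈ J, m c * m c - m c ≤ 3 * m c := by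
      intro c hc
      have := h4 c (mem_of_mem_erase hc)
      interval_cases h : m c <;> omega
    have hJbound : ∑ c ∈ J, (m c * m c - m c) ≤ ∑ c ∈ J, 3 * m c :=
      Finset.sum_le_sum hterm
    rw [← Finset.mul_sum] at hJbound
    have hc01 := h1 c0 hc0I
    have hc0q : m c0 * m c0 - m c0 ≤ 3 * m c0 - 3 := by
      interval_cases h : m c0 <;> omega
    omega

set_option maxRecDepth 10000 in
lemma upper_main {e : Fin 11 → Fin 11 → ℕ} (esymm : ∀ x y, e x y = e y x)
    (hnrb : NRB e) (hnt : NT e) : False := by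
  classical
  set R : Finset (Fin 11 × Fin 11 × Fin 11) :=
    Finset.univ.filter (fun t => t.1 ≠ t.2.1 ∧ t.1 ≠ t.2.2 ∧ t.2.1 ≠ t.2.2) with hRdef
  set S : Finset (Fin 11 × Fin 11 × Fin 11) :=
    Finset.univ.filter (fun t => t.1 ≠ t.2.1 ∧ t.1 ≠ t.2.2 ∧ t.2.1 ≠ t.2.2 ∧
      e t.1 t.2.1 = e t.1 t.2.2) with hSdef
  have hR : R.card = 990 := by rw [hRdef]; decide
  set θ : Fin 11 × Fin 11 × Fin 11 → Fin 11 × Fin 11 × Fin 11 := fun t =>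
    if e t.1 t.2.1 = e t.1 t.2.2 then t
    else if e t.2.1 t.1 = e t.2.1 t.2.2 then (t.2.1, t.1, t.2.2)
    else (t.2.2, t.1, t.2.1) with hθdef
  have hθS : ∀ t ∈ R, θ t ∈ S := by
    rintro ⟨x, y, z⟩ ht
    simp only [hRdef, mem_filter, mem_univ, true_and] at ht
    obtain ⟨d1, d2, d3⟩ := ht
    simp only [hθdef, hSdef]
    split_ifs with h1 h2
    · simp only [mem_filter, mem_univ, true_and]
      exact ⟨d1, d2, d3, h1⟩
    · simp only [mem_filter, mem_univ, true_and]
      exact ⟨fun h => d1 h.symm, d3, d2, h2⟩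
    · simp only [mem_filter, mem_univ, true_and]
      rcases hnrb x y z d1 d2 d3 with h | h | h
      · exact absurd h h1
      · exact absurd h h2
      · exact ⟨fun h' => d2 h'.symm, fun h' => d3 h'.symm, d1, h⟩
  have hfib : ∀ w ∈ R.image θ, (R.filter fun t => θ t = w).card ≤ 3 := by
    rintro ⟨p, q, r⟩ _
    have hsub : (R.filter fun t => θ t = (p, q, r)) ⊆ {(p, q, r), (q, p, r), (q, r, p)} := by
      rintro ⟨a, b, c⟩ ht
      have hθ := (mem_filter.mp ht).2
      simp only [hθdef] at hθ
      split_ifs at hθ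
      · simp only [mem_insert, mem_singleton]
        exact Or.inl hθ
      · have h1 : b = p := congrArg Prod.fst hθ
        have h2 : a = q := congrArg (fun t => t.2.1) hθ
        have h3 : c = r := congrArg (fun t => t.2.2) hθ
        subst h1; subst h2; subst h3
        simp
      · have h1 : c = p := congrArg Prod.fst hθ
        have h2 : a = q := congrArg (fun t => t.2.1) hθ
        have h3 : b = r := congrArg (fun t => t.2.2) hθ
        subst h1; subst h2; subst h3
        simp
    have h3 : ({(p, q, r), (q, p, r), (q, r, p)} : Finset (Fin 11 × Fin 11 × Fin 11)).card ≤ 3 := by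
      have c1 := card_insert_le (p, q, r) ({(q, p, r), (q, r, p)} : Finset (Fin 11 × Fin 11 × Fin 11))
      have c2 := card_insert_le (q, p, r) ({(q, r, p)} : Finset (Fin 11 × Fin 11 × Fin 11))
      have c3 : ({(q, r, p)} : Finset (Fin 11 × Fin 11 × Fin 11)).card = 1 := card_singleton _
      omega
    exact (card_le_card hsub).trans h3
  have hcard3 : R.card ≤ 3 * (R.image θ).card := card_le_mul_card_image R 3 hfib
  have himg : R.image θ ⊆ S := by
    rw [image_subset_iff]
    exact hθS
  have hS330 : 330 ≤ S.card := by
    have := card_le_card himg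
    omega
  have hmapsfst : ∀ t ∈ S, t.1 ∈ (Finset.univ : Finset (Fin 11)) := fun t _ => mem_univ _
  have hu11 : (Finset.univ : Finset (Fin 11)).card = 11 := by simp
  obtain ⟨x, _, hx⟩ := exists_lt_card_fiber_of_mul_lt_card_of_maps_to hmapsfst
    (by rw [hu11]; omega : (Finset.univ : Finset (Fin 11)).card * 29 < S.card)
  set N : Finset (Fin 11) := Finset.univ.erase x with hNdef
  have hN : N.card = 10 := by rw [hNdef, card_erase_of_mem (mem_univ x)]; simp
  set PP : Finset (Fin 11 × Fin 11) :=
    (N ×ˢ N).filter (fun p => p.1 ≠ p.2 ∧ e x p.1 = e x p.2) with hPPdef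
  have hbij : (S.filter fun t => t.1 = x).card = PP.card := by
    refine card_bij (fun t _ => (t.2.1, t.2.2)) ?_ ?_ ?_
    · rintro ⟨a, b, c⟩ ht
      simp only [hSdef, mem_filter, mem_univ, true_and] at ht
      obtain ⟨⟨d1, d2, d3, hee⟩, hax⟩ := ht
      subst hax
      simp only [hPPdef, mem_filter, mem_product, hNdef, mem_erase]
      exact ⟨⟨⟨fun h => d1 h.symm, mem_univ _⟩, ⟨fun h => d2 h.symm, mem_univ _⟩⟩, d3, hee⟩
    · rintro ⟨a1, b1, c1⟩ h1 ⟨a2, b2, c2⟩ h2 hh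
      simp only [hSdef, mem_filter] at h1 h2
      have e1 : a1 = x := h1.2
      have e2 : a2 = x := h2.2
      have e3 : b1 = b2 := congrArg Prod.fst hh
      have e4 : c1 = c2 := congrArg Prod.snd hh
      subst e1; subst e2; subst e3; subst e4; rfl
    · rintro ⟨a, b⟩ hab
      simp only [hPPdef, mem_filter, mem_product, hNdef, mem_erase] at hab
      obtain ⟨⟨⟨hax, _⟩, hbx, _⟩, hne, hee⟩ := hab
      refine ⟨(x, a, b), ?_, rfl⟩
      refine mem_filter.mpr ⟨mem_filter.mpr ⟨mem_univ _, ?_⟩, rfl⟩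
      exact ⟨fun h => hax h.symm, fun h => hbx h.symm, hne, hee⟩
  set I : Finset ℕ := N.image (fun y => e x y) with hIdef
  set F : ℕ → Finset (Fin 11) := fun c => N.filter (fun y => e x y = c) with hFdef
  have hmapsI : ∀ p ∈ PP, e x p.1 ∈ I := by
    rintro ⟨a, b⟩ hab
    simp only [hPPdef, mem_filter, mem_product] at hab
    exact mem_image_of_mem _ hab.1.1
  have hPPsum : PP.card = ∑ c ∈ I, ((F c).offDiag).card := by
    rw [card_eq_sum_card_fiberwise hmapsI]
    refine sum_congr rfl fun c hc => ?_
    congr 1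
    ext ⟨a, b⟩
    simp only [hPPdef, mem_filter, mem_product, mem_offDiag, hFdef]
    constructor
    · rintro ⟨⟨⟨ha, hb⟩, hne, hee⟩, hca⟩
      exact ⟨⟨ha, hca⟩, ⟨hb, by rw [← hee]; exact hca⟩, hne⟩
    · rintro ⟨⟨ha, hca⟩, ⟨hb, hcb⟩, hne⟩
      exact ⟨⟨⟨ha, hb⟩, hne, by rw [hca, hcb]⟩, hca⟩
  have hsum10 : ∑ c ∈ I, (F c).card = 10 := by
    rw [← hN]
    exact (card_eq_sum_card_fiberwise (fun y hy => mem_image_of_mem _ hy)).symm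
  have hxN : x ∉ N := by simp [hNdef]
  have h1le : ∀ c ∈ I, 1 ≤ (F c).card := by
    intro c hc
    obtain ⟨y, hy, hey⟩ := mem_image.mp hc
    have : y ∈ F c := mem_filter.mpr ⟨hy, hey⟩
    exact card_pos.mpr ⟨y, this⟩
  have h5le : ∀ c ∈ I, (F c).card ≤ 5 := by
    intro c hc
    refine class_le_five esymm hnrb hnt x c (F c) (fun h => hxN (mem_filter.mp h).1) ?_
    exact fun y hy => (mem_filter.mp hy).2
  have h54 : ∀ c ∈ I, ∀ d ∈ I, c ≠ d → (F c).card = 5 → (F d).card ≤ 3 := by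
    intro c hc d hd hcd hc5
    by_contra hgt
    push_neg at hgt
    obtain ⟨B, hBsub, hBcard⟩ := exists_subset_card_eq (by omega : 4 ≤ (F d).card)
    refine no_five_four esymm hnrb hnt x c d hcd (F c) B
      (fun h => hxN (mem_filter.mp h).1) (fun h => hxN (mem_filter.mp (hBsub h)).1)
      (fun y hy => (mem_filter.mp hy).2) (fun w hw => (mem_filter.mp (hBsub hw)).2)
      hc5 hBcard
  have hbound : ∑ c ∈ I, ((F c).card * (F c).card - (F c).card) ≤ 29 :=
    profile_bound I (fun c => (F c).card) h1le h5le hsum10 h54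
  have hoffd : ∀ c ∈ I, ((F c).offDiag).card = (F c).card * (F c).card - (F c).card :=
    fun c _ => offDiag_card _
  have hsumeq : ∑ c ∈ I, ((F c).offDiag).card = ∑ c ∈ I, ((F c).card * (F c).card - (F c).card) :=
    sum_congr rfl hoffd
  omega

lemma upper_false (χ : Sym2 (Fin 11) → ℕ)
    (ho : ¬ HasOrderableClique 5 11 χ) (hr : ¬ HasRainbowClique 3 11 χ) : False := by
  have esymm : ∀ x y : Fin 11, χ s(x, y) = χ s(y, x) := fun x y => congrArg χ (Sym2.eq_swap)
  have hnrb : NRB (fun x y => χ s(x, y)) := by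
    intro x y z hxy hxz hyz
    by_contra hc
    push_neg at hc
    refine hr (rainbow_of_three χ x y z hxy hxz hyz hc.1 ?_ ?_)
    · exact fun hq => hc.2.1 ((esymm x y).symm.trans hq)
    · exact fun hq => hc.2.2 ((esymm z x).trans (hq.trans (esymm y z)))
  have hnt : NT (fun x y => χ s(x, y)) := by
    intro v u t1 t2 t3 d1 d2 d3 d4 d5 d6 d7 d8 d9 d10 q1 q2 q3 q4 q5
    rcases hnrb t1 t2 t3 d8 d9 d10 with h | h | h
    · exact ho (orderable_of_five χ v u t1 t2 t3 d1 d2 d3 d4 d5 d6 d7 d8 d9 d10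
        q1 q2 q3 q4 q5 h)
    · exact ho (orderable_of_five χ v u t2 t1 t3 d1 d3 d2 d4 d6 d5 d7 (Ne.symm d8) d10 d9
        q2 q1 q3 q4.symm (q4.symm.trans q5) h)
    · exact ho (orderable_of_five χ v u t3 t1 t2 d1 d4 d2 d3 d7 d5 d6 (Ne.symm d9) (Ne.symm d10) d8
        q3 q1 q2 q5.symm (q5.symm.trans q4) h)
  exact upper_main esymm hnrb hnt

end CR53

/-- CR(5,3) = 11. -/
theorem CR_5_3 :
    (∀ χ : Sym2 (Fin 11) → ℕ, HasOrderableClique 5 11 χ ∨ HasRainbowClique 3 11 χ) ∧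
    (∃ χ : Sym2 (Fin 10) → ℕ,
      ¬ HasOrderableClique 5 10 χ ∧ ¬ HasRainbowClique 3 10 χ) := by
  constructor
  · intro χ
    by_contra hc
    push_neg at hc
    exact CR53.upper_false χ hc.1 hc.2
  · exact ⟨CR53.χ₀, CR53.no_orderable₀, CR53.no_rainbow₀⟩
end

section
/- CR(C_4, C_4) = 5. That is: every edge-coloring of the complete graph K_5 (with arbitrarily many colors) contains an orderable copy of the 4-cycle C_4 or a rainbow copy of C_4, and there exists an edge-coloring of K_4 containing neither an orderable C_4 nor a rainbow C_4. -/
/-- The adjacency relation of the 4-cycle `C₄` on `Fin 4`, with edges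
`{0,1}, {1,2}, {2,3}, {3,0}`. -/
def C4Adj : Fin 4 → Fin 4 → Prop := fun i j => j = i + 1 ∨ i = j + 1

/-- The edge-coloring `χ` of the complete graph on `Fin n` contains an orderable copy
of the 4-cycle `C₄`. -/
def HasOrderableC4 (n : ℕ) (χ : Sym2 (Fin n) → ℕ) : Prop :=
  ∃ f : Fin 4 → Fin n, Function.Injective f ∧
    OrderableColoring C4Adj (fun i j => χ s(f i, f j))

/-- The edge-coloring `χ` of the complete graph on `Fin n` contains a rainbow copy
of the 4-cycle `C₄`: its four edges get pairwise distinct colors. -/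
def HasRainbowC4 (n : ℕ) (χ : Sym2 (Fin n) → ℕ) : Prop :=
  ∃ f : Fin 4 → Fin n, Function.Injective f ∧
    ([χ s(f 0, f 1), χ s(f 1, f 2), χ s(f 2, f 3), χ s(f 3, f 0)]).Pairwise (· ≠ ·)

instance : ∀ i j : Fin 4, Decidable (C4Adj i j) :=
  fun _ _ => inferInstanceAs (Decidable (_ ∨ _))

lemma exists5 (x y z : Fin 5) : ∃ w : Fin 5, w ≠ x ∧ w ≠ y ∧ w ≠ z := by
  revert x y z; decide

lemma orderable_of (χ : Sym2 (Fin 5) → ℕ) (x y z w : Fin 5)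
    (hxy : x ≠ y) (hxz : x ≠ z) (hyz : y ≠ z)
    (hwx : w ≠ x) (hwy : w ≠ y) (hwz : w ≠ z)
    (h : χ s(x,y) = χ s(y,z)) : HasOrderableC4 5 χ := by
  refine ⟨![x,y,z,w], ?_, Equiv.swap 0 1 * Equiv.swap 2 3, ?_⟩
  · intro a b hab
    fin_cases a <;> fin_cases b <;> simp_all <;> simp_all [eq_comm]
  · intro i j k h1 h2 h3 h4
    fin_cases i <;> fin_cases j <;> fin_cases k <;>
      first
      | (exfalso; revert h1 h2 h3 h4; decide)
      | rfl
      | simp [Sym2.eq_swap, h]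

lemma proper (χ : Sym2 (Fin 5) → ℕ) (hord : ¬ HasOrderableC4 5 χ)
    (x y z : Fin 5) (hxy : x ≠ y) (hxz : x ≠ z) (hyz : y ≠ z) :
    χ s(x,y) ≠ χ s(y,z) := by
  intro h
  obtain ⟨w, hwx, hwy, hwz⟩ := exists5 x y z
  exact hord (orderable_of χ x y z w hxy hxz hyz hwx hwy hwz h)

lemma pairOr (χ : Sym2 (Fin 5) → ℕ) (hord : ¬ HasOrderableC4 5 χ)
    (hrain : ¬ HasRainbowC4 5 χ)
    (p q r s : Fin 5) (hpq : p ≠ q) (hpr : p ≠ r) (hps : p ≠ s)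
    (hqr : q ≠ r) (hqs : q ≠ s) (hrs : r ≠ s) :
    χ s(p,q) = χ s(r,s) ∨ χ s(q,r) = χ s(s,p) := by
  by_contra hc
  push_neg at hc
  apply hrain
  refine ⟨![p,q,r,s], ?_, ?_⟩
  · intro a b hab
    fin_cases a <;> fin_cases b <;> simp_all <;> simp_all [eq_comm]
  · show List.Pairwise _ [χ s(p,q), χ s(q,r), χ s(r,s), χ s(s,p)]
    have h1 : χ s(p,q) ≠ χ s(q,r) := proper χ hord p q r hpq hpr hqr
    have h2 : χ s(p,q) ≠ χ s(s,p) := by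
      simpa [Sym2.eq_swap] using proper χ hord q p s (Ne.symm hpq) hqs hps
    have h3 : χ s(q,r) ≠ χ s(r,s) := proper χ hord q r s hqr hqs hrs
    have h4 : χ s(r,s) ≠ χ s(s,p) := proper χ hord r s p hrs (Ne.symm hpr) (Ne.symm hps)
    simp [List.pairwise_cons, h1, h2, h3, h4, hc.1, hc.2]

lemma chi_swap (χ : Sym2 (Fin 5) → ℕ) (a b : Fin 5) : χ s(a,b) = χ s(b,a) := by
  rw [Sym2.eq_swap]

lemma twoMatch (χ : Sym2 (Fin 5) → ℕ) (hord : ¬ HasOrderableC4 5 χ)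
    (hrain : ¬ HasRainbowC4 5 χ)
    (p q r s t : Fin 5) (hpq : p ≠ q) (hpr : p ≠ r) (hps : p ≠ s) (hpt : p ≠ t)
    (hqr : q ≠ r) (hqs : q ≠ s) (hqt : q ≠ t) (hrs : r ≠ s) (hrt : r ≠ t) (hst : s ≠ t)
    (h1 : χ s(p,q) = χ s(r,s)) (h2 : χ s(p,r) = χ s(q,s)) : False := by
  rcases pairOr χ hord hrain q t r s hqt hqr hqs (Ne.symm hrt) (Ne.symm hst) hrs with hc | hc
  · exact proper χ hord p q t hpq hpt hqt (h1.trans hc.symm)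
  · have : χ s(p,r) = χ s(r,t) := by
      rw [show s(r,t) = s(t,r) from Sym2.eq_swap, hc,
        show s(s,q) = s(q,s) from Sym2.eq_swap]; exact h2
    exact proper χ hord p r t hpr hpt hrt this

lemma part1 (χ : Sym2 (Fin 5) → ℕ) : HasOrderableC4 5 χ ∨ HasRainbowC4 5 χ := by
  by_cases hord : HasOrderableC4 5 χ
  · exact Or.inl hord
  by_cases hrain : HasRainbowC4 5 χ
  · exact Or.inr hrain
  exfalso
  have P := pairOr χ hord hrain
  have L := twoMatch χ hord hrain
  rcases P 1 2 3 4 (by decide) (by decide) (by decide) (by decide) (by decide) (by decide)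
    with hA | hB
  · rcases P 1 3 2 4 (by decide) (by decide) (by decide) (by decide) (by decide) (by decide)
      with hA1 | hA2
    · exact L 1 2 3 4 0 (by decide) (by decide) (by decide) (by decide) (by decide)
        (by decide) (by decide) (by decide) (by decide) (by decide) hA hA1
    · refine L 2 1 3 4 0 (by decide) (by decide) (by decide) (by decide) (by decide)
        (by decide) (by decide) (by decide) (by decide) (by decide) ?_ ?_
      · rw [chi_swap χ]; exact hA
      · rw [chi_swap χ 2 3, chi_swap χ 1 4]; exact hA2
  · rcases P 2 4 3 1 (by decide) (by decide) (by decide) (by decide) (by decide) (by decide)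
      with hB1 | hB2
    · exact L 2 3 4 1 0 (by decide) (by decide) (by decide) (by decide) (by decide)
        (by decide) (by decide) (by decide) (by decide) (by decide) hB hB1
    · refine L 2 1 3 4 0 (by decide) (by decide) (by decide) (by decide) (by decide)
        (by decide) (by decide) (by decide) (by decide) (by decide) ?_ ?_
      · rw [chi_swap χ 2 1, ← hB2, chi_swap χ 4 3]
      · rw [chi_swap χ 1 4]; exact hB

instance {m : ℕ} (Adj : Fin m → Fin m → Prop) [∀ i j, Decidable (Adj i j)]
    (c : Fin m → Fin m → ℕ) : Decidable (OrderableColoring Adj c) :=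
  inferInstanceAs (Decidable (∃ _, _))

def χ4 : Sym2 (Fin 4) → ℕ := Sym2.lift ⟨fun a b => a.val ^^^ b.val, fun _ _ => Nat.xor_comm _ _⟩

instance : Decidable (HasOrderableC4 4 χ4) := inferInstanceAs (Decidable (∃ _, _))
instance : Decidable (HasRainbowC4 4 χ4) := inferInstanceAs (Decidable (∃ _, _))

set_option maxRecDepth 1000000 in
lemma part2 : ¬ HasOrderableC4 4 χ4 ∧ ¬ HasRainbowC4 4 χ4 := by decide

/-- CR(C₄, C₄) = 5. -/
theorem CR_C4_C4 :
    (∀ χ : Sym2 (Fin 5) → ℕ, HasOrderableC4 5 χ ∨ HasRainbowC4 5 χ) ∧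
    (∃ χ : Sym2 (Fin 4) → ℕ, ¬ HasOrderableC4 4 χ ∧ ¬ HasRainbowC4 4 χ) :=
  ⟨part1, χ4, part2⟩
end
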